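/- arXiv:1802.07122 — 9 statements merged into one kernel-verified Lean document; each statement's English description precedes it below -/
import Mathlib

section
/- For all x,y ∈ ℕ^d with |x| = |y| = N and every real ρ, m(x;N,p) m(y;N,p) (1 + Σ_{n=1}^N ρ^n Q_n(x,y;N,p)) = Σ_{z∈ℕ^d: z ≤ x, z ≤ y} ρ^{|z|} (1−ρ)^{N−|z|} (N!/(z_1!⋯z_d!(N−|z|)!)) ∏_{i=1}^d p_i^{z_i} · ((N−|z|)!/∏_{i=1}^d (x_i−z_i)!) ∏_{i=1}^d p_i^{x_i−z_i} · ((N−|z|)!/∏_{i=1}^d (y_i−z_i)!) ∏_{i=1}^d p_i^{y_i−z_i} (the Poisson kernel identity for the reproducing kernel polynomials on the multinomial). -/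
set_option maxHeartbeats 1000000


open Finset

/-- Multinomial probability `m(x;N,p)`. -/
noncomputable def mProb (d N : ℕ) (p : Fin d → ℝ) (x : Fin d → ℕ) : ℝ :=
  ((N.factorial : ℝ) / ∏ i, ((x i).factorial : ℝ)) * ∏ i, (p i) ^ (x i)

/-- Reproducing kernel polynomial `Q_n(x,y;N,p)` on the multinomial distribution. -/
noncomputable def kernelQ (d N : ℕ) (p : Fin d → ℝ) (n : ℕ) (x y : Fin d → ℕ) : ℝ :=
  ∑ z ∈ (Finset.Iic (x ⊓ y)).filter (fun z => ∑ i, z i ≤ n),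
    (N.choose (∑ i, z i) : ℝ) * ((N - ∑ i, z i).choose (n - ∑ i, z i) : ℝ) *
      (-1 : ℝ) ^ (n - ∑ i, z i) *
      (((∑ i, z i).factorial : ℝ) / ∏ i, ((z i).factorial : ℝ)) *
      (∏ i, ((x i).descFactorial (z i) : ℝ) * ((y i).descFactorial (z i) : ℝ) / (p i) ^ (z i)) /
      ((N.descFactorial (∑ i, z i) : ℝ)) ^ 2

set_option linter.unusedVariables false

lemma binom_neg (M : ℕ) (ρ : ℝ) :
    ∑ k ∈ Finset.range (M + 1), ρ ^ k * (M.choose k : ℝ) * (-1 : ℝ) ^ k = (1 - ρ) ^ M := by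
  have h := add_pow (-ρ) 1 M
  simp only [one_pow, mul_one] at h
  rw [show (1 : ℝ) - ρ = -ρ + 1 by ring, h]
  refine Finset.sum_congr rfl fun k _ => ?_
  rw [neg_pow]
  ring

lemma coeff_eq (d N : ℕ) (p : Fin d → ℝ) (hp : ∀ j, 0 < p j)
    (x y z : Fin d → ℕ) (hzx : ∀ i, z i ≤ x i) (hzy : ∀ i, z i ≤ y i)
    (hx : ∑ i, x i = N) (hy : ∑ i, y i = N) :
    mProb d N p x * mProb d N p y *
      ((N.choose (∑ i, z i) : ℝ) *
        (((∑ i, z i).factorial : ℝ) / ∏ i, ((z i).factorial : ℝ)) *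
        (∏ i, ((x i).descFactorial (z i) : ℝ) * ((y i).descFactorial (z i) : ℝ) / (p i) ^ (z i)) /
        ((N.descFactorial (∑ i, z i) : ℝ)) ^ 2)
      = ((N.factorial : ℝ) /
            ((∏ i, ((z i).factorial : ℝ)) * ((N - ∑ i, z i).factorial : ℝ))) *
          (∏ i, (p i) ^ (z i)) *
          (((N - ∑ i, z i).factorial : ℝ) / ∏ i, ((x i - z i).factorial : ℝ)) *
          (∏ i, (p i) ^ (x i - z i)) *
          (((N - ∑ i, z i).factorial : ℝ) / ∏ i, ((y i - z i).factorial : ℝ)) *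
          (∏ i, (p i) ^ (y i - z i)) := by
  set s := ∑ i, z i with hs_def
  have hs : s ≤ N := by
    rw [← hx]; exact Finset.sum_le_sum fun i _ => hzx i
  -- factorial splitting
  have hXfac : (∏ i, ((x i).factorial : ℝ))
      = (∏ i, ((x i).descFactorial (z i) : ℝ)) * ∏ i, ((x i - z i).factorial : ℝ) := by
    rw [← Finset.prod_mul_distrib]
    refine Finset.prod_congr rfl fun i _ => ?_
    rw [← Nat.cast_mul, mul_comm ((x i).descFactorial (z i)) _,
      Nat.factorial_mul_descFactorial (hzx i)]
  have hYfac : (∏ i, ((y i).factorial : ℝ))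
      = (∏ i, ((y i).descFactorial (z i) : ℝ)) * ∏ i, ((y i - z i).factorial : ℝ) := by
    rw [← Finset.prod_mul_distrib]
    refine Finset.prod_congr rfl fun i _ => ?_
    rw [← Nat.cast_mul, mul_comm ((y i).descFactorial (z i)) _,
      Nat.factorial_mul_descFactorial (hzy i)]
  have hPX : (∏ i, (p i) ^ (x i)) = (∏ i, (p i) ^ (z i)) * ∏ i, (p i) ^ (x i - z i) := by
    rw [← Finset.prod_mul_distrib]
    refine Finset.prod_congr rfl fun i _ => ?_
    rw [← pow_add]; congr 1; have := hzx i; omega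
  have hPY : (∏ i, (p i) ^ (y i)) = (∏ i, (p i) ^ (z i)) * ∏ i, (p i) ^ (y i - z i) := by
    rw [← Finset.prod_mul_distrib]
    refine Finset.prod_congr rfl fun i _ => ?_
    rw [← pow_add]; congr 1; have := hzy i; omega
  have hDsplit : (∏ i, ((x i).descFactorial (z i) : ℝ) * ((y i).descFactorial (z i) : ℝ) / (p i) ^ (z i))
      = (∏ i, ((x i).descFactorial (z i) : ℝ)) * (∏ i, ((y i).descFactorial (z i) : ℝ))
        / ∏ i, (p i) ^ (z i) := by
    rw [Finset.prod_div_distrib, Finset.prod_mul_distrib]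
  have hNfac : (N.factorial : ℝ) = ((N - s).factorial : ℝ) * (N.descFactorial s : ℝ) := by
    rw [← Nat.cast_mul, Nat.factorial_mul_descFactorial hs]
  have hChoose : (N.choose s : ℝ) * ((s.factorial : ℝ) * ((N - s).factorial : ℝ)) = (N.factorial : ℝ) := by
    rw [← Nat.cast_mul, ← Nat.cast_mul, ← mul_assoc, Nat.choose_mul_factorial_mul_factorial hs]
  -- nonzero facts
  have hPZ : (∏ i, (p i) ^ (z i)) ≠ 0 :=
    Finset.prod_ne_zero_iff.2 fun i _ => pow_ne_zero _ (hp i).ne'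
  have hZf : (∏ i, ((z i).factorial : ℝ)) ≠ 0 :=
    Finset.prod_ne_zero_iff.2 fun i _ => Nat.cast_ne_zero.2 (Nat.factorial_ne_zero _)
  have hXZf : (∏ i, ((x i - z i).factorial : ℝ)) ≠ 0 :=
    Finset.prod_ne_zero_iff.2 fun i _ => Nat.cast_ne_zero.2 (Nat.factorial_ne_zero _)
  have hYZf : (∏ i, ((y i - z i).factorial : ℝ)) ≠ 0 :=
    Finset.prod_ne_zero_iff.2 fun i _ => Nat.cast_ne_zero.2 (Nat.factorial_ne_zero _)
  have hD : (N.descFactorial s : ℝ) ≠ 0 :=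
    Nat.cast_ne_zero.2 (fun h => absurd (Nat.descFactorial_eq_zero_iff_lt.1 h) (not_lt.2 hs))
  have hsf : ((s.factorial : ℝ)) ≠ 0 := Nat.cast_ne_zero.2 (Nat.factorial_ne_zero _)
  have hNsf : (((N - s).factorial : ℝ)) ≠ 0 := Nat.cast_ne_zero.2 (Nat.factorial_ne_zero _)
  have hC2 : (N.choose s : ℝ) = (N.descFactorial s : ℝ) / (s.factorial : ℝ) := by
    rw [eq_div_iff hsf]
    have h3 : (N.choose s : ℝ) * (s.factorial : ℝ) * ((N - s).factorial : ℝ)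
        = (N.descFactorial s : ℝ) * ((N - s).factorial : ℝ) := by
      rw [mul_assoc, hChoose, hNfac]; ring
    exact mul_right_cancel₀ hNsf h3
  have hDXne : (∏ i, ((x i).descFactorial (z i) : ℝ)) ≠ 0 :=
    Finset.prod_ne_zero_iff.2 fun i _ => Nat.cast_ne_zero.2
      (fun h => absurd (Nat.descFactorial_eq_zero_iff_lt.1 h) (not_lt.2 (hzx i)))
  have hDYne : (∏ i, ((y i).descFactorial (z i) : ℝ)) ≠ 0 :=
    Finset.prod_ne_zero_iff.2 fun i _ => Nat.cast_ne_zero.2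
      (fun h => absurd (Nat.descFactorial_eq_zero_iff_lt.1 h) (not_lt.2 (hzy i)))
  rw [mProb, mProb, hXfac, hYfac, hPX, hPY, hDsplit, hC2, hNfac]
  field_simp



/-- The Poisson kernel identity for the reproducing kernel polynomials on the multinomial. -/
theorem poisson_kernel_multinomial (d : ℕ) (hd : 2 ≤ d) (p : Fin d → ℝ)
    (hp : ∀ j, 0 < p j) (hsum : ∑ j, p j = 1) (N : ℕ) (hN : 0 < N)
    (x y : Fin d → ℕ) (hx : ∑ i, x i = N) (hy : ∑ i, y i = N) (ρ : ℝ) :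
    mProb d N p x * mProb d N p y *
        (1 + ∑ n ∈ Finset.Icc 1 N, ρ ^ n * kernelQ d N p n x y)
      = ∑ z ∈ Finset.Iic (x ⊓ y),
          ρ ^ (∑ i, z i) * (1 - ρ) ^ (N - ∑ i, z i) *
          ((N.factorial : ℝ) /
            ((∏ i, ((z i).factorial : ℝ)) * ((N - ∑ i, z i).factorial : ℝ))) *
          (∏ i, (p i) ^ (z i)) *
          (((N - ∑ i, z i).factorial : ℝ) / ∏ i, ((x i - z i).factorial : ℝ)) *
          (∏ i, (p i) ^ (x i - z i)) *
          (((N - ∑ i, z i).factorial : ℝ) / ∏ i, ((y i - z i).factorial : ℝ)) *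
          (∏ i, (p i) ^ (y i - z i)) := by
  -- Step 0: Q_0 = 1
  have hQ0 : kernelQ d N p 0 x y = 1 := by
    rw [kernelQ]
    have hfil : (Finset.Iic (x ⊓ y)).filter (fun z => ∑ i, z i ≤ 0) = {0} := by
      ext z
      simp only [Finset.mem_filter, Finset.mem_Iic, Finset.mem_singleton, Nat.le_zero,
        Finset.sum_eq_zero_iff]
      constructor
      · rintro ⟨-, h⟩
        funext i; exact h i (Finset.mem_univ i)
      · rintro rfl
        exact ⟨by simp [Pi.le_def], fun i _ => rfl⟩
    rw [hfil]
    simp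
  have hstep : (1 : ℝ) + ∑ n ∈ Finset.Icc 1 N, ρ ^ n * kernelQ d N p n x y
      = ∑ n ∈ Finset.range (N + 1), ρ ^ n * kernelQ d N p n x y := by
    have hr : Finset.range (N + 1) = insert 0 (Finset.Icc 1 N) := by
      ext n; simp only [Finset.mem_range, Finset.mem_insert, Finset.mem_Icc]; omega
    rw [hr, Finset.sum_insert (by simp), pow_zero, one_mul, hQ0]
  rw [hstep, Finset.mul_sum]
  have hswap : ∀ n ∈ Finset.range (N + 1),
      mProb d N p x * mProb d N p y * (ρ ^ n * kernelQ d N p n x y)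
      = ∑ z ∈ Finset.Iic (x ⊓ y), if ∑ i, z i ≤ n then
          mProb d N p x * mProb d N p y * (ρ ^ n *
            ((N.choose (∑ i, z i) : ℝ) * ((N - ∑ i, z i).choose (n - ∑ i, z i) : ℝ) *
              (-1 : ℝ) ^ (n - ∑ i, z i) *
              (((∑ i, z i).factorial : ℝ) / ∏ i, ((z i).factorial : ℝ)) *
              (∏ i, ((x i).descFactorial (z i) : ℝ) * ((y i).descFactorial (z i) : ℝ) / (p i) ^ (z i)) /
              ((N.descFactorial (∑ i, z i) : ℝ)) ^ 2)) else 0 := by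
    intro n _
    rw [kernelQ, Finset.sum_filter, Finset.mul_sum, Finset.mul_sum]
    refine Finset.sum_congr rfl fun z _ => ?_
    split <;> simp
  rw [Finset.sum_congr rfl hswap, Finset.sum_comm]
  refine Finset.sum_congr rfl fun z hz => ?_
  have hzx : ∀ i, z i ≤ x i := fun i => ((Finset.mem_Iic.1 hz).trans inf_le_left) i
  have hzy : ∀ i, z i ≤ y i := fun i => ((Finset.mem_Iic.1 hz).trans inf_le_right) i
  have hs : ∑ i, z i ≤ N := by rw [← hx]; exact Finset.sum_le_sum fun i _ => hzx i
  rw [← Finset.sum_filter]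
  have hIcc : (Finset.range (N + 1)).filter (fun n => ∑ i, z i ≤ n)
      = Finset.Icc (∑ i, z i) N := by
    ext n; simp only [Finset.mem_filter, Finset.mem_range, Finset.mem_Icc, Nat.lt_succ_iff]; omega
  have hmap : Finset.Icc (∑ i, z i) N
      = Finset.map (addLeftEmbedding (∑ i, z i)) (Finset.range (N - ∑ i, z i + 1)) := by
    ext n
    simp only [Finset.mem_Icc, Finset.mem_map, Finset.mem_range, addLeftEmbedding_apply]
    constructor
    · rintro ⟨h1, h2⟩; exact ⟨n - ∑ i, z i, by omega, by omega⟩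
    · rintro ⟨a, ha, rfl⟩; omega
  rw [hIcc, hmap, Finset.sum_map]
  simp only [addLeftEmbedding_apply, Nat.add_sub_cancel_left]
  have key := coeff_eq d N p hp x y z hzx hzy hx hy
  have hfac : ∀ k ∈ Finset.range (N - ∑ i, z i + 1),
      mProb d N p x * mProb d N p y * (ρ ^ (∑ i, z i + k) *
        ((N.choose (∑ i, z i) : ℝ) * ((N - ∑ i, z i).choose k : ℝ) * (-1 : ℝ) ^ k *
          (((∑ i, z i).factorial : ℝ) / ∏ i, ((z i).factorial : ℝ)) *
          (∏ i, ((x i).descFactorial (z i) : ℝ) * ((y i).descFactorial (z i) : ℝ) / (p i) ^ (z i)) /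
          ((N.descFactorial (∑ i, z i) : ℝ)) ^ 2))
      = (ρ ^ k * ((N - ∑ i, z i).choose k : ℝ) * (-1 : ℝ) ^ k) *
        (ρ ^ (∑ i, z i) * (mProb d N p x * mProb d N p y *
          ((N.choose (∑ i, z i) : ℝ) *
            (((∑ i, z i).factorial : ℝ) / ∏ i, ((z i).factorial : ℝ)) *
            (∏ i, ((x i).descFactorial (z i) : ℝ) * ((y i).descFactorial (z i) : ℝ) / (p i) ^ (z i)) /
            ((N.descFactorial (∑ i, z i) : ℝ)) ^ 2))) := by
    intro k _
    ring
  rw [Finset.sum_congr rfl hfac, ← Finset.sum_mul, binom_neg]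
  linear_combination (ρ ^ (∑ i, z i) * (1 - ρ) ^ (N - ∑ i, z i)) * key
end

section
/- Let m* = min_{1≤j≤d} p_j. If ρ satisfies −m*/(1−m*) ≤ ρ ≤ 1, then for all x,y ∈ ℕ^d with |x| = |y| = N, 1 + Σ_{n=1}^N ρ^n Q_n(x,y;N,p) ≥ 0. -/
open Finset

section Aux

variable {d : ℕ}

/-- `∏ i, (x i).descFactorial (z i)` as a real number. -/
noncomputable def Pd {d : ℕ} (x z : Fin d → ℕ) : ℝ := ∏ i, ((x i).descFactorial (z i) : ℝ)

/-- weight product. -/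
noncomputable def Wv {d : ℕ} (v : Fin d → ℝ) (z : Fin d → ℕ) : ℝ :=
  ∏ i, (v i ^ (z i) / ((z i).factorial : ℝ))

/-- auxiliary sum (expansion of a block permanent). -/
noncomputable def Rsum {d : ℕ} (x y : Fin d → ℕ) (v : Fin d → ℝ) : ℝ :=
  ∑ z ∈ Finset.Iic (x ⊓ y),
    (((∑ i, x i) - ∑ i, z i).factorial : ℝ) * (Pd x z * Pd y z * Wv v z)

/-- permanent of a square matrix, defined by expansion along the first row. -/
noncomputable def permMat : (n : ℕ) → (Fin n → Fin n → ℝ) → ℝ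
  | 0, _ => 1
  | n + 1, M => ∑ m, M 0 m * permMat n (fun i j => M i.succ (m.succAbove j))

lemma permMat_nonneg : ∀ (n : ℕ) (M : Fin n → Fin n → ℝ), (∀ i j, 0 ≤ M i j) → 0 ≤ permMat n M
  | 0, _, _ => zero_le_one
  | n + 1, M, h => by
      rw [permMat]
      exact Finset.sum_nonneg fun m _ =>
        mul_nonneg (h 0 m) (permMat_nonneg n _ fun i j => h _ _)

/-- fibre counts of a colouring. -/
def cnt {n d : ℕ} (c : Fin n → Fin d) : Fin d → ℕ := fun i => ∑ ℓ, if c ℓ = i then 1 else 0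

lemma sum_cnt {n : ℕ} (c : Fin n → Fin d) : ∑ i, cnt c i = n := by
  unfold cnt
  rw [Finset.sum_comm]
  simp

/-- decrement a vector at one coordinate. -/
def sub1 {d : ℕ} (x : Fin d → ℕ) (c : Fin d) : Fin d → ℕ := Function.update x c (x c - 1)

/-- increment a vector at one coordinate. -/
def add1 {d : ℕ} (x : Fin d → ℕ) (c : Fin d) : Fin d → ℕ := Function.update x c (x c + 1)

lemma sub1_le (x : Fin d → ℕ) (c : Fin d) : sub1 x c ≤ x := by
  intro i
  by_cases h : i = c
  · subst h; simp [sub1]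
  · simp [sub1, Function.update_of_ne h]

lemma sum_sub1 (x : Fin d → ℕ) (c : Fin d) (hc : 0 < x c) :
    ∑ i, sub1 x c i = (∑ i, x i) - 1 := by
  have e1 : ∑ i, x i = x c + ∑ i ∈ univ.erase c, x i :=
    (Finset.add_sum_erase _ _ (mem_univ c)).symm
  have e2 : ∑ i, sub1 x c i = (x c - 1) + ∑ i ∈ univ.erase c, x i := by
    rw [← Finset.add_sum_erase _ _ (mem_univ c)]
    congr 1
    · simp [sub1]
    · exact Finset.sum_congr rfl fun i hi => by
        simp [sub1, Function.update_of_ne (Finset.ne_of_mem_erase hi)]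
  omega

lemma sum_add1 (z : Fin d → ℕ) (c : Fin d) :
    ∑ i, add1 z c i = (∑ i, z i) + 1 := by
  have e1 : ∑ i, z i = z c + ∑ i ∈ univ.erase c, z i :=
    (Finset.add_sum_erase _ _ (mem_univ c)).symm
  have e2 : ∑ i, add1 z c i = (z c + 1) + ∑ i ∈ univ.erase c, z i := by
    rw [← Finset.add_sum_erase _ _ (mem_univ c)]
    congr 1
    · simp [add1]
    · exact Finset.sum_congr rfl fun i hi => by
        simp [add1, Function.update_of_ne (Finset.ne_of_mem_erase hi)]
  omega

end Aux

section Key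

variable {d : ℕ}

lemma nat_key (a k : ℕ) : a * (a - 1).descFactorial k = (a - k) * a.descFactorial k := by
  cases a with
  | zero => cases k <;> simp
  | succ a =>
      rw [Nat.succ_sub_one, ← Nat.succ_descFactorial_succ, Nat.descFactorial_succ]

lemma nat_key2 (a k : ℕ) (ha : 0 < a) :
    a.descFactorial (k + 1) = a * (a - 1).descFactorial k := by
  cases a with
  | zero => exact absurd ha (lt_irrefl 0)
  | succ a => rw [Nat.succ_descFactorial_succ, Nat.succ_sub_one]

lemma Pd_sub1 (x z : Fin d → ℕ) (c : Fin d) (h : z c ≤ x c) :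
    (x c : ℝ) * Pd (sub1 x c) z = ((x c : ℝ) - z c) * Pd x z := by
  unfold Pd
  rw [← Finset.mul_prod_erase univ (fun i => ((sub1 x c i).descFactorial (z i) : ℝ)) (mem_univ c),
    ← Finset.mul_prod_erase univ (fun i => ((x i).descFactorial (z i) : ℝ)) (mem_univ c)]
  have he : ∀ i ∈ univ.erase c,
      ((sub1 x c i).descFactorial (z i) : ℝ) = ((x i).descFactorial (z i) : ℝ) := by
    intro i hi
    simp [sub1, Function.update_of_ne (Finset.ne_of_mem_erase hi)]
  rw [Finset.prod_congr rfl he]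
  have key : (x c : ℝ) * ((sub1 x c c).descFactorial (z c) : ℝ)
      = ((x c : ℝ) - z c) * ((x c).descFactorial (z c) : ℝ) := by
    have := nat_key (x c) (z c)
    have hcast : ((x c - z c : ℕ) : ℝ) = (x c : ℝ) - z c := by
      push_cast [h]; ring
    simp only [sub1, Function.update_self]
    rw [← hcast]
    exact_mod_cast this
  rw [← mul_assoc (x c : ℝ), key]
  ring

lemma Pd_add1 (x z : Fin d → ℕ) (c : Fin d) (hx : 0 < x c) :
    Pd x (add1 z c) = (x c : ℝ) * Pd (sub1 x c) z := by
  unfold Pd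
  rw [← Finset.mul_prod_erase univ (fun i => ((x i).descFactorial (add1 z c i) : ℝ)) (mem_univ c),
    ← Finset.mul_prod_erase univ (fun i => ((sub1 x c i).descFactorial (z i) : ℝ)) (mem_univ c)]
  have he : ∀ i ∈ univ.erase c,
      ((x i).descFactorial (add1 z c i) : ℝ) = ((sub1 x c i).descFactorial (z i) : ℝ) := by
    intro i hi
    simp [sub1, add1, Function.update_of_ne (Finset.ne_of_mem_erase hi)]
  rw [Finset.prod_congr rfl he]
  have key : ((x c).descFactorial (add1 z c c) : ℝ)
      = (x c : ℝ) * ((sub1 x c c).descFactorial (z c) : ℝ) := by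
    simp only [add1, sub1, Function.update_self]
    exact_mod_cast congrArg (Nat.cast (R := ℝ)) (nat_key2 (x c) (z c) hx)
  rw [key]
  ring

lemma Wv_add1 (v : Fin d → ℝ) (z : Fin d → ℕ) (c : Fin d) :
    ((z c : ℝ) + 1) * Wv v (add1 z c) = v c * Wv v z := by
  unfold Wv
  rw [← Finset.mul_prod_erase univ (fun i => (v i ^ (add1 z c i) / ((add1 z c i).factorial : ℝ)))
      (mem_univ c),
    ← Finset.mul_prod_erase univ (fun i => (v i ^ (z i) / ((z i).factorial : ℝ))) (mem_univ c)]
  have he : ∀ i ∈ univ.erase c,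
      (v i ^ (add1 z c i) / ((add1 z c i).factorial : ℝ)) = v i ^ (z i) / ((z i).factorial : ℝ) := by
    intro i hi
    simp [add1, Function.update_of_ne (Finset.ne_of_mem_erase hi)]
  rw [Finset.prod_congr rfl he]
  have key : ((z c : ℝ) + 1) * (v c ^ (add1 z c c) / ((add1 z c c).factorial : ℝ))
      = v c * (v c ^ (z c) / ((z c).factorial : ℝ)) := by
    simp only [add1, Function.update_self, Nat.factorial_succ, pow_succ]
    push_cast
    have h1 : ((z c).factorial : ℝ) ≠ 0 := by exact_mod_cast (Nat.factorial_pos (z c)).ne'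
    have h2 : ((z c : ℝ) + 1) ≠ 0 := by positivity
    field_simp
  rw [← mul_assoc, key]
  ring

/-- Outside the decreased box, the descFactorial product vanishes. -/
lemma Pd_vanish (x y : Fin d → ℕ) (c j : Fin d) (z : Fin d → ℕ)
    (hz' : z ∉ Finset.Iic (sub1 x c ⊓ sub1 y j)) :
    Pd (sub1 x c) z * Pd (sub1 y j) z = 0 := by
  rw [Finset.mem_Iic] at hz'
  have : ∃ i, ¬ z i ≤ (sub1 x c ⊓ sub1 y j) i := by
    by_contra hcon
    push_neg at hcon
    exact hz' fun i => hcon i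
  obtain ⟨i, hi⟩ := this
  simp only [Pi.inf_apply, le_inf_iff, not_and_or, not_le] at hi
  rcases hi with hi | hi
  · have : ((sub1 x c i).descFactorial (z i) : ℝ) = 0 := by
      exact_mod_cast congrArg (Nat.cast (R := ℝ)) (Nat.descFactorial_eq_zero_iff_lt.mpr hi)
    have hP : Pd (sub1 x c) z = 0 := Finset.prod_eq_zero (mem_univ i) this
    rw [hP, zero_mul]
  · have : ((sub1 y j i).descFactorial (z i) : ℝ) = 0 := by
      exact_mod_cast congrArg (Nat.cast (R := ℝ)) (Nat.descFactorial_eq_zero_iff_lt.mpr hi)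
    have hP : Pd (sub1 y j) z = 0 := Finset.prod_eq_zero (mem_univ i) this
    rw [hP, mul_zero]

end Key

section Rrec

variable {d : ℕ}

lemma dagger (X Y : Fin d → ℕ) (v : Fin d → ℝ) (c j : Fin d) (hc : 0 < X c) :
    (X c : ℝ) * ((Y j : ℝ) * Rsum (sub1 X c) (sub1 Y j) v)
      = ∑ z ∈ Finset.Iic (X ⊓ Y), ((((∑ i, X i) - 1 - ∑ i, z i).factorial : ℝ)) *
          ((((X c : ℝ) - z c) * ((Y j : ℝ) - z j)) * (Pd X z * Pd Y z * Wv v z)) := by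
  unfold Rsum
  rw [sum_sub1 X c hc]
  have hext : ∑ z ∈ Finset.Iic (sub1 X c ⊓ sub1 Y j),
        ((((∑ i, X i) - 1 - ∑ i, z i).factorial : ℝ)) *
          (Pd (sub1 X c) z * Pd (sub1 Y j) z * Wv v z)
      = ∑ z ∈ Finset.Iic (X ⊓ Y),
        ((((∑ i, X i) - 1 - ∑ i, z i).factorial : ℝ)) *
          (Pd (sub1 X c) z * Pd (sub1 Y j) z * Wv v z) := by
    apply Finset.sum_subset
    · exact Finset.Iic_subset_Iic.mpr (inf_le_inf (sub1_le X c) (sub1_le Y j))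
    · intro z _ hz'
      rw [Pd_vanish X Y c j z hz', zero_mul, mul_zero]
  rw [hext, Finset.mul_sum, Finset.mul_sum]
  apply Finset.sum_congr rfl
  intro z hz
  rw [Finset.mem_Iic] at hz
  have hzx : z c ≤ X c := le_trans (hz c) inf_le_left
  have hzy : z j ≤ Y j := le_trans (hz j) inf_le_right
  calc (X c : ℝ) * ((Y j : ℝ) * ((((∑ i, X i) - 1 - ∑ i, z i).factorial : ℝ) *
          (Pd (sub1 X c) z * Pd (sub1 Y j) z * Wv v z)))
      = ((((∑ i, X i) - 1 - ∑ i, z i).factorial : ℝ)) *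
          (((X c : ℝ) * Pd (sub1 X c) z) * ((Y j : ℝ) * Pd (sub1 Y j) z) * Wv v z) := by ring
    _ = ((((∑ i, X i) - 1 - ∑ i, z i).factorial : ℝ)) *
          ((((X c : ℝ) - z c) * Pd X z) * (((Y j : ℝ) - z j) * Pd Y z) * Wv v z) := by
        rw [Pd_sub1 X z c hzx, Pd_sub1 Y z j hzy]
    _ = ((((∑ i, X i) - 1 - ∑ i, z i).factorial : ℝ)) *
          ((((X c : ℝ) - z c) * ((Y j : ℝ) - z j)) * (Pd X z * Pd Y z * Wv v z)) := by ring

lemma diamond (X Y : Fin d → ℕ) (v : Fin d → ℝ) (c : Fin d) (hc : 0 < X c) :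
    v c * ((X c : ℝ) * ((Y c : ℝ) * Rsum (sub1 X c) (sub1 Y c) v))
      = ∑ z ∈ Finset.Iic (X ⊓ Y), (((∑ i, X i) - ∑ i, z i).factorial : ℝ) *
          ((z c : ℝ) * (Pd X z * Pd Y z * Wv v z)) := by
  by_cases hY : Y c = 0
  · rw [show ((Y c : ℝ)) = 0 by exact_mod_cast hY]
    simp only [zero_mul, mul_zero]
    symm
    apply Finset.sum_eq_zero
    intro z hz
    rw [Finset.mem_Iic] at hz
    have : z c = 0 := by
      have h5 := hz c
      simp only [Pi.inf_apply, le_inf_iff] at h5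
      omega
    rw [this]
    simp
  · have hYc : 0 < Y c := Nat.pos_of_ne_zero hY
    unfold Rsum
    rw [sum_sub1 X c hc, Finset.mul_sum, Finset.mul_sum, Finset.mul_sum]
    conv_rhs => rw [← Finset.sum_filter_of_ne (p := fun z => 0 < z c)
      (fun z _ hne => by
        by_contra hzc
        apply hne
        have hzc' : ¬ 0 < z c := hzc
        have hz0 : z c = 0 := by omega
        rw [hz0]
        simp)]
    apply Finset.sum_nbij' (fun z => add1 z c) (fun z => sub1 z c)
    · intro z hz
      rw [Finset.mem_Iic] at hz
      rw [Finset.mem_filter, Finset.mem_Iic]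
      constructor
      · intro i
        have hi := hz i
        by_cases h : i = c
        · subst h
          simp only [Pi.inf_apply, le_inf_iff, sub1, add1, Function.update_self] at hi ⊢
          omega
        · simp only [Pi.inf_apply, le_inf_iff, sub1, add1, Function.update_of_ne h] at hi ⊢
          exact hi
      · simp [add1]
    · intro z hz
      rw [Finset.mem_filter, Finset.mem_Iic] at hz
      rw [Finset.mem_Iic]
      intro i
      have hi := hz.1 i
      by_cases h : i = c
      · subst h
        simp only [Pi.inf_apply, le_inf_iff, sub1, Function.update_self] at hi ⊢
        omega
      · simp only [Pi.inf_apply, le_inf_iff, sub1, Function.update_of_ne h] at hi ⊢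
        exact hi
    · intro z _
      funext i
      by_cases h : i = c
      · subst h; simp [sub1, add1]
      · simp [sub1, add1, Function.update_of_ne h]
    · intro z hz
      rw [Finset.mem_filter] at hz
      funext i
      by_cases h : i = c
      · subst h
        have := hz.2
        simp only [sub1, add1, Function.update_self]
        omega
      · simp [sub1, add1, Function.update_of_ne h]
    · intro z hz
      rw [Finset.mem_Iic] at hz
      have h1 : ∑ i, add1 z c i = (∑ i, z i) + 1 := sum_add1 z c
      have h2 : ((∑ i, X i) - ∑ i, add1 z c i) = (∑ i, X i) - 1 - ∑ i, z i := by
        rw [h1]; omega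
      have h3 : ((add1 z c c : ℕ) : ℝ) = (z c : ℝ) + 1 := by
        simp [add1]
      rw [h2, h3, Pd_add1 X z c hc, Pd_add1 Y z c hYc]
      have h4 := Wv_add1 v z c
      linear_combination ((((∑ i, X i) - 1 - ∑ i, z i).factorial : ℝ) *
        ((X c : ℝ) * Pd (sub1 X c) z) * ((Y c : ℝ) * Pd (sub1 Y c) z)) * h4.symm

end Rrec

section RrecMain

variable {d : ℕ}

lemma cast_fact_succ (a b : ℕ) (h : b < a) :
    ((a - b).factorial : ℝ) = ((a : ℝ) - b) * (((a - 1 - b).factorial : ℝ)) := by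
  rw [show a - b = (a - 1 - b) + 1 by omega, Nat.factorial_succ, Nat.cast_mul]
  congr 1
  rw [Nat.cast_add, Nat.cast_sub (show b ≤ a - 1 by omega), Nat.cast_sub (show 1 ≤ a by omega)]
  push_cast
  ring

lemma Rrec (X Y : Fin d → ℕ) (v : Fin d → ℝ) (c : Fin d) (hc : 0 < X c)
    (hXY : ∑ i, X i = ∑ i, Y i) :
    ∑ j, (Y j : ℝ) * ((1 + if c = j then v c else 0) * Rsum (sub1 X c) (sub1 Y j) v)
      = Rsum X Y v := by
  have hXne : (X c : ℝ) ≠ 0 := by exact_mod_cast hc.ne'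
  apply mul_left_cancel₀ hXne
  rw [Finset.mul_sum]
  have step1 : ∀ j : Fin d,
      (X c : ℝ) * ((Y j : ℝ) * ((1 + if c = j then v c else 0) * Rsum (sub1 X c) (sub1 Y j) v))
        = (X c : ℝ) * ((Y j : ℝ) * Rsum (sub1 X c) (sub1 Y j) v)
          + (if c = j then v c * ((X c : ℝ) * ((Y c : ℝ) * Rsum (sub1 X c) (sub1 Y c) v)) else 0) := by
    intro j
    by_cases h : c = j
    · subst h; simp only [eq_self_iff_true, if_true]; ring
    · simp only [if_neg h]; ring
  rw [Finset.sum_congr rfl (fun j _ => step1 j), Finset.sum_add_distrib]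
  rw [Finset.sum_ite_eq univ c
    (fun _ => v c * ((X c : ℝ) * ((Y c : ℝ) * Rsum (sub1 X c) (sub1 Y c) v))), if_pos (mem_univ c)]
  rw [Finset.sum_congr rfl (fun j _ => dagger X Y v c j hc), diamond X Y v c hc]
  rw [Finset.sum_comm]
  unfold Rsum
  rw [Finset.mul_sum, ← Finset.sum_add_distrib]
  apply Finset.sum_congr rfl
  intro z hz
  rw [Finset.mem_Iic] at hz
  have hzX : z ≤ X := le_trans hz inf_le_left
  have hkN : ∑ i, z i ≤ ∑ i, X i := Finset.sum_le_sum (fun i _ => hzX i)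
  have hsub : ∑ j, ((Y j : ℝ) - z j) = ((∑ i, X i : ℕ) : ℝ) - ((∑ i, z i : ℕ) : ℝ) := by
    rw [Finset.sum_sub_distrib]
    push_cast
    rw [show (∑ j, (X j : ℝ)) = ∑ j, (Y j : ℝ) from by exact_mod_cast hXY]
  have hfactor : ∑ j, ((((∑ i, X i) - 1 - ∑ i, z i).factorial : ℝ)) *
        ((((X c : ℝ) - z c) * ((Y j : ℝ) - z j)) * (Pd X z * Pd Y z * Wv v z))
      = ((((∑ i, X i) - 1 - ∑ i, z i).factorial : ℝ)) * (((X c : ℝ) - z c) *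
          (((∑ i, X i : ℕ) : ℝ) - ((∑ i, z i : ℕ) : ℝ)) * (Pd X z * Pd Y z * Wv v z)) := by
    calc ∑ j, ((((∑ i, X i) - 1 - ∑ i, z i).factorial : ℝ)) *
          ((((X c : ℝ) - z c) * ((Y j : ℝ) - z j)) * (Pd X z * Pd Y z * Wv v z))
        = ∑ j, (((((∑ i, X i) - 1 - ∑ i, z i).factorial : ℝ)) * (((X c : ℝ) - z c) *
            (Pd X z * Pd Y z * Wv v z))) * ((Y j : ℝ) - z j) :=
          Finset.sum_congr rfl fun j _ => by ring
      _ = (((((∑ i, X i) - 1 - ∑ i, z i).factorial : ℝ)) * (((X c : ℝ) - z c) *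
            (Pd X z * Pd Y z * Wv v z))) * ∑ j, ((Y j : ℝ) - z j) := (Finset.mul_sum _ _ _).symm
      _ = _ := by rw [hsub]; ring
  rw [hfactor]
  by_cases hke : ∑ i, z i = ∑ i, X i
  · have hzeq : ∀ i ∈ univ, z i = X i :=
      (Finset.sum_eq_sum_iff_of_le (fun i _ => hzX i)).mp hke
    have hzc : (z c : ℝ) = (X c : ℝ) := by
      have := hzeq c (mem_univ c)
      exact_mod_cast this
    have e1 : ((∑ i, X i : ℕ) : ℝ) - ((∑ i, z i : ℕ) : ℝ) = 0 := by rw [hke]; ring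
    have e2 : (((∑ i, X i) - ∑ i, z i).factorial : ℝ) = 1 := by
      rw [hke, Nat.sub_self]; simp
    rw [e1, e2, hzc]
    ring
  · have hlt : ∑ i, z i < ∑ i, X i := lt_of_le_of_ne hkN hke
    rw [cast_fact_succ _ _ hlt]
    ring

end RrecMain

section PermColour

variable {d : ℕ}

lemma Rsum_of_sum_zero (x y : Fin d → ℕ) (v : Fin d → ℝ) (hx : ∑ i, x i = 0) :
    Rsum x y v = 1 := by
  have hx0 : ∀ i, x i = 0 := by
    intro i
    have := Finset.sum_eq_zero_iff.mp hx
    exact this i (mem_univ i)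
  have hbot : x ⊓ y = ⊥ := by
    funext i
    simp [Pi.inf_apply, hx0 i]
  have hIic : Finset.Iic (⊥ : Fin d → ℕ) = {⊥} := by
    ext z
    simp [Finset.mem_Iic, le_bot_iff]
  rw [Rsum, hbot, hIic, Finset.sum_singleton]
  simp [Pd, Wv, hx]

lemma cnt_pos {n : ℕ} (c : Fin (n + 1) → Fin d) : 0 < cnt c (c 0) := by
  unfold cnt
  apply Finset.sum_pos' (fun ℓ _ => by positivity)
  exact ⟨0, mem_univ 0, by simp⟩

lemma cnt_succ {n : ℕ} (c : Fin (n + 1) → Fin d) :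
    cnt (c ∘ Fin.succ) = sub1 (cnt c) (c 0) := by
  funext i
  by_cases h : i = c 0
  · subst h
    simp only [cnt, sub1, Function.update_self, Function.comp]
    rw [Fin.sum_univ_succ]
    simp
  · simp only [cnt, sub1, Function.update_of_ne h, Function.comp]
    rw [Fin.sum_univ_succ]
    rw [if_neg (fun hcon => h hcon.symm)]
    simp

lemma cnt_succAbove {n : ℕ} (c : Fin (n + 1) → Fin d) (m : Fin (n + 1)) :
    cnt (c ∘ m.succAbove) = sub1 (cnt c) (c m) := by
  funext i
  by_cases h : i = c m
  · subst h
    simp only [cnt, sub1, Function.update_self, Function.comp]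
    rw [Fin.sum_univ_succAbove _ m]
    simp
  · simp only [cnt, sub1, Function.update_of_ne h, Function.comp]
    rw [Fin.sum_univ_succAbove _ m]
    rw [if_neg (fun hcon => h hcon.symm)]
    simp

lemma permMat_colour (v : Fin d → ℝ) :
    ∀ (n : ℕ) (c c' : Fin n → Fin d),
      permMat n (fun ℓ m => 1 + if c ℓ = c' m then v (c ℓ) else 0)
        = Rsum (cnt c) (cnt c') v := by
  intro n
  induction n with
  | zero =>
      intro c c'
      rw [permMat, Rsum_of_sum_zero _ _ _ (sum_cnt c)]
  | succ n ih =>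
      intro c c'
      rw [permMat]
      have hsub : ∀ m : Fin (n + 1),
          permMat n (fun i j =>
            (fun ℓ m => 1 + if c ℓ = c' m then v (c ℓ) else 0) i.succ (m.succAbove j))
            = Rsum (sub1 (cnt c) (c 0)) (sub1 (cnt c') (c' m)) v := by
        intro m
        rw [← cnt_succ c, ← cnt_succAbove c' m]
        exact ih (c ∘ Fin.succ) (c' ∘ m.succAbove)
      calc ∑ m, (1 + if c 0 = c' m then v (c 0) else 0) *
              permMat n (fun i j =>
                (fun ℓ m => 1 + if c ℓ = c' m then v (c ℓ) else 0) i.succ (m.succAbove j))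
          = ∑ m, (1 + if c 0 = c' m then v (c 0) else 0) *
              Rsum (sub1 (cnt c) (c 0)) (sub1 (cnt c') (c' m)) v :=
            Finset.sum_congr rfl fun m _ => by rw [hsub m]
        _ = ∑ j, (cnt c' j : ℝ) * ((1 + if c 0 = j then v (c 0) else 0) *
              Rsum (sub1 (cnt c) (c 0)) (sub1 (cnt c') j) v) := by
            rw [← Finset.sum_fiberwise univ c'
              (fun m => (1 + if c 0 = c' m then v (c 0) else 0) *
                Rsum (sub1 (cnt c) (c 0)) (sub1 (cnt c') (c' m)) v)]
            apply Finset.sum_congr rfl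
            intro j _
            have : ∀ m ∈ univ.filter (fun m => c' m = j),
                (1 + if c 0 = c' m then v (c 0) else 0) *
                  Rsum (sub1 (cnt c) (c 0)) (sub1 (cnt c') (c' m)) v
                = (1 + if c 0 = j then v (c 0) else 0) *
                  Rsum (sub1 (cnt c) (c 0)) (sub1 (cnt c') j) v := by
              intro m hm
              rw [(Finset.mem_filter.mp hm).2]
            rw [Finset.sum_congr rfl this, Finset.sum_const, nsmul_eq_mul]
            congr 2
            rw [Finset.card_filter]
            rfl
        _ = Rsum (cnt c) (cnt c') v :=
            Rrec (cnt c) (cnt c') v (c 0) (cnt_pos c) (by rw [sum_cnt, sum_cnt])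

end PermColour

section Expand

variable {d : ℕ}

/-- weight product with `p`. -/
noncomputable def Wp (p : Fin d → ℝ) (z : Fin d → ℕ) : ℝ :=
  ∏ i, (1 / ((p i) ^ (z i) * ((z i).factorial : ℝ)))

lemma kernelQ_zero (N : ℕ) (p : Fin d → ℝ) (x y : Fin d → ℕ) :
    kernelQ d N p 0 x y = 1 := by
  unfold kernelQ
  have hfilter : (Finset.Iic (x ⊓ y)).filter (fun z => ∑ i, z i ≤ 0) = {⊥} := by
    ext z
    simp only [Finset.mem_filter, Finset.mem_Iic, Finset.mem_singleton, Nat.le_zero,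
      Finset.sum_eq_zero_iff, mem_univ, forall_true_left]
    constructor
    · rintro ⟨_, h2⟩
      funext i
      exact h2 i
    · rintro rfl
      exact ⟨bot_le, fun i => rfl⟩
  rw [hfilter, Finset.sum_singleton]
  norm_num

lemma binom_sum (N k : ℕ) (hk : k ≤ N) (ρ : ℝ) :
    ∑ n ∈ Finset.Icc k N, ρ ^ n * ((N - k).choose (n - k) : ℝ) * (-1 : ℝ) ^ (n - k)
      = ρ ^ k * (1 - ρ) ^ (N - k) := by
  have h1 : ∑ n ∈ Finset.Icc k N, ρ ^ n * ((N - k).choose (n - k) : ℝ) * (-1 : ℝ) ^ (n - k)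
      = ∑ m ∈ Finset.range (N - k + 1), ρ ^ k * ((-ρ) ^ m * 1 ^ ((N - k) - m) * ((N - k).choose m : ℝ)) := by
    apply Finset.sum_nbij' (fun n => n - k) (fun m => m + k)
    · intro n hn
      rw [Finset.mem_Icc] at hn
      rw [Finset.mem_range]
      omega
    · intro m hm
      rw [Finset.mem_range] at hm
      rw [Finset.mem_Icc]
      omega
    · intro n hn
      rw [Finset.mem_Icc] at hn
      omega
    · intro m _
      omega
    · intro n hn
      rw [Finset.mem_Icc] at hn
      rw [show ρ ^ n = ρ ^ k * ρ ^ (n - k) from by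
        rw [← pow_add]
        congr 1
        omega]
      rw [neg_pow]
      ring
  rw [h1, ← Finset.mul_sum, ← add_pow, show -ρ + 1 = 1 - ρ from by ring]

lemma nat_const_key (N k : ℕ) (hk : k ≤ N) :
    N.choose k * k.factorial * N.factorial
      = (N - k).factorial * (N.descFactorial k) ^ 2 := by
  have h1 : N.descFactorial k = k.factorial * N.choose k :=
    Nat.descFactorial_eq_factorial_mul_choose N k
  have h2 : N.choose k * k.factorial * (N - k).factorial = N.factorial :=
    Nat.choose_mul_factorial_mul_factorial hk
  calc N.choose k * k.factorial * N.factorial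
      = N.choose k * k.factorial * (N.choose k * k.factorial * (N - k).factorial) := by rw [h2]
    _ = (N - k).factorial * (k.factorial * N.choose k) ^ 2 := by ring
    _ = _ := by rw [← h1]

lemma kernel_expand (N : ℕ) (p : Fin d → ℝ) (hp : ∀ j, 0 < p j) (ρ : ℝ) (x y : Fin d → ℕ)
    (hx : ∑ i, x i = N) :
    1 + ∑ n ∈ Finset.Icc 1 N, ρ ^ n * kernelQ d N p n x y
      = ∑ z ∈ Finset.Iic (x ⊓ y), ρ ^ (∑ i, z i) * (1 - ρ) ^ (N - ∑ i, z i) *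
          (((N - ∑ i, z i).factorial : ℝ) / (N.factorial : ℝ)) *
          (Pd x z * Pd y z * Wp p z) := by
  have hstep : 1 + ∑ n ∈ Finset.Icc 1 N, ρ ^ n * kernelQ d N p n x y
      = ∑ n ∈ Finset.Icc 0 N, ρ ^ n * kernelQ d N p n x y := by
    rw [Finset.Icc_eq_cons_Ioc (Nat.zero_le N), Finset.sum_cons]
    rw [← Finset.Icc_add_one_left_eq_Ioc, pow_zero, kernelQ_zero, mul_one]
    rfl
  rw [hstep]
  unfold kernelQ
  simp_rw [Finset.sum_filter, Finset.mul_sum, mul_ite, mul_zero]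
  rw [Finset.sum_comm]
  apply Finset.sum_congr rfl
  intro z hz
  rw [Finset.mem_Iic] at hz
  have hzx : z ≤ x := le_trans hz inf_le_left
  have hk : ∑ i, z i ≤ N := by
    rw [← hx]
    exact Finset.sum_le_sum (fun i _ => hzx i)
  have hinner : ∑ n ∈ Finset.Icc 0 N, (if ∑ i, z i ≤ n then
        ρ ^ n * ((N.choose (∑ i, z i) : ℝ) * ((N - ∑ i, z i).choose (n - ∑ i, z i) : ℝ) *
          (-1 : ℝ) ^ (n - ∑ i, z i) *
          (((∑ i, z i).factorial : ℝ) / ∏ i, ((z i).factorial : ℝ)) *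
          (∏ i, ((x i).descFactorial (z i) : ℝ) * ((y i).descFactorial (z i) : ℝ) / (p i) ^ (z i)) /
          ((N.descFactorial (∑ i, z i) : ℝ)) ^ 2) else 0)
      = ∑ n ∈ Finset.Icc (∑ i, z i) N,
        (ρ ^ n * ((N - ∑ i, z i).choose (n - ∑ i, z i) : ℝ) * (-1 : ℝ) ^ (n - ∑ i, z i)) *
          ((N.choose (∑ i, z i) : ℝ) *
            (((∑ i, z i).factorial : ℝ) / ∏ i, ((z i).factorial : ℝ)) *
            (∏ i, ((x i).descFactorial (z i) : ℝ) * ((y i).descFactorial (z i) : ℝ) / (p i) ^ (z i)) /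
            ((N.descFactorial (∑ i, z i) : ℝ)) ^ 2) := by
    rw [← Finset.sum_filter]
    have hfil : (Finset.Icc 0 N).filter (fun n => ∑ i, z i ≤ n) = Finset.Icc (∑ i, z i) N := by
      ext n
      simp only [Finset.mem_filter, Finset.mem_Icc]
      omega
    rw [hfil]
    exact Finset.sum_congr rfl fun n _ => by ring
  rw [hinner, ← Finset.sum_mul, binom_sum N (∑ i, z i) hk ρ]
  -- now pure scalar identity
  have hZ : (∏ i, ((z i).factorial : ℝ)) ≠ 0 := by
    apply Finset.prod_ne_zero_iff.mpr
    intro i _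
    exact_mod_cast (Nat.factorial_pos (z i)).ne'
  have hPp : (∏ i, (p i) ^ (z i)) ≠ 0 := by
    apply Finset.prod_ne_zero_iff.mpr
    intro i _
    exact (pow_pos (hp i) (z i)).ne'
  have hdF : ((N.descFactorial (∑ i, z i) : ℝ)) ≠ 0 := by
    have : N.descFactorial (∑ i, z i) ≠ 0 := by
      rw [Ne, Nat.descFactorial_eq_zero_iff_lt]
      omega
    exact_mod_cast this
  have hNf : ((N.factorial : ℝ)) ≠ 0 := by
    exact_mod_cast (Nat.factorial_pos N).ne'
  have hprod : (∏ i, ((x i).descFactorial (z i) : ℝ) * ((y i).descFactorial (z i) : ℝ) / (p i) ^ (z i))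
      = Pd x z * Pd y z / ∏ i, (p i) ^ (z i) := by
    rw [Finset.prod_div_distrib, Finset.prod_mul_distrib]
    rfl
  have hWp : Wp p z = 1 / ((∏ i, (p i) ^ (z i)) * (∏ i, ((z i).factorial : ℝ))) := by
    unfold Wp
    rw [Finset.prod_div_distrib, Finset.prod_const_one, Finset.prod_mul_distrib]
  rw [hprod, hWp]
  have hkey : (N.choose (∑ i, z i) : ℝ) * (((∑ i, z i).factorial : ℝ)) * (N.factorial : ℝ)
      = (((N - ∑ i, z i).factorial : ℝ)) * ((N.descFactorial (∑ i, z i) : ℝ)) ^ 2 := by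
    exact_mod_cast congrArg (Nat.cast (R := ℝ)) (nat_const_key N (∑ i, z i) hk)
  have hkey2 : (N.choose (∑ i, z i) : ℝ) * (((∑ i, z i).factorial : ℝ)) /
        ((N.descFactorial (∑ i, z i) : ℝ)) ^ 2
      = (((N - ∑ i, z i).factorial : ℝ)) / (N.factorial : ℝ) := by
    rw [div_eq_div_iff (pow_ne_zero 2 hdF) hNf]
    linear_combination hkey
  rw [← hkey2]
  ring

end Expand

section Colouring

variable {d : ℕ}

lemma exists_colouring (N : ℕ) (x : Fin d → ℕ) (hx : ∑ i, x i = N) :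
    ∃ c : Fin N → Fin d, cnt c = x := by
  have hcard : Fintype.card (Σ i : Fin d, Fin (x i)) = N := by
    simp [Fintype.card_sigma, hx]
  let e : (Σ i : Fin d, Fin (x i)) ≃ Fin N := Fintype.equivFinOfCardEq hcard
  refine ⟨fun ℓ => (e.symm ℓ).1, ?_⟩
  funext i
  unfold cnt
  rw [Fintype.sum_equiv e.symm (fun ℓ => if (e.symm ℓ).1 = i then 1 else 0)
    (fun a => if a.1 = i then 1 else 0) (fun ℓ => rfl)]
  rw [← Finset.univ_sigma_univ, Finset.sum_sigma]
  have hinner : ∀ i' : Fin d, ∑ _b : Fin (x i'), (if i' = i then 1 else 0) =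
      if i' = i then x i' else 0 := by
    intro i'
    by_cases h : i' = i
    · simp [h]
    · simp [h]
  calc ∑ i' : Fin d, ∑ b : Fin (x i'), (if (⟨i', b⟩ : Σ i, Fin (x i)).1 = i then 1 else 0)
      = ∑ i' : Fin d, (if i' = i then x i' else 0) :=
        Finset.sum_congr rfl fun i' _ => hinner i'
    _ = x i := by rw [Finset.sum_ite_eq' univ i (fun i' => x i'), if_pos (mem_univ i)]

lemma Rsum_nonneg (x y : Fin d → ℕ) (v : Fin d → ℝ) (hv : ∀ i, -1 ≤ v i)
    (hxy : ∑ i, x i = ∑ i, y i) : 0 ≤ Rsum x y v := by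
  obtain ⟨c, hc⟩ := exists_colouring (∑ i, x i) x rfl
  obtain ⟨c', hc'⟩ := exists_colouring (∑ i, x i) y hxy.symm
  rw [← hc, ← hc', ← permMat_colour]
  apply permMat_nonneg
  intro ℓ m
  by_cases h : c ℓ = c' m
  · rw [if_pos h]
    linarith [hv (c ℓ)]
  · rw [if_neg h]
    norm_num

end Colouring

section Final

variable {d : ℕ}

lemma Pd_nonneg (x z : Fin d → ℕ) : 0 ≤ Pd x z :=
  Finset.prod_nonneg fun i _ => by positivity

lemma Wp_nonneg (p : Fin d → ℝ) (hp : ∀ j, 0 < p j) (z : Fin d → ℕ) : 0 ≤ Wp p z :=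
  Finset.prod_nonneg fun i _ => by
    have := hp i
    positivity

/-- conversion to `Rsum` for `ρ < 1`. -/
lemma expand_eq_Rsum (N : ℕ) (p : Fin d → ℝ) (hp : ∀ j, 0 < p j) (ρ : ℝ) (hρ : ρ < 1)
    (x y : Fin d → ℕ) (hx : ∑ i, x i = N) :
    ∑ z ∈ Finset.Iic (x ⊓ y), ρ ^ (∑ i, z i) * (1 - ρ) ^ (N - ∑ i, z i) *
        (((N - ∑ i, z i).factorial : ℝ) / (N.factorial : ℝ)) *
        (Pd x z * Pd y z * Wp p z)
      = (1 - ρ) ^ N / (N.factorial : ℝ) *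
          Rsum x y (fun i => ρ / ((1 - ρ) * p i)) := by
  have h1ρ : (0 : ℝ) < 1 - ρ := by linarith
  rw [Rsum, hx, Finset.mul_sum]
  apply Finset.sum_congr rfl
  intro z hz
  rw [Finset.mem_Iic] at hz
  have hzx : z ≤ x := le_trans hz inf_le_left
  have hk : ∑ i, z i ≤ N := by
    rw [← hx]
    exact Finset.sum_le_sum (fun i _ => hzx i)
  have hWv : Wv (fun i => ρ / ((1 - ρ) * p i)) z
      = ρ ^ (∑ i, z i) * ((1 - ρ)⁻¹) ^ (∑ i, z i) * Wp p z := by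
    unfold Wv Wp
    rw [← Finset.prod_pow_eq_pow_sum univ z ρ, ← Finset.prod_pow_eq_pow_sum univ z (1 - ρ)⁻¹,
      ← Finset.prod_mul_distrib, ← Finset.prod_mul_distrib]
    apply Finset.prod_congr rfl
    intro i _
    have hpne : p i ≠ 0 := (hp i).ne'
    have h1ρ' : (1 - ρ) ≠ 0 := h1ρ.ne'
    have hfne : ((z i).factorial : ℝ) ≠ 0 := by exact_mod_cast (Nat.factorial_pos (z i)).ne'
    rw [div_pow, mul_pow, inv_pow]
    field_simp
  rw [hWv]
  have hpow : (1 - ρ) ^ N = (1 - ρ) ^ (N - ∑ i, z i) * (1 - ρ) ^ (∑ i, z i) := by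
    rw [← pow_add]
    congr 1
    omega
  rw [hpow]
  have : ((1 - ρ) ^ (∑ i, z i) : ℝ) ≠ 0 := by positivity
  field_simp
  rw [mul_assoc _ ((1 - ρ) ^ _), ← mul_pow, mul_one_div_cancel h1ρ.ne', one_pow, mul_one]

end Final


/-- Nonnegativity of the Poisson kernel `1 + Σ_{n=1}^N ρ^n Q_n(x,y;N,p)` for
`-m*/(1-m*) ≤ ρ ≤ 1`, where `m* = min_j p_j`. -/
theorem poisson_kernel_nonneg (d : ℕ) (hd : 2 ≤ d) (p : Fin d → ℝ)
    (hp : ∀ j, 0 < p j) (hsum : ∑ j, p j = 1) (N : ℕ) (hN : 0 < N)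
    (mstar : ℝ) (hmstar : IsLeast (Set.range p) mstar)
    (ρ : ℝ) (hρl : -(mstar / (1 - mstar)) ≤ ρ) (hρu : ρ ≤ 1)
    (x y : Fin d → ℕ) (hx : ∑ i, x i = N) (hy : ∑ i, y i = N) :
    0 ≤ 1 + ∑ n ∈ Finset.Icc 1 N, ρ ^ n * kernelQ d N p n x y := by
  have hplt1 : ∀ i, p i < 1 := by
    intro i
    have hex : ∃ i' : Fin d, i' ≠ i := by
      by_cases h : i = ⟨0, by omega⟩
      · exact ⟨⟨1, by omega⟩, fun hcon => by
          rw [h] at hcon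
          simp [Fin.ext_iff] at hcon⟩
      · exact ⟨⟨0, by omega⟩, fun hcon => h hcon.symm⟩
    obtain ⟨i', hi'⟩ := hex
    have hsub : p i' ≤ ∑ j ∈ univ.erase i, p j :=
      Finset.single_le_sum (fun j _ => (hp j).le) (Finset.mem_erase.mpr ⟨hi', mem_univ _⟩)
    have htot : p i + ∑ j ∈ univ.erase i, p j = 1 := by
      rw [Finset.add_sum_erase _ p (mem_univ i), hsum]
    have := hp i'
    linarith
  obtain ⟨j0, hj0⟩ := hmstar.1
  have hm0 : 0 < mstar := hj0 ▸ hp j0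
  have hmle : ∀ i, mstar ≤ p i := fun i => hmstar.2 ⟨i, rfl⟩
  have hm1 : mstar < 1 := hj0 ▸ hplt1 j0
  rcases le_or_gt 0 ρ with hρ0 | hρ0
  · rw [kernel_expand N p hp ρ x y hx]
    apply Finset.sum_nonneg
    intro z _
    have h1 : (0:ℝ) ≤ ρ ^ (∑ i, z i) := pow_nonneg hρ0 _
    have h2 : (0:ℝ) ≤ (1 - ρ) ^ (N - ∑ i, z i) := pow_nonneg (by linarith) _
    have h3 : (0:ℝ) ≤ ((N - ∑ i, z i).factorial : ℝ) / (N.factorial : ℝ) := by positivity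
    exact mul_nonneg (mul_nonneg (mul_nonneg h1 h2) h3)
      (mul_nonneg (mul_nonneg (Pd_nonneg x z) (Pd_nonneg y z)) (Wp_nonneg p hp z))
  · rw [kernel_expand N p hp ρ x y hx, expand_eq_Rsum N p hp ρ (by linarith) x y hx]
    apply mul_nonneg
    · apply div_nonneg _ (Nat.cast_nonneg _)
      apply pow_nonneg
      linarith
    · apply Rsum_nonneg _ _ _ _ (by rw [hx, hy])
      intro i
      have hpi := hp i
      have h1ρ : (0:ℝ) < 1 - ρ := by linarith
      have hpi1 : p i < 1 := hplt1 i
      have hdiv : mstar / (1 - mstar) ≤ p i / (1 - p i) := by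
        rw [div_le_div_iff₀ (by linarith) (by linarith)]
        nlinarith [hmle i]
      have hρi : -(p i / (1 - p i)) ≤ ρ := by linarith
      have h2 : -(p i) ≤ ρ * (1 - p i) := by
        have hmul := mul_le_mul_of_nonneg_right hρi
          (le_of_lt (show (0:ℝ) < 1 - p i by linarith))
        have heq : -(p i / (1 - p i)) * (1 - p i) = -(p i) := by
          rw [neg_mul, div_mul_cancel₀ _ (show (1:ℝ) - p i ≠ 0 by linarith)]
        linarith [heq ▸ hmul]
      rw [le_div_iff₀ (show (0:ℝ) < (1 - ρ) * p i by positivity)]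
      nlinarith [h2]
end

section
/- For all s, t ∈ ℝ^d and every integer 0 ≤ n ≤ N, Σ_{x,y∈ℕ^d: |x|=|y|=N} m(x;N,p) m(y;N,p) (∏_{i=1}^d s_i^{x_i}) (∏_{j=1}^d t_j^{y_j}) Q_n(x,y;N,p) = C(N,n) (T_0(s) T_0(t))^{N−n} (Σ_{j=1}^d p_j s_j t_j − T_0(s) T_0(t))^n, where T_0(s) = Σ_{i=1}^d p_i s_i and T_0(t) = Σ_{i=1}^d p_i t_i. -/
open Finset

/-- The finite set of configurations of `N` balls in `d` boxes. -/
noncomputable def multiSupp (d N : ℕ) : Finset (Fin d → ℕ) :=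
  (Finset.Iic (fun _ => N)).filter (fun x => ∑ i, x i = N)

lemma multiSupp_eq (d N : ℕ) :
    multiSupp d N = Finset.piAntidiag Finset.univ N := by
  ext x
  simp only [multiSupp, Finset.mem_filter, Finset.mem_Iic, Finset.mem_piAntidiag, Pi.le_def]
  constructor
  · rintro ⟨-, h⟩; exact ⟨h, fun i _ => Finset.mem_univ i⟩
  · rintro ⟨h, -⟩
    refine ⟨fun i => ?_, h⟩
    calc x i ≤ ∑ j, x j := Finset.single_le_sum (fun j _ => Nat.zero_le _) (Finset.mem_univ i)
    _ = N := h

lemma genfun (d M : ℕ) (f : Fin d → ℝ) :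
    ∑ x ∈ Finset.piAntidiag Finset.univ M,
      ((M.factorial : ℝ) / ∏ i, ((x i).factorial : ℝ)) * ∏ i, f i ^ x i
    = (∑ i, f i) ^ M := by
  rw [Finset.sum_pow_eq_sum_piAntidiag]
  refine Finset.sum_congr rfl fun x hx => ?_
  rw [Finset.mem_piAntidiag] at hx
  congr 1
  have h := Nat.multinomial_spec Finset.univ x
  rw [hx.1] at h
  have h0 : (∏ i, ((x i).factorial : ℝ)) ≠ 0 := by positivity
  rw [div_eq_iff h0]
  exact_mod_cast (mul_comm _ _).trans h |>.symm

lemma marg (d N : ℕ) (p s : Fin d → ℝ) (z : Fin d → ℕ)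
    (hk : ∑ i, z i ≤ N) :
    ∑ x ∈ Finset.piAntidiag Finset.univ N,
      mProb d N p x * (∏ i, s i ^ x i) * ∏ i, ((x i).descFactorial (z i) : ℝ)
    = (N.descFactorial (∑ i, z i) : ℝ) * (∏ i, (p i * s i) ^ z i) *
        (∑ i, p i * s i) ^ (N - ∑ i, z i) := by
  classical
  set k := ∑ i, z i with hkdef
  rw [← Finset.sum_filter_of_ne (p := fun x => z ≤ x) (by
    intro x hx hne
    by_contra hle
    apply hne
    rw [Pi.le_def, not_forall] at hle
    obtain ⟨i, hi⟩ := hle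
    have : ((x i).descFactorial (z i) : ℝ) = 0 := by
      rw [Nat.descFactorial_eq_zero_iff_lt.mpr (by omega)]; simp
    rw [mul_eq_zero]; right
    exact Finset.prod_eq_zero (Finset.mem_univ i) this)]
  have key : ∀ w ∈ Finset.piAntidiag (Finset.univ : Finset (Fin d)) (N - k),
      mProb d N p (w + z) * (∏ i, s i ^ (w + z) i) * ∏ i, (((w + z) i).descFactorial (z i) : ℝ)
      = (N.descFactorial k : ℝ) * (∏ i, (p i * s i) ^ z i) *
          ((((N - k).factorial : ℝ) / ∏ i, ((w i).factorial : ℝ)) * ∏ i, (p i * s i) ^ w i) := by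
    intro w hw
    rw [Finset.mem_piAntidiag] at hw
    have hfac : ∀ i, ((w i + z i).factorial : ℝ)
        = ((w i).factorial : ℝ) * ((w i + z i).descFactorial (z i) : ℝ) := by
      intro i
      have := Nat.factorial_mul_descFactorial (Nat.le_add_left (z i) (w i))
      rw [Nat.add_sub_cancel] at this
      exact_mod_cast this.symm
    have hNfac : (N.factorial : ℝ) = ((N - k).factorial : ℝ) * (N.descFactorial k : ℝ) := by
      exact_mod_cast (Nat.factorial_mul_descFactorial hk).symm
    have hd0 : ∀ i, ((w i + z i).descFactorial (z i) : ℝ) ≠ 0 := by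
      intro i
      have := Nat.descFactorial_eq_zero_iff_lt (n := w i + z i) (k := z i)
      simp only [Nat.cast_ne_zero]
      intro h; rw [this] at h; omega
    have hw0 : ∀ i, ((w i).factorial : ℝ) ≠ 0 := fun i => by positivity
    simp only [mProb, Pi.add_apply, hNfac]
    simp only [pow_add, mul_pow, Finset.prod_mul_distrib, hfac]
    have h1 : (∏ i, ((w i + z i).descFactorial (z i) : ℝ)) ≠ 0 :=
      Finset.prod_ne_zero_iff.mpr fun i _ => hd0 i
    have h2 : (∏ i, ((w i).factorial : ℝ)) ≠ 0 := Finset.prod_ne_zero_iff.mpr fun i _ => hw0 i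
    field_simp
  rw [Finset.sum_nbij' (fun x => x - z) (fun w => w + z)
    (t := Finset.piAntidiag Finset.univ (N - k))
    (g := fun w => (N.descFactorial k : ℝ) * (∏ i, (p i * s i) ^ z i) *
          ((((N - k).factorial : ℝ) / ∏ i, ((w i).factorial : ℝ)) * ∏ i, (p i * s i) ^ w i))
    ?_ ?_ ?_ ?_ ?_]
  · rw [← Finset.mul_sum, genfun]
  · intro x hx
    simp only [Finset.mem_filter, Finset.mem_piAntidiag] at hx ⊢
    obtain ⟨⟨hsum, -⟩, hle⟩ := hx
    refine ⟨?_, fun i _ => Finset.mem_univ i⟩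
    have hxz : Finset.univ.sum (x - z) = ∑ i, (x i - z i) := Finset.sum_congr rfl (fun i _ => rfl)
    rw [hxz, Finset.sum_tsub_distrib _ (fun i _ => (Pi.le_def.mp hle) i), hsum]
  · intro w hw
    simp only [Finset.mem_piAntidiag] at hw
    simp only [Finset.mem_filter, Finset.mem_piAntidiag]
    refine ⟨⟨?_, fun i _ => Finset.mem_univ i⟩, fun i => Nat.le_add_left _ _⟩
    simp only [Pi.add_apply, Finset.sum_add_distrib, hw.1, hkdef]
    omega
  · intro x hx
    simp only [Finset.mem_filter] at hx
    funext i
    have := (Pi.le_def.mp hx.2) i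
    simp only [Pi.add_apply, Pi.sub_apply]
    omega
  · intro w hw
    funext i
    simp only [Pi.add_apply, Pi.sub_apply]
    omega
  · intro x hx
    simp only [Finset.mem_filter] at hx
    have hxz : x - z + z = x := by
      funext i; have := (Pi.le_def.mp hx.2) i; simp only [Pi.add_apply, Pi.sub_apply]; omega
    have hm : x - z ∈ Finset.piAntidiag (Finset.univ : Finset (Fin d)) (N - k) := by
      rw [Finset.mem_piAntidiag]
      refine ⟨?_, fun i _ => Finset.mem_univ i⟩
      have hs : Finset.univ.sum (x - z) = ∑ i, (x i - z i) := Finset.sum_congr rfl (fun i _ => rfl)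
      rw [hs, Finset.sum_tsub_distrib _ (fun i _ => (Pi.le_def.mp hx.2) i)]
      rw [Finset.mem_piAntidiag] at hx
      rw [hx.1.1]
    have hkey := key (x - z) hm
    rw [hxz] at hkey
    simpa using hkey

/-- The transform of `Q_n(x,y;N,p)` for independent multinomial vectors `X, Y`. -/
theorem kernelQ_transform (d : ℕ) (hd : 2 ≤ d) (p : Fin d → ℝ)
    (hp : ∀ j, 0 < p j) (hsum : ∑ j, p j = 1) (N : ℕ) (hN : 0 < N)
    (s t : Fin d → ℝ) (n : ℕ) (hn : n ≤ N) :
    ∑ x ∈ multiSupp d N, ∑ y ∈ multiSupp d N,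
        mProb d N p x * mProb d N p y * (∏ i, (s i) ^ (x i)) * (∏ j, (t j) ^ (y j)) *
          kernelQ d N p n x y
      = (N.choose n : ℝ) * ((∑ i, p i * s i) * (∑ i, p i * t i)) ^ (N - n) *
          ((∑ j, p j * s j * t j) - (∑ i, p i * s i) * (∑ i, p i * t i)) ^ n := by
  classical
  set S := ∑ i, p i * s i with hS
  set T := ∑ i, p i * t i with hT
  set U := ∑ j, p j * s j * t j with hU
  set Z := (Finset.Iic (fun _ : Fin d => N)).filter (fun z => ∑ i, z i ≤ n) with hZ
  set P := multiSupp d N with hP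
  -- the summand of kernelQ, as a function
  set F : (Fin d → ℕ) → (Fin d → ℕ) → (Fin d → ℕ) → ℝ := fun z x y =>
    (N.choose (∑ i, z i) : ℝ) * ((N - ∑ i, z i).choose (n - ∑ i, z i) : ℝ) *
      (-1 : ℝ) ^ (n - ∑ i, z i) *
      (((∑ i, z i).factorial : ℝ) / ∏ i, ((z i).factorial : ℝ)) *
      (∏ i, ((x i).descFactorial (z i) : ℝ) * ((y i).descFactorial (z i) : ℝ) / (p i) ^ (z i)) /
      ((N.descFactorial (∑ i, z i) : ℝ)) ^ 2 with hF
  have hker : ∀ x ∈ P, ∀ y ∈ P, kernelQ d N p n x y = ∑ z ∈ Z, F z x y := by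
    intro x hx y hy
    rw [kernelQ]
    refine Finset.sum_subset ?_ ?_
    · intro z hz
      simp only [hZ, Finset.mem_filter, Finset.mem_Iic] at hz ⊢
      refine ⟨?_, hz.2⟩
      rw [hP, multiSupp] at hx
      simp only [Finset.mem_filter, Finset.mem_Iic] at hx
      exact le_trans (le_trans hz.1 inf_le_left) hx.1
    · intro z hz hnz
      simp only [hZ, Finset.mem_filter, Finset.mem_Iic] at hz hnz
      have hni : ¬ z ≤ x ⊓ y := fun h => hnz ⟨h, hz.2⟩
      rw [Pi.le_def, not_forall] at hni
      obtain ⟨i, hi⟩ := hni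
      simp only [Pi.inf_apply, le_inf_iff, not_and_or, not_le] at hi
      have hzero : ((x i).descFactorial (z i) : ℝ) * ((y i).descFactorial (z i) : ℝ)
          / (p i) ^ (z i) = 0 := by
        rcases hi with h | h
        · rw [Nat.descFactorial_eq_zero_iff_lt.mpr h]; simp
        · rw [Nat.descFactorial_eq_zero_iff_lt.mpr h]; simp
      have hpz : (∏ i, ((x i).descFactorial (z i) : ℝ) * ((y i).descFactorial (z i) : ℝ)
          / (p i) ^ (z i)) = 0 := Finset.prod_eq_zero (Finset.mem_univ i) hzero
      rw [hpz]
      simp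
  calc
    ∑ x ∈ P, ∑ y ∈ P,
        mProb d N p x * mProb d N p y * (∏ i, (s i) ^ (x i)) * (∏ j, (t j) ^ (y j)) *
          kernelQ d N p n x y
      = ∑ z ∈ Z, ∑ x ∈ P, ∑ y ∈ P,
          mProb d N p x * mProb d N p y * (∏ i, (s i) ^ (x i)) * (∏ j, (t j) ^ (y j)) *
            F z x y := by
        rw [Finset.sum_congr rfl (fun x hx => Finset.sum_congr rfl (fun y hy => by
          rw [hker x hx y hy, Finset.mul_sum]))]
        rw [Finset.sum_congr rfl (fun x (hx : x ∈ P) => Finset.sum_comm)]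
        exact Finset.sum_comm
    _ = ∑ z ∈ Z,
          ((N.choose (∑ i, z i) : ℝ) * ((N - ∑ i, z i).choose (n - ∑ i, z i) : ℝ) *
            (-1 : ℝ) ^ (n - ∑ i, z i) *
            (((∑ i, z i).factorial : ℝ) / ∏ i, ((z i).factorial : ℝ))) *
          (∏ i, (p i * s i * t i) ^ (z i)) * (S * T) ^ (N - ∑ i, z i) := by
        refine Finset.sum_congr rfl fun z hz => ?_
        simp only [hZ, Finset.mem_filter, Finset.mem_Iic] at hz
        have hkN : ∑ i, z i ≤ N := le_trans hz.2 hn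
        set C : ℝ := (N.choose (∑ i, z i) : ℝ) * ((N - ∑ i, z i).choose (n - ∑ i, z i) : ℝ) *
            (-1 : ℝ) ^ (n - ∑ i, z i) *
            (((∑ i, z i).factorial : ℝ) / ∏ i, ((z i).factorial : ℝ)) with hC
        set A : ℝ := C / ((∏ i, (p i) ^ (z i)) * ((N.descFactorial (∑ i, z i) : ℝ)) ^ 2) with hA
        have hterm : ∀ x y : Fin d → ℕ,
            mProb d N p x * mProb d N p y * (∏ i, (s i) ^ (x i)) * (∏ j, (t j) ^ (y j)) *
              F z x y
            = A * (mProb d N p x * (∏ i, s i ^ x i) * ∏ i, ((x i).descFactorial (z i) : ℝ))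
                * (mProb d N p y * (∏ j, t j ^ y j) * ∏ i, ((y i).descFactorial (z i) : ℝ)) := by
          intro x y
          simp only [hF, hA, hC]
          rw [Finset.prod_div_distrib, Finset.prod_mul_distrib]
          ring
        rw [Finset.sum_congr rfl (fun x _ => Finset.sum_congr rfl (fun y _ => hterm x y))]
        rw [Finset.sum_congr rfl (fun x (_ : x ∈ P) => (Finset.mul_sum _ _ _).symm),
          ← Finset.sum_mul, ← Finset.mul_sum]
        rw [hP, multiSupp_eq, marg d N p s z hkN, marg d N p t z hkN]
        have hD : ((N.descFactorial (∑ i, z i) : ℕ) : ℝ) ≠ 0 := by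
          simp only [Nat.cast_ne_zero]
          intro h
          rw [Nat.descFactorial_eq_zero_iff_lt] at h
          omega
        have hp0 : (∏ i, (p i) ^ (z i)) ≠ 0 :=
          Finset.prod_ne_zero_iff.mpr fun i _ => pow_ne_zero _ (hp i).ne'
        have hz0 : (∏ i, ((z i).factorial : ℝ)) ≠ 0 := by positivity
        have hPQ : (∏ i, (p i * s i) ^ z i) * (∏ i, (p i * t i) ^ z i)
            = (∏ i, (p i * s i * t i) ^ (z i)) * ∏ i, (p i) ^ (z i) := by
          rw [← Finset.prod_mul_distrib, ← Finset.prod_mul_distrib]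
          exact Finset.prod_congr rfl fun i _ => by ring
        rw [hA, mul_pow S T, div_mul_eq_mul_div, div_mul_eq_mul_div,
          div_eq_iff (mul_ne_zero hp0 (pow_ne_zero 2 hD))]
        linear_combination (C *
            ((N.descFactorial (∑ i, z i) : ℝ)) ^ 2 * S ^ (N - ∑ i, z i) * T ^ (N - ∑ i, z i)) * hPQ
    _ = ∑ k ∈ Finset.range (n + 1),
          ((N.choose k : ℝ) * ((N - k).choose (n - k) : ℝ) * (-1 : ℝ) ^ (n - k)) *
            (S * T) ^ (N - k) * U ^ k := by
        rw [← Finset.sum_fiberwise_of_maps_to (g := fun z : Fin d → ℕ => ∑ i, z i)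
          (t := Finset.range (n + 1)) (fun z hz => by
            simp only [hZ, Finset.mem_filter] at hz
            exact Finset.mem_range.mpr (Nat.lt_succ_of_le hz.2)) _]
        refine Finset.sum_congr rfl fun k hk => ?_
        have hkn : k ≤ n := Nat.lt_succ_iff.mp (Finset.mem_range.mp hk)
        have hfib : Z.filter (fun z => ∑ i, z i = k)
            = Finset.piAntidiag Finset.univ k := by
          ext z
          simp only [hZ, Finset.mem_filter, Finset.mem_Iic, Finset.mem_piAntidiag, Pi.le_def]
          constructor
          · rintro ⟨⟨-, -⟩, h⟩; exact ⟨h, fun i _ => Finset.mem_univ i⟩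
          · rintro ⟨h, -⟩
            refine ⟨⟨fun i => ?_, ?_⟩, h⟩
            · calc z i ≤ ∑ j, z j :=
                    Finset.single_le_sum (fun j _ => Nat.zero_le _) (Finset.mem_univ i)
                _ = k := h
                _ ≤ N := le_trans hkn hn
            · rw [h]; exact hkn
        rw [hfib]
        trans (∑ z ∈ Finset.piAntidiag Finset.univ k,
            (((N.choose k : ℝ) * ((N - k).choose (n - k) : ℝ) * (-1 : ℝ) ^ (n - k) *
              (S * T) ^ (N - k)) *
              (((k.factorial : ℝ) / ∏ i, ((z i).factorial : ℝ)) *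
                ∏ i, (p i * s i * t i) ^ (z i))))
        · refine Finset.sum_congr rfl fun z hz => ?_
          have hzk : ∑ i, z i = k := (Finset.mem_piAntidiag.mp hz).1
          rw [hzk]
          ring
        · rw [← Finset.mul_sum, genfun d k (fun i => p i * s i * t i)]
    _ = ∑ k ∈ Finset.range (n + 1),
          (N.choose n : ℝ) * (S * T) ^ (N - n) *
            (U ^ k * (-(S * T)) ^ (n - k) * (n.choose k : ℝ)) := by
        refine Finset.sum_congr rfl fun k hk => ?_
        have hkn : k ≤ n := Nat.lt_succ_iff.mp (Finset.mem_range.mp hk)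
        have hchoose : (N.choose n : ℝ) * (n.choose k : ℝ)
            = (N.choose k : ℝ) * ((N - k).choose (n - k) : ℝ) := by
          exact_mod_cast congrArg (Nat.cast (R := ℝ)) (Nat.choose_mul (n := N) hkn)
        have hpow : (S * T) ^ (N - k) = (S * T) ^ (N - n) * (S * T) ^ (n - k) := by
          rw [← pow_add]; congr 1; omega
        have hneg : (-(S * T)) ^ (n - k) = (-1 : ℝ) ^ (n - k) * (S * T) ^ (n - k) := neg_pow _ _
        rw [hpow, hneg]
        linear_combination (-((-1 : ℝ) ^ (n - k) * (S * T) ^ (N - n) * (S * T) ^ (n - k) * U ^ k))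
          * hchoose
    _ = (N.choose n : ℝ) * (S * T) ^ (N - n) * (U - S * T) ^ n := by
        rw [← Finset.mul_sum, sub_eq_add_neg, add_pow]
end

section
/- Let σ : {1,…,d} → {1,…,d′} be a surjection with 2 ≤ d′ < d, and define the grouped probability vector p′ ∈ (0,1)^{d′} by p′_k = Σ_{j: σ(j)=k} p_j and, for x ∈ ℕ^d, the grouped vector x^σ ∈ ℕ^{d′} by (x^σ)_k = Σ_{j: σ(j)=k} x_j. Then for all a, b ∈ ℕ^{d′} with |a| = |b| = N and every 0 ≤ n ≤ N, Σ_{x,y∈ℕ^d: |x|=|y|=N, x^σ = a, y^σ = b} m(x;N,p) m(y;N,p) Q_n(x,y;N,p) = m(a;N,p′) m(b;N,p′) Q_n(a,b;N,p′); that is, the conditional expectation of Q_n(X,Y;N,p) given the grouped counts equals the reproducing kernel polynomial of the grouped multinomial. -/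
open Finset

/-- grouped counts -/
def grp {d d' : ℕ} (σ : Fin d → Fin d') (x : Fin d → ℕ) : Fin d' → ℕ :=
  fun k => ∑ j ∈ Finset.univ.filter (fun j => σ j = k), x j

lemma grp_sum {d d' : ℕ} (σ : Fin d → Fin d') (x : Fin d → ℕ) :
    ∑ k, grp σ x k = ∑ j, x j := by
  simpa [grp] using Finset.sum_fiberwise univ σ x

/-- single-group multinomial theorem in the form of exponential coefficients -/
lemma pow_div_factorial_eq {m : ℕ} (t : Finset (Fin m)) (q : Fin m → ℝ) (c : ℕ) :
    (∑ j ∈ t, q j) ^ c / (c.factorial : ℝ)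
      = ∑ g ∈ Finset.piAntidiag t c, ∏ j ∈ t, q j ^ g j / ((g j).factorial : ℝ) := by
  rw [Finset.sum_pow_eq_sum_piAntidiag, Finset.sum_div]
  refine Finset.sum_congr rfl fun g hg => ?_
  rw [Finset.mem_piAntidiag] at hg
  have hspec := Nat.multinomial_spec t g
  rw [hg.1] at hspec
  have hprod : (0:ℝ) < ∏ j ∈ t, ((g j).factorial : ℝ) := by
    apply Finset.prod_pos; intro j _; exact_mod_cast (g j).factorial_pos
  have hcast := congrArg (Nat.cast : ℕ → ℝ) hspec
  push_cast at hcast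
  rw [Finset.prod_div_distrib, div_eq_div_iff (by exact_mod_cast c.factorial_ne_zero)
    (ne_of_gt hprod), ← hcast]
  ring

/-- Key fiber-factorization lemma. -/
lemma lemG {d d' : ℕ} (σ : Fin d → Fin d') (M : ℕ) (q : Fin d → ℝ) (c : Fin d' → ℕ)
    (hc : ∀ k, c k ≤ M) :
    ∑ w ∈ (Finset.Iic (fun _ : Fin d => M)).filter (fun w => grp σ w = c),
      ∏ j, q j ^ w j / ((w j).factorial : ℝ)
    = ∏ k, (∑ j ∈ Finset.univ.filter (fun j => σ j = k), q j) ^ c k / ((c k).factorial : ℝ) := by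
  have hr : ∀ k, (∑ j ∈ Finset.univ.filter (fun j => σ j = k), q j) ^ c k / ((c k).factorial : ℝ)
      = ∑ g ∈ Finset.piAntidiag (Finset.univ.filter (fun j => σ j = k)) (c k),
          ∏ j ∈ Finset.univ.filter (fun j => σ j = k), q j ^ g j / ((g j).factorial : ℝ) :=
    fun k => pow_div_factorial_eq _ q (c k)
  simp_rw [hr]
  rw [Finset.prod_univ_sum]
  symm
  refine Finset.sum_nbij' (fun G => fun j => G (σ j) j)
    (fun w => fun k j => if σ j = k then w j else 0) ?_ ?_ ?_ ?_ ?_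
  · intro G hG
    rw [Fintype.mem_piFinset] at hG
    have hGk : ∀ k, (∑ j ∈ Finset.univ.filter (fun j => σ j = k), G k j = c k)
        ∧ ∀ j, G k j ≠ 0 → σ j = k := by
      intro k
      have := hG k
      rw [Finset.mem_piAntidiag] at this
      exact ⟨this.1, fun j hj => by simpa using this.2 j hj⟩
    rw [Finset.mem_filter, Finset.mem_Iic]
    constructor
    · intro j
      calc G (σ j) j ≤ ∑ i ∈ Finset.univ.filter (fun i => σ i = σ j), G (σ j) i :=
            Finset.single_le_sum (fun i _ => Nat.zero_le _) (by simp)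
        _ = c (σ j) := (hGk (σ j)).1
        _ ≤ M := hc _
    · funext k
      rw [grp]
      rw [← (hGk k).1]
      refine Finset.sum_congr rfl fun j hj => ?_
      rw [Finset.mem_filter] at hj
      rw [hj.2]
  · intro w hw
    rw [Finset.mem_filter, Finset.mem_Iic] at hw
    rw [Fintype.mem_piFinset]
    intro k
    rw [Finset.mem_piAntidiag]
    constructor
    · rw [← hw.2]
      rw [grp]
      refine Finset.sum_congr rfl fun j hj => ?_
      rw [Finset.mem_filter] at hj
      rw [if_pos hj.2]
    · intro j hj
      simp only [ne_eq, ite_eq_right_iff, not_forall] at hj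
      simp [hj.1]
  · intro G hG
    rw [Fintype.mem_piFinset] at hG
    funext k j
    dsimp only
    by_cases h : σ j = k
    · subst h; simp
    · rw [if_neg h]
      have := (Finset.mem_piAntidiag.1 (hG k)).2 j
      by_contra hne
      have := this (Ne.symm hne)
      rw [Finset.mem_filter] at this
      exact h this.2
  · intro w hw
    funext j
    simp
  · intro G hG
    rw [← Finset.prod_fiberwise univ σ (fun j => q j ^ (G (σ j) j) / ((G (σ j) j).factorial : ℝ))]
    refine Finset.prod_congr rfl fun k _ => ?_
    refine Finset.prod_congr rfl fun j hj => ?_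
    rw [Finset.mem_filter] at hj
    rw [hj.2]

lemma multiSupp_filter_grp {d d' N : ℕ} (σ : Fin d → Fin d') (a : Fin d' → ℕ)
    (ha : ∑ k, a k = N) :
    (multiSupp d N).filter (fun x => grp σ x = a)
      = (Finset.Iic (fun _ : Fin d => N)).filter (fun x => grp σ x = a) := by
  unfold multiSupp
  rw [Finset.filter_filter]
  refine Finset.filter_congr fun x hx => ?_
  constructor
  · exact fun h => h.2
  · intro h
    refine ⟨?_, h⟩
    rw [← grp_sum σ x, h, ha]

lemma factorial_cast_pos (m : ℕ) : (0:ℝ) < (m.factorial : ℝ) := by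
  exact_mod_cast m.factorial_pos

lemma perj (p : ℝ) (x z : ℕ) (hzx : z ≤ x) :
    p ^ x * (x.descFactorial z : ℝ) / (x.factorial : ℝ)
      = p ^ z * (p ^ (x - z) / ((x - z).factorial : ℝ)) := by
  have hf : (((x - z).factorial : ℕ) : ℝ) * (x.descFactorial z : ℝ) = (x.factorial : ℝ) := by
    exact_mod_cast Nat.factorial_mul_descFactorial hzx
  have hp : p ^ x = p ^ z * p ^ (x - z) := by
    rw [← pow_add]; congr 1; omega
  rw [hp, div_eq_iff (factorial_cast_pos x).ne', ← hf]
  field_simp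

lemma lemB0 {d d' N : ℕ} (σ : Fin d → Fin d') (p : Fin d → ℝ) (a : Fin d' → ℕ)
    (z : Fin d → ℕ) (hz : ¬ ∀ k, grp σ z k ≤ a k) :
    ∑ x ∈ (multiSupp d N).filter (fun x => grp σ x = a),
      mProb d N p x * ∏ j, ((x j).descFactorial (z j) : ℝ) = 0 := by
  refine Finset.sum_eq_zero fun x hx => ?_
  rw [Finset.mem_filter] at hx
  push_neg at hz
  obtain ⟨k, hk⟩ := hz
  have hex : ∃ j ∈ Finset.univ.filter (fun j => σ j = k), x j < z j := by
    by_contra hcon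
    push_neg at hcon
    have : grp σ z k ≤ grp σ x k := Finset.sum_le_sum fun j hj => hcon j hj
    rw [hx.2] at this
    omega
  obtain ⟨j, _, hj⟩ := hex
  have : ((x j).descFactorial (z j) : ℝ) = 0 := by
    rw [Nat.descFactorial_eq_zero_iff_lt.2 hj, Nat.cast_zero]
  rw [Finset.prod_eq_zero (Finset.mem_univ j) this, mul_zero]

lemma lemB {d d' N : ℕ} (σ : Fin d → Fin d') (p : Fin d → ℝ) (a : Fin d' → ℕ)
    (ha : ∑ k, a k = N) (z : Fin d → ℕ) (hz : ∀ k, grp σ z k ≤ a k) :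
    ∑ x ∈ (multiSupp d N).filter (fun x => grp σ x = a),
      mProb d N p x * ∏ j, ((x j).descFactorial (z j) : ℝ)
    = (N.factorial : ℝ) * (∏ j, p j ^ z j) *
      ∏ k, (∑ j ∈ Finset.univ.filter (fun j => σ j = k), p j) ^ (a k - grp σ z k) /
        ((a k - grp σ z k).factorial : ℝ) := by
  classical
  rw [multiSupp_filter_grp σ a ha]
  rw [← Finset.sum_filter_of_ne (p := fun x => ∀ j, z j ≤ x j)
    (fun x _ hfx => ?_)]
  swap
  · by_contra hcon
    obtain ⟨j, hj⟩ := not_forall.mp hcon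
    rw [Nat.not_le] at hj
    have hdf : ((x j).descFactorial (z j) : ℝ) = 0 := by
      rw [Nat.descFactorial_eq_zero_iff_lt.2 hj, Nat.cast_zero]
    exact hfx (by rw [Finset.prod_eq_zero (Finset.mem_univ j) hdf, mul_zero])
  have hgoal :
      ∑ x ∈ ((Finset.Iic (fun _ : Fin d => N)).filter (fun x => grp σ x = a)).filter
          (fun x => ∀ j, z j ≤ x j),
        mProb d N p x * ∏ j, ((x j).descFactorial (z j) : ℝ)
      = ∑ w ∈ (Finset.Iic (fun _ : Fin d => N)).filter
          (fun w => grp σ w = fun k => a k - grp σ z k),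
        (N.factorial : ℝ) * (∏ j, p j ^ z j) * ∏ j, p j ^ w j / ((w j).factorial : ℝ) := by
    refine Finset.sum_nbij' (fun x => fun j => x j - z j) (fun w => fun j => w j + z j)
      ?_ ?_ ?_ ?_ ?_
    · intro x hx
      simp only [Finset.mem_filter, Finset.mem_Iic] at hx ⊢
      obtain ⟨⟨hxN, hxa⟩, hzx⟩ := hx
      constructor
      · intro j
        exact le_trans (Nat.sub_le _ _) (hxN j)
      · funext k
        rw [grp, grp, ← hxa]
        rw [Finset.sum_tsub_distrib _ (fun j hj => hzx j)]
        rfl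
    · intro w hw
      simp only [Finset.mem_filter, Finset.mem_Iic] at hw ⊢
      obtain ⟨hwN, hwc⟩ := hw
      have hgrpadd : ∀ k, grp σ (fun j => w j + z j) k = a k := by
        intro k
        rw [grp, Finset.sum_add_distrib]
        have h1 : ∑ j ∈ Finset.univ.filter (fun j => σ j = k), w j = a k - grp σ z k := by
          have := congrFun hwc k
          exact this
        rw [h1]
        have h2 : grp σ z k = ∑ j ∈ Finset.univ.filter (fun j => σ j = k), z j := rfl
        have h3 := hz k
        omega
      have hsum : ∑ j, (w j + z j) = N := by
        rw [← grp_sum σ (fun j => w j + z j)]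
        rw [← ha]
        exact Finset.sum_congr rfl fun k _ => hgrpadd k
      refine ⟨⟨?_, ?_⟩, ?_⟩
      · intro j
        calc w j + z j ≤ ∑ i, (w i + z i) :=
              Finset.single_le_sum (f := fun i => w i + z i) (fun i _ => Nat.zero_le _)
                (Finset.mem_univ j)
          _ = N := hsum
      · funext k; exact hgrpadd k
      · intro j; omega
    · intro x hx
      simp only [Finset.mem_filter] at hx
      funext j
      show x j - z j + z j = x j
      have := hx.2 j
      omega
    · intro w _
      funext j
      show w j + z j - z j = w j
      omega
    · intro x hx
      simp only [Finset.mem_filter, Finset.mem_Iic] at hx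
      have hzx := hx.2
      rw [mProb]
      have step : ((N.factorial : ℝ) / ∏ i, ((x i).factorial : ℝ)) * (∏ i, p i ^ x i) *
          ∏ j, ((x j).descFactorial (z j) : ℝ)
          = (N.factorial : ℝ) *
            ∏ j, (p j ^ x j * ((x j).descFactorial (z j) : ℝ) / ((x j).factorial : ℝ)) := by
        rw [Finset.prod_div_distrib, Finset.prod_mul_distrib]
        ring
      rw [step]
      have step2 : ∀ j : Fin d,
          p j ^ x j * ((x j).descFactorial (z j) : ℝ) / ((x j).factorial : ℝ)
          = p j ^ z j * (p j ^ (x j - z j) / ((x j - z j).factorial : ℝ)) :=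
        fun j => perj (p j) (x j) (z j) (hzx j)
      rw [Finset.prod_congr rfl fun j _ => step2 j, Finset.prod_mul_distrib]
      ring
  rw [hgoal, ← Finset.mul_sum]
  congr 1
  refine lemG σ N p (fun k => a k - grp σ z k) fun k => ?_
  show a k - grp σ z k ≤ N
  have : a k ≤ N := by
    rw [← ha]
    exact Finset.single_le_sum (fun i _ => Nat.zero_le _) (Finset.mem_univ k)
  omega

lemma kernelQ_ext {d : ℕ} (N n : ℕ) (p : Fin d → ℝ) (x y : Fin d → ℕ) :
    kernelQ d N p n x y
      = ∑ z ∈ (Finset.Iic (fun _ : Fin d => n)).filter (fun z => ∑ i, z i ≤ n),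
        (N.choose (∑ i, z i) : ℝ) * ((N - ∑ i, z i).choose (n - ∑ i, z i) : ℝ) *
          (-1 : ℝ) ^ (n - ∑ i, z i) *
          (((∑ i, z i).factorial : ℝ) / ∏ i, ((z i).factorial : ℝ)) *
          (∏ i, ((x i).descFactorial (z i) : ℝ) * ((y i).descFactorial (z i) : ℝ) / (p i) ^ (z i)) /
          ((N.descFactorial (∑ i, z i) : ℝ)) ^ 2 := by
  rw [kernelQ]
  apply Finset.sum_subset
  · intro z hz
    rw [Finset.mem_filter, Finset.mem_Iic] at hz ⊢
    refine ⟨fun j => le_trans ?_ hz.2, hz.2⟩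
    exact Finset.single_le_sum (fun i _ => Nat.zero_le _) (Finset.mem_univ j)
  · intro z hz hnz
    rw [Finset.mem_filter, Finset.mem_Iic] at hz hnz
    have hxy : ¬ z ≤ x ⊓ y := fun h => hnz ⟨h, hz.2⟩
    rw [Pi.le_def] at hxy
    push_neg at hxy
    obtain ⟨j, hj⟩ := hxy
    rw [Pi.inf_apply, inf_lt_iff] at hj
    have hfac : ((x j).descFactorial (z j) : ℝ) * ((y j).descFactorial (z j) : ℝ) / p j ^ z j
        = 0 := by
      rcases hj with hj | hj
      · rw [Nat.descFactorial_eq_zero_iff_lt.2 hj, Nat.cast_zero, zero_mul, zero_div]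
      · rw [Nat.descFactorial_eq_zero_iff_lt.2 hj, Nat.cast_zero, mul_zero, zero_div]
    have hzero : (∏ i, ((x i).descFactorial (z i) : ℝ) * ((y i).descFactorial (z i) : ℝ)
        / p i ^ z i) = 0 := Finset.prod_eq_zero (Finset.mem_univ j) hfac
    rw [hzero, mul_zero, zero_div]

lemma mProb_eq {d N : ℕ} (p : Fin d → ℝ) (x : Fin d → ℕ) :
    mProb d N p x = (N.factorial : ℝ) * ∏ j, (p j ^ x j / ((x j).factorial : ℝ)) := by
  rw [mProb, Finset.prod_div_distrib]
  ring

lemma perk (q : ℝ) (hq : q ≠ 0) (α β γ : ℕ) (hα : γ ≤ α) (hβ : γ ≤ β) :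
    (q ^ (α - γ) / ((α - γ).factorial : ℝ)) * (q ^ (β - γ) / ((β - γ).factorial : ℝ)) *
      (q ^ γ / (γ.factorial : ℝ))
    = (q ^ α / (α.factorial : ℝ)) * (q ^ β / (β.factorial : ℝ)) *
      ((α.descFactorial γ : ℝ) * (β.descFactorial γ : ℝ) / q ^ γ) * ((γ.factorial : ℝ))⁻¹ := by
  have fa : (((α - γ).factorial : ℕ) : ℝ) * (α.descFactorial γ : ℝ) = (α.factorial : ℝ) := by
    exact_mod_cast Nat.factorial_mul_descFactorial hα
  have fb : (((β - γ).factorial : ℕ) : ℝ) * (β.descFactorial γ : ℝ) = (β.factorial : ℝ) := by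
    exact_mod_cast Nat.factorial_mul_descFactorial hβ
  have ea : q ^ α = q ^ (α - γ) * q ^ γ := by rw [← pow_add]; congr 1; omega
  have eb : q ^ β = q ^ (β - γ) * q ^ γ := by rw [← pow_add]; congr 1; omega
  rw [ea, eb, ← fa, ← fb]
  have h1 := (factorial_cast_pos (α - γ)).ne'
  have h2 := (factorial_cast_pos (β - γ)).ne'
  have h3 := (factorial_cast_pos γ).ne'
  have h4 : ((α.descFactorial γ : ℝ)) ≠ 0 := by
    intro hc
    have hc' : α.descFactorial γ = 0 := by exact_mod_cast hc
    rw [Nat.descFactorial_eq_zero_iff_lt] at hc'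
    omega
  have h5 : ((β.descFactorial γ : ℝ)) ≠ 0 := by
    intro hc
    have hc' : β.descFactorial γ = 0 := by exact_mod_cast hc
    rw [Nat.descFactorial_eq_zero_iff_lt] at hc'
    omega
  field_simp

lemma final_alg {d' : ℕ} (N : ℕ) (p' : Fin d' → ℝ) (hp'pos : ∀ k, 0 < p' k)
    (a b s : Fin d' → ℕ) (hsa : ∀ k, s k ≤ a k) (hsb : ∀ k, s k ≤ b k) :
    (N.factorial : ℝ) * (N.factorial : ℝ) *
      (∏ k, p' k ^ (a k - s k) / ((a k - s k).factorial : ℝ)) *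
      (∏ k, p' k ^ (b k - s k) / ((b k - s k).factorial : ℝ)) *
      (∏ k, p' k ^ s k / ((s k).factorial : ℝ))
    = mProb d' N p' a * mProb d' N p' b * (∏ k, ((s k).factorial : ℝ))⁻¹ *
      ∏ k, ((a k).descFactorial (s k) : ℝ) * ((b k).descFactorial (s k) : ℝ) / p' k ^ s k := by
  rw [mProb_eq, mProb_eq]
  calc (N.factorial : ℝ) * (N.factorial : ℝ) *
      (∏ k, p' k ^ (a k - s k) / ((a k - s k).factorial : ℝ)) *
      (∏ k, p' k ^ (b k - s k) / ((b k - s k).factorial : ℝ)) *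
      (∏ k, p' k ^ s k / ((s k).factorial : ℝ))
      = (N.factorial : ℝ) * (N.factorial : ℝ) *
        ∏ k, (p' k ^ (a k - s k) / ((a k - s k).factorial : ℝ) *
          (p' k ^ (b k - s k) / ((b k - s k).factorial : ℝ)) * (p' k ^ s k / ((s k).factorial : ℝ))) := by
        rw [Finset.prod_mul_distrib, Finset.prod_mul_distrib]; ring
    _ = (N.factorial : ℝ) * (N.factorial : ℝ) *
        ∏ k, (p' k ^ a k / ((a k).factorial : ℝ) * (p' k ^ b k / ((b k).factorial : ℝ)) *
          ((a k).descFactorial (s k) * ((b k).descFactorial (s k)) / p' k ^ s k) *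
          (((s k).factorial : ℝ))⁻¹) := by
        refine congrArg _ (Finset.prod_congr rfl fun k _ => ?_)
        exact perk (p' k) (hp'pos k).ne' (a k) (b k) (s k) (hsa k) (hsb k)
    _ = (N.factorial : ℝ) * (∏ k, p' k ^ a k / ((a k).factorial : ℝ)) *
        ((N.factorial : ℝ) * ∏ k, p' k ^ b k / ((b k).factorial : ℝ)) *
        (∏ k, ((s k).factorial : ℝ))⁻¹ *
        ∏ k, ((a k).descFactorial (s k) : ℝ) * ((b k).descFactorial (s k) : ℝ) / p' k ^ s k := by
        rw [Finset.prod_mul_distrib, Finset.prod_mul_distrib, Finset.prod_mul_distrib,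
          Finset.prod_inv_distrib]
        ring


/-- Grouping variables: the conditional expectation of `Q_n(X,Y;N,p)` given the grouped counts
equals the reproducing kernel polynomial of the grouped multinomial. -/
theorem kernelQ_grouping (d d' : ℕ) (hd' : 2 ≤ d') (hdd : d' < d)
    (p : Fin d → ℝ) (hp : ∀ j, 0 < p j) (hsum : ∑ j, p j = 1)
    (N : ℕ) (hN : 0 < N) (σ : Fin d → Fin d') (hσ : Function.Surjective σ)
    (p' : Fin d' → ℝ) (hp' : ∀ k, p' k = ∑ j ∈ Finset.univ.filter (fun j => σ j = k), p j)
    (a b : Fin d' → ℕ) (ha : ∑ k, a k = N) (hb : ∑ k, b k = N)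
    (n : ℕ) (hn : n ≤ N) :
    ∑ x ∈ (multiSupp d N).filter
        (fun x => (fun k => ∑ j ∈ Finset.univ.filter (fun j => σ j = k), x j) = a),
      ∑ y ∈ (multiSupp d N).filter
        (fun y => (fun k => ∑ j ∈ Finset.univ.filter (fun j => σ j = k), y j) = b),
        mProb d N p x * mProb d N p y * kernelQ d N p n x y
      = mProb d' N p' a * mProb d' N p' b * kernelQ d' N p' n a b := by
  classical
  have hp'pos : ∀ k, 0 < p' k := by
    intro k
    rw [hp' k]
    obtain ⟨j, hj⟩ := hσ k
    exact Finset.sum_pos (fun i _ => hp i) ⟨j, Finset.mem_filter.2 ⟨Finset.mem_univ j, hj⟩⟩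
  have hseta : (multiSupp d N).filter
      (fun x => (fun k => ∑ j ∈ Finset.univ.filter (fun j => σ j = k), x j) = a)
      = (multiSupp d N).filter (fun x => grp σ x = a) := by
    ext x; simp only [Finset.mem_filter]; exact and_congr_right fun _ => Iff.rfl
  have hsetb : (multiSupp d N).filter
      (fun y => (fun k => ∑ j ∈ Finset.univ.filter (fun j => σ j = k), y j) = b)
      = (multiSupp d N).filter (fun y => grp σ y = b) := by
    ext y; simp only [Finset.mem_filter]; exact and_congr_right fun _ => Iff.rfl
  rw [hseta]
  simp only [hsetb]
  -- Step 1: expand kernelQ over the fixed index set and factor the summand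
  have hterm : ∀ z x y : Fin d → ℕ,
      mProb d N p x * mProb d N p y *
        ((N.choose (∑ i, z i) : ℝ) * ((N - ∑ i, z i).choose (n - ∑ i, z i) : ℝ) *
          (-1 : ℝ) ^ (n - ∑ i, z i) *
          (((∑ i, z i).factorial : ℝ) / ∏ i, ((z i).factorial : ℝ)) *
          (∏ i, ((x i).descFactorial (z i) : ℝ) * ((y i).descFactorial (z i) : ℝ) / (p i) ^ (z i)) /
          ((N.descFactorial (∑ i, z i) : ℝ)) ^ 2)
      = ((N.choose (∑ i, z i) : ℝ) * ((N - ∑ i, z i).choose (n - ∑ i, z i) : ℝ) *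
          (-1 : ℝ) ^ (n - ∑ i, z i) *
          (((∑ i, z i).factorial : ℝ) / ∏ i, ((z i).factorial : ℝ)) *
          (∏ i, p i ^ z i)⁻¹ / ((N.descFactorial (∑ i, z i) : ℝ)) ^ 2) *
        ((mProb d N p x * ∏ i, ((x i).descFactorial (z i) : ℝ)) *
          (mProb d N p y * ∏ i, ((y i).descFactorial (z i) : ℝ))) := by
    intro z x y
    have hpp : (∏ i, ((x i).descFactorial (z i) : ℝ) * ((y i).descFactorial (z i) : ℝ)
        / (p i) ^ (z i))
        = (∏ i, ((x i).descFactorial (z i) : ℝ)) * (∏ i, ((y i).descFactorial (z i) : ℝ)) *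
          (∏ i, p i ^ z i)⁻¹ := by
      rw [Finset.prod_div_distrib, Finset.prod_mul_distrib, div_eq_mul_inv]
    rw [hpp]
    ring
  have swap1 : ∀ (S T U : Finset (Fin d → ℕ)) (f : (Fin d → ℕ) → (Fin d → ℕ) → (Fin d → ℕ) → ℝ),
      (∑ x ∈ S, ∑ y ∈ T, ∑ z ∈ U, f x y z) = ∑ z ∈ U, ∑ x ∈ S, ∑ y ∈ T, f x y z := by
    intro S T U f
    rw [show (∑ x ∈ S, ∑ y ∈ T, ∑ z ∈ U, f x y z)
        = ∑ x ∈ S, ∑ z ∈ U, ∑ y ∈ T, f x y z from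
      Finset.sum_congr rfl fun x _ => Finset.sum_comm]
    exact Finset.sum_comm
  have hfac2 : ∀ (U S T : Finset (Fin d → ℕ)) (C : (Fin d → ℕ) → ℝ)
      (A B : (Fin d → ℕ) → (Fin d → ℕ) → ℝ),
      ∑ z ∈ U, ∑ x ∈ S, ∑ y ∈ T, C z * (A z x * B z y)
        = ∑ z ∈ U, C z * ((∑ x ∈ S, A z x) * ∑ y ∈ T, B z y) := by
    intro U S T C A B
    refine Finset.sum_congr rfl fun z _ => ?_
    rw [Finset.sum_mul_sum, Finset.mul_sum]
    exact Finset.sum_congr rfl fun x _ => by rw [Finset.mul_sum]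
  simp only [kernelQ_ext]
  simp only [Finset.mul_sum]
  simp_rw [hterm]
  rw [swap1, hfac2]
  -- Step 4: group z by its fiber sums
  have hmaps : ∀ z ∈ (Finset.Iic (fun _ : Fin d => n)).filter (fun z => ∑ i, z i ≤ n),
      grp σ z ∈ (Finset.Iic (fun _ : Fin d' => n)).filter (fun s => ∑ i, s i ≤ n) := by
    intro z hz
    rw [Finset.mem_filter, Finset.mem_Iic] at hz ⊢
    have hsum' : ∑ k, grp σ z k = ∑ i, z i := grp_sum σ z
    constructor
    · intro k
      calc grp σ z k ≤ ∑ k', grp σ z k' :=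
            Finset.single_le_sum (fun i _ => Nat.zero_le _) (Finset.mem_univ k)
        _ = ∑ i, z i := hsum'
        _ ≤ n := hz.2
    · rw [hsum']; exact hz.2
  rw [← Finset.sum_fiberwise_of_maps_to hmaps]
  -- Step 6: compare the two sides fiber by fiber
  refine Finset.sum_congr rfl fun s hs => ?_
  rw [Finset.mem_filter, Finset.mem_Iic] at hs
  have hm : ∑ i, s i ≤ n := hs.2
  by_cases hsa : ∀ k, s k ≤ a k
  · by_cases hsb : ∀ k, s k ≤ b k
    · -- main case
      have hD : ((N.descFactorial (∑ i, s i)) : ℝ) ≠ 0 := by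
        intro hc
        have hc' : N.descFactorial (∑ i, s i) = 0 := by exact_mod_cast hc
        rw [Nat.descFactorial_eq_zero_iff_lt] at hc'
        omega
      -- rewrite each z-term using lemB
      have hstep : ∀ z ∈ ((Finset.Iic (fun _ : Fin d => n)).filter
          (fun z => ∑ i, z i ≤ n)).filter (fun z => grp σ z = s),
          ((N.choose (∑ i, z i) : ℝ) * ((N - ∑ i, z i).choose (n - ∑ i, z i) : ℝ) *
            (-1 : ℝ) ^ (n - ∑ i, z i) *
            (((∑ i, z i).factorial : ℝ) / ∏ i, ((z i).factorial : ℝ)) *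
            (∏ i, p i ^ z i)⁻¹ / ((N.descFactorial (∑ i, z i) : ℝ)) ^ 2) *
          ((∑ x ∈ (multiSupp d N).filter (fun x => grp σ x = a),
              mProb d N p x * ∏ i, ((x i).descFactorial (z i) : ℝ)) *
            (∑ y ∈ (multiSupp d N).filter (fun y => grp σ y = b),
              mProb d N p y * ∏ i, ((y i).descFactorial (z i) : ℝ)))
          = ((N.choose (∑ i, s i) : ℝ) * ((N - ∑ i, s i).choose (n - ∑ i, s i) : ℝ) *
              (-1 : ℝ) ^ (n - ∑ i, s i) * ((∑ i, s i).factorial : ℝ) *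
              (N.factorial : ℝ) * (N.factorial : ℝ) *
              (∏ k, p' k ^ (a k - s k) / ((a k - s k).factorial : ℝ)) *
              (∏ k, p' k ^ (b k - s k) / ((b k - s k).factorial : ℝ)) /
              ((N.descFactorial (∑ i, s i) : ℝ)) ^ 2) *
            ∏ i, (p i ^ z i / ((z i).factorial : ℝ)) := by
        intro z hz
        rw [Finset.mem_filter] at hz
        have hz1 : grp σ z = s := hz.2
        have hsz : ∑ i, z i = ∑ i, s i := by rw [← grp_sum σ z, hz1]
        have hza : ∀ k, grp σ z k ≤ a k := by rw [hz1]; exact hsa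
        have hzb : ∀ k, grp σ z k ≤ b k := by rw [hz1]; exact hsb
        have HA := lemB σ p a ha z hza
        have HB := lemB σ p b hb z hzb
        simp only [hz1] at HA HB
        simp only [← hp'] at HA HB
        rw [HA, HB, hsz, Finset.prod_div_distrib]
        have hpz : (∏ i, p i ^ z i) ≠ 0 :=
          (Finset.prod_pos fun i _ => pow_pos (hp i) _).ne'
        have hzf : (∏ i, ((z i).factorial : ℝ)) ≠ 0 :=
          (Finset.prod_pos fun i _ => factorial_cast_pos _).ne'
        simp only [div_eq_mul_inv, Finset.prod_mul_distrib, Finset.prod_inv_distrib]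
        field_simp
      rw [Finset.sum_congr rfl hstep, ← Finset.mul_sum]
      -- identify the remaining z-sum via lemG
      have hset : ((Finset.Iic (fun _ : Fin d => n)).filter
          (fun z => ∑ i, z i ≤ n)).filter (fun z => grp σ z = s)
          = (Finset.Iic (fun _ : Fin d => n)).filter (fun z => grp σ z = s) := by
        rw [Finset.filter_filter]
        refine Finset.filter_congr fun z _ => ?_
        constructor
        · exact fun h => h.2
        · intro h
          refine ⟨?_, h⟩
          rw [← grp_sum σ z, h]
          exact hm
      have hcs : ∀ k, s k ≤ n := fun k =>
        le_trans (Finset.single_le_sum (fun i _ => Nat.zero_le _) (Finset.mem_univ k)) hm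
      rw [hset, lemG σ n p s hcs]
      simp only [← hp']
      -- final algebraic identity
      have hfin := final_alg N p' hp'pos a b s hsa hsb
      linear_combination ((N.choose (∑ i, s i) : ℝ) *
        ((N - ∑ i, s i).choose (n - ∑ i, s i) : ℝ) * (-1 : ℝ) ^ (n - ∑ i, s i) *
        ((∑ i, s i).factorial : ℝ) / ((N.descFactorial (∑ i, s i) : ℝ)) ^ 2) * hfin
    · -- s exceeds b somewhere: both sides vanish
      push_neg at hsb
      obtain ⟨k, hk⟩ := hsb
      have hzero : (∏ k, ((a k).descFactorial (s k) : ℝ) * ((b k).descFactorial (s k) : ℝ)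
          / p' k ^ s k) = 0 := by
        refine Finset.prod_eq_zero (Finset.mem_univ k) ?_
        rw [Nat.descFactorial_eq_zero_iff_lt.2 hk, Nat.cast_zero, mul_zero, zero_div]
      rw [hzero, mul_zero, zero_div, mul_zero]
      refine Finset.sum_eq_zero fun z hz => ?_
      rw [Finset.mem_filter] at hz
      have hzb : ¬ ∀ k, grp σ z k ≤ b k := by
        rw [hz.2]; push_neg; exact ⟨k, hk⟩
      rw [lemB0 σ p b z hzb, mul_zero, mul_zero]
  · -- s exceeds a somewhere: both sides vanish
    push_neg at hsa
    obtain ⟨k, hk⟩ := hsa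
    have hzero : (∏ k, ((a k).descFactorial (s k) : ℝ) * ((b k).descFactorial (s k) : ℝ)
        / p' k ^ s k) = 0 := by
      refine Finset.prod_eq_zero (Finset.mem_univ k) ?_
      rw [Nat.descFactorial_eq_zero_iff_lt.2 hk, Nat.cast_zero, zero_mul, zero_div]
    rw [hzero, mul_zero, zero_div, mul_zero]
    refine Finset.sum_eq_zero fun z hz => ?_
    rw [Finset.mem_filter] at hz
    have hza : ¬ ∀ k, grp σ z k ≤ a k := by
      rw [hz.2]; push_neg; exact ⟨k, hk⟩
    rw [lemB0 σ p a z hza, zero_mul, mul_zero]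
end

section
/- For every j ∈ {1,…,d} and every integer 0 ≤ n ≤ N, Q_n(N e_j, N e_j; N, p) = C(N,n) (1/p_j − 1)^n, where N e_j ∈ ℕ^d is the vector whose j-th coordinate is N and whose other coordinates are 0. -/
open Finset

/-- Value of the reproducing kernel polynomial at `x = y = N e_j`:
`Q_n(N e_j, N e_j; N, p) = C(N,n) (1/p_j - 1)^n`. -/
theorem kernelQ_at_corner (d : ℕ) (hd : 2 ≤ d) (p : Fin d → ℝ)
    (hp : ∀ j, 0 < p j) (hsum : ∑ j, p j = 1) (N : ℕ) (hN : 0 < N)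
    (j : Fin d) (n : ℕ) (hn : n ≤ N) :
    kernelQ d N p n (Pi.single j N) (Pi.single j N)
      = (N.choose n : ℝ) * (1 / p j - 1) ^ n := by
  have hset : (Finset.Iic ((Pi.single j N : Fin d → ℕ) ⊓ Pi.single j N)).filter
      (fun z => ∑ i, z i ≤ n) = (Finset.range (n+1)).image (Pi.single j) := by
    ext z
    simp only [Finset.mem_filter, Finset.mem_Iic, Finset.mem_image, Finset.mem_range,
      inf_idem, Nat.lt_succ_iff]
    constructor
    · rintro ⟨hle, hs⟩
      have hz : z = Pi.single j (z j) := by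
        funext i
        by_cases hij : i = j
        · subst hij; simp
        · have := hle i
          simp [Pi.single_apply, hij] at this ⊢
          omega
      refine ⟨z j, ?_, hz.symm⟩
      calc z j ≤ ∑ i, z i := Finset.single_le_sum (f := z) (fun i _ => Nat.zero_le _) (Finset.mem_univ j)
      _ ≤ n := hs
    · rintro ⟨k, hk, rfl⟩
      constructor
      · intro i
        by_cases hij : i = j
        · subst hij; simp; omega
        · simp [Pi.single_apply, hij]
      · rw [Finset.sum_pi_single']
        simpa using hk
  unfold kernelQ
  rw [hset, Finset.sum_image (fun a _ b _ h => Pi.single_injective j h)]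
  have hsum' : ∀ k : ℕ, (∑ i, (Pi.single j k : Fin d → ℕ) i) = k := by
    intro k; rw [Finset.sum_pi_single']; simp
  have hterm : ∀ k ∈ Finset.range (n+1),
      (N.choose (∑ i, (Pi.single j k : Fin d → ℕ) i) : ℝ) *
        ((N - ∑ i, (Pi.single j k : Fin d → ℕ) i).choose (n - ∑ i, (Pi.single j k : Fin d → ℕ) i) : ℝ) *
        (-1 : ℝ) ^ (n - ∑ i, (Pi.single j k : Fin d → ℕ) i) *
        (((∑ i, (Pi.single j k : Fin d → ℕ) i).factorial : ℝ) / ∏ i, (((Pi.single j k : Fin d → ℕ) i).factorial : ℝ)) *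
        (∏ i, (((Pi.single j N : Fin d → ℕ) i).descFactorial ((Pi.single j k : Fin d → ℕ) i) : ℝ) *
          (((Pi.single j N : Fin d → ℕ) i).descFactorial ((Pi.single j k : Fin d → ℕ) i) : ℝ) / (p i) ^ ((Pi.single j k : Fin d → ℕ) i)) /
        ((N.descFactorial (∑ i, (Pi.single j k : Fin d → ℕ) i) : ℝ)) ^ 2
      = (N.choose n : ℝ) * ((-1:ℝ)^(k+n) * (1/p j)^k * (1:ℝ)^(n-k) * (n.choose k : ℝ)) := by
    intro k hk
    rw [Finset.mem_range, Nat.lt_succ_iff] at hk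
    rw [hsum']
    have hfac : (∏ i, (((Pi.single j k : Fin d → ℕ) i).factorial : ℝ)) = (k.factorial : ℝ) := by
      rw [Finset.prod_eq_single j]
      · simp
      · intro i _ hij; simp [Pi.single_apply, hij]
      · simp
    have hprod : (∏ i, (((Pi.single j N : Fin d → ℕ) i).descFactorial ((Pi.single j k : Fin d → ℕ) i) : ℝ) *
          (((Pi.single j N : Fin d → ℕ) i).descFactorial ((Pi.single j k : Fin d → ℕ) i) : ℝ) / (p i) ^ ((Pi.single j k : Fin d → ℕ) i))
        = (N.descFactorial k : ℝ)^2 / (p j)^k := by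
      rw [Finset.prod_eq_single j]
      · simp [sq]
      · intro i _ hij; simp [Pi.single_apply, hij]
      · simp
    rw [hfac, hprod]
    have hdne : (N.descFactorial k : ℝ) ≠ 0 := by
      have : N.descFactorial k ≠ 0 := by
        rw [Ne, Nat.descFactorial_eq_zero_iff_lt]; omega
      exact_mod_cast this
    have hfne : (k.factorial : ℝ) ≠ 0 := by exact_mod_cast k.factorial_pos.ne'
    have hchoose : (N.choose k : ℝ) * ((N-k).choose (n-k) : ℝ) = (N.choose n : ℝ) * (n.choose k : ℝ) := by
      have := Nat.choose_mul (n := N) (k := n) (s := k) hk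
      exact_mod_cast congrArg (Nat.cast : ℕ → ℝ) this.symm
    have hsign : (-1:ℝ)^(n-k) = (-1:ℝ)^(k+n) := by
      have h2 : k + n = (n - k) + 2*k := by omega
      rw [h2, pow_add, pow_mul]; simp
    have hpk : (p j)^k ≠ 0 := pow_ne_zero _ (hp j).ne'
    rw [hsign, one_pow, mul_one, div_self hfne, mul_one, mul_div_assoc, div_div,
      mul_comm ((p j)^k) (((N.descFactorial k : ℝ))^2), ← div_div,
      div_self (pow_ne_zero 2 hdne), div_pow, one_pow]
    field_simp
    linear_combination hchoose
  rw [Finset.sum_congr rfl hterm, ← Finset.mul_sum, sub_pow]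
end

section
/- For all x, y ∈ ℕ^d with |x| = |y| = N: Σ_{n=0}^N Q_n(x,y;N,p) = 0 if x ≠ y, and Σ_{n=0}^N Q_n(x,x;N,p) = 1/m(x;N,p); equivalently, m(y;N,p) Σ_{n=0}^N Q_n(x,y;N,p) equals the indicator that x = y. -/
open Finset

lemma alt_sum (M : ℕ) :
    ∑ k ∈ Finset.range (M + 1), ((M.choose k : ℝ) * (-1 : ℝ) ^ k)
      = if M = 0 then 1 else 0 := by
  have h := Int.alternating_sum_range_choose (n := M)
  have h2 : ((∑ i ∈ Finset.range (M + 1), (-1 : ℤ) ^ i * M.choose i : ℤ) : ℝ)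
      = ((if M = 0 then 1 else 0 : ℤ) : ℝ) := by rw [h]
  push_cast at h2
  rw [← h2]
  apply Finset.sum_congr rfl
  intro k _; ring

lemma eq_of_le_of_sum_eq {d : ℕ} {z x : Fin d → ℕ} (h : ∀ i, z i ≤ x i)
    (hs : ∑ i, z i = ∑ i, x i) : z = x := by
  funext i
  exact (Finset.sum_eq_sum_iff_of_le (fun i _ => h i)).mp hs i (Finset.mem_univ i)

lemma key (d N : ℕ) (p : Fin d → ℝ) (hp : ∀ j, 0 < p j)
    (x y : Fin d → ℕ) (hx : ∑ i, x i = N) (hy : ∑ i, y i = N) :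
    ∑ n ∈ Finset.range (N + 1), kernelQ d N p n x y
      = if x = y then 1 / mProb d N p x else 0 := by
  set G : (Fin d → ℕ) → ℝ := fun z =>
    (N.choose (∑ i, z i) : ℝ) *
      (((∑ i, z i).factorial : ℝ) / ∏ i, ((z i).factorial : ℝ)) *
      (∏ i, ((x i).descFactorial (z i) : ℝ) * ((y i).descFactorial (z i) : ℝ) / (p i) ^ (z i)) /
      ((N.descFactorial (∑ i, z i) : ℝ)) ^ 2 with hG
  have step1 : ∑ n ∈ Finset.range (N + 1), kernelQ d N p n x y
      = ∑ z ∈ Finset.Iic (x ⊓ y), (if N - ∑ i, z i = 0 then (1:ℝ) else 0) * G z := by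
    unfold kernelQ
    simp only [Finset.sum_filter]
    rw [Finset.sum_comm]
    apply Finset.sum_congr rfl
    intro z hz
    have hzle : ∀ i, z i ≤ x i := by
      intro i
      have := Finset.mem_Iic.mp hz
      exact le_trans (this i) inf_le_left
    have hszN : ∑ i, z i ≤ N := hx ▸ Finset.sum_le_sum (fun i _ => hzle i)
    set s := ∑ i, z i with hs
    -- inner sum over n
    have e1 : ∀ n, (if s ≤ n then
        (N.choose s : ℝ) * ((N - s).choose (n - s) : ℝ) * (-1:ℝ) ^ (n - s) *
          ((s.factorial : ℝ) / ∏ i, ((z i).factorial : ℝ)) *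
          (∏ i, ((x i).descFactorial (z i) : ℝ) * ((y i).descFactorial (z i) : ℝ) / (p i) ^ (z i)) /
          ((N.descFactorial s : ℝ)) ^ 2 else 0)
        = (if s ≤ n then ((N - s).choose (n - s) : ℝ) * (-1:ℝ) ^ (n - s) * G z else 0) := by
      intro n
      by_cases h : s ≤ n
      · simp only [h, if_true, hG]; ring
      · simp [h]
    simp only [e1]
    rw [Finset.range_eq_Ico, ← Finset.sum_Ico_consecutive _ (Nat.zero_le s)
      (by omega : s ≤ N + 1)]
    have e2 : ∑ n ∈ Finset.Ico 0 s,
        (if s ≤ n then ((N - s).choose (n - s) : ℝ) * (-1:ℝ) ^ (n - s) * G z else 0) = 0 := by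
      apply Finset.sum_eq_zero
      intro n hn
      rw [Finset.mem_Ico] at hn
      simp [Nat.not_le.mpr hn.2]
    rw [e2, zero_add, Finset.sum_Ico_eq_sum_range]
    have e3 : N + 1 - s = (N - s) + 1 := by omega
    rw [e3]
    have e4 : ∀ k ∈ Finset.range ((N - s) + 1),
        (if s ≤ s + k then ((N - s).choose (s + k - s) : ℝ) * (-1:ℝ) ^ (s + k - s) * G z else 0)
        = ((N - s).choose k : ℝ) * (-1:ℝ) ^ k * G z := by
      intro k _
      simp [Nat.add_sub_cancel_left]
    rw [Finset.sum_congr rfl e4, ← Finset.sum_mul]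
    rw [alt_sum]
  rw [step1]
  by_cases hxy : x = y
  · subst hxy
    rw [if_pos rfl, inf_idem]
    rw [Finset.sum_eq_single x]
    · rw [hx, Nat.sub_self, if_pos rfl, one_mul, hG]
      simp only [hx, Nat.choose_self, Nat.descFactorial_self, Nat.cast_one, one_mul]
      unfold mProb
      have hfact : (N.factorial : ℝ) ≠ 0 := Nat.cast_ne_zero.mpr (Nat.factorial_ne_zero N)
      have hprodf : (∏ i, ((x i).factorial : ℝ)) ≠ 0 :=
        Finset.prod_ne_zero_iff.mpr (fun i _ => Nat.cast_ne_zero.mpr (Nat.factorial_ne_zero _))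
      have hprodp : (∏ i, (p i) ^ (x i)) ≠ 0 :=
        Finset.prod_ne_zero_iff.mpr (fun i _ => pow_ne_zero _ (ne_of_gt (hp i)))
      have e5 : (∏ i, ((x i).factorial : ℝ) * ((x i).factorial : ℝ) / (p i) ^ (x i))
          = (∏ i, ((x i).factorial : ℝ)) * (∏ i, ((x i).factorial : ℝ)) / (∏ i, (p i) ^ (x i)) := by
        rw [← Finset.prod_mul_distrib, ← Finset.prod_div_distrib]
      rw [e5]
      field_simp
    · intro z hz hne
      have hzle : ∀ i, z i ≤ x i := fun i => Finset.mem_Iic.mp hz i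
      have : ∑ i, z i ≠ N := by
        intro h
        exact hne (eq_of_le_of_sum_eq hzle (h.trans hx.symm))
      have hszN : ∑ i, z i ≤ N := hx ▸ Finset.sum_le_sum (fun i _ => hzle i)
      rw [if_neg (by omega), zero_mul]
    · intro h
      exact absurd (Finset.mem_Iic.mpr le_rfl) h
  · rw [if_neg hxy]
    apply Finset.sum_eq_zero
    intro z hz
    have hzlex : ∀ i, z i ≤ x i := fun i => le_trans (Finset.mem_Iic.mp hz i) inf_le_left
    have hzley : ∀ i, z i ≤ y i := fun i => le_trans (Finset.mem_Iic.mp hz i) inf_le_right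
    have hszN : ∑ i, z i ≤ N := hx ▸ Finset.sum_le_sum (fun i _ => hzlex i)
    have : ∑ i, z i ≠ N := by
      intro h
      exact hxy ((eq_of_le_of_sum_eq hzlex (h.trans hx.symm)).symm.trans
        (eq_of_le_of_sum_eq hzley (h.trans hy.symm)))
    rw [if_neg (by omega), zero_mul]

/-- The full kernel `Σ_{n=0}^N Q_n(x,y;N,p)` is concentrated on the diagonal:
it vanishes off the diagonal, equals `1/m(x;N,p)` on the diagonal, and equivalently
`m(y;N,p) Σ_{n=0}^N Q_n(x,y;N,p)` is the indicator that `x = y`. -/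
theorem kernelQ_sum_diagonal (d : ℕ) (hd : 2 ≤ d) (p : Fin d → ℝ)
    (hp : ∀ j, 0 < p j) (hsum : ∑ j, p j = 1) (N : ℕ) (hN : 0 < N)
    (x y : Fin d → ℕ) (hx : ∑ i, x i = N) (hy : ∑ i, y i = N) :
    (x ≠ y → ∑ n ∈ Finset.range (N + 1), kernelQ d N p n x y = 0) ∧
    (∑ n ∈ Finset.range (N + 1), kernelQ d N p n x x = 1 / mProb d N p x) ∧
    (mProb d N p y * ∑ n ∈ Finset.range (N + 1), kernelQ d N p n x y
      = if x = y then 1 else 0) := by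
  have hm : ∀ w : Fin d → ℕ, mProb d N p w ≠ 0 := by
    intro w
    unfold mProb
    have hfact : (N.factorial : ℝ) ≠ 0 := Nat.cast_ne_zero.mpr (Nat.factorial_ne_zero N)
    have hprodf : (∏ i, ((w i).factorial : ℝ)) ≠ 0 :=
      Finset.prod_ne_zero_iff.mpr (fun i _ => Nat.cast_ne_zero.mpr (Nat.factorial_ne_zero _))
    have hprodp : (∏ i, (p i) ^ (w i)) ≠ 0 :=
      Finset.prod_ne_zero_iff.mpr (fun i _ => pow_ne_zero _ (ne_of_gt (hp i)))
    exact mul_ne_zero (div_ne_zero hfact hprodf) hprodp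
  refine ⟨fun hxy => ?_, ?_, ?_⟩
  · rw [key d N p hp x y hx hy, if_neg hxy]
  · rw [key d N p hp x x hx hx, if_pos rfl]
  · rw [key d N p hp x y hx hy]
    by_cases hxy : x = y
    · subst hxy
      rw [if_pos rfl, if_pos rfl, mul_one_div, div_self (hm x)]
    · rw [if_neg hxy, if_neg hxy, mul_zero]
end

section
/- For every μ ∈ (0,∞)^d, all x, y ∈ ℕ^d, and every real ρ, the series Σ_{n=1}^∞ ρ^n Q_n^P(x,y;μ) converges absolutely and 1 + Σ_{n=1}^∞ ρ^n Q_n^P(x,y;μ) = e^{|μ|ρ} Σ_{z∈ℕ^d: z ≤ x, z ≤ y} ρ^{|z|} (1−ρ)^{|x|+|y|−2|z|} ∏_{i=1}^d (x_i)_{[z_i]} (y_i)_{[z_i]} / (μ_i^{z_i} z_i!) (the Poisson kernel identity for the reproducing kernel polynomials on the product Poisson distribution). -/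
open Finset

/-- Poisson–Charlier polynomial `C_n(x;λ) = Σ_{k=0}^n C(n,k) (−1/λ)^k x_{[k]}`. -/
noncomputable def charlier (n x : ℕ) (lam : ℝ) : ℝ :=
  ∑ k ∈ Finset.range (n + 1), (n.choose k : ℝ) * (-1 / lam) ^ k * (x.descFactorial k : ℝ)

/-- Reproducing kernel polynomial `Q_n^P(x,y;μ)` on the product Poisson distribution. -/
noncomputable def kernelQP (d n : ℕ) (mu : Fin d → ℝ) (x y : Fin d → ℕ) : ℝ :=
  ∑ z ∈ (Finset.Iic (x ⊓ y)).filter (fun z => ∑ i, z i ≤ n),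
    ((∑ i, mu i) ^ (n - ∑ i, z i) / ((n - ∑ i, z i).factorial : ℝ)) *
      charlier (n - ∑ i, z i) ((∑ i, x i) + (∑ i, y i) - 2 * ∑ i, z i) (∑ i, mu i) *
      ∏ i, ((x i).descFactorial (z i) : ℝ) * ((y i).descFactorial (z i) : ℝ) /
        ((mu i) ^ (z i) * ((z i).factorial : ℝ))


private lemma hasSum_exp_real (u : ℝ) :
    HasSum (fun n : ℕ => u ^ n / (n.factorial : ℝ)) (Real.exp u) := by
  rw [Real.exp_eq_exp_ℝ]; exact NormedSpace.expSeries_div_hasSum_exp u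

private lemma hasSum_choose_aux (u : ℝ) (k : ℕ) :
    HasSum (fun j : ℕ => u ^ j / (j.factorial : ℝ) * (j.choose k : ℝ))
      (u ^ k / (k.factorial : ℝ) * Real.exp u) := by
  have h1 : HasSum (fun m : ℕ => u ^ (m + k) / ((m + k).factorial : ℝ) * ((m + k).choose k : ℝ))
      (u ^ k / (k.factorial : ℝ) * Real.exp u) := by
    have h := (hasSum_exp_real u).mul_left (u ^ k / (k.factorial : ℝ))
    have he : (fun m : ℕ => u ^ k / (k.factorial : ℝ) * (u ^ m / (m.factorial : ℝ)))
        = fun m : ℕ => u ^ (m + k) / ((m + k).factorial : ℝ) * ((m + k).choose k : ℝ) := by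
      funext m
      have hf : (((m + k).choose k : ℕ) : ℝ) * (k.factorial : ℝ) * (m.factorial : ℝ)
          = ((m + k).factorial : ℝ) := by
        have := Nat.choose_mul_factorial_mul_factorial (Nat.le_add_left k m)
        rw [Nat.add_sub_cancel] at this
        exact_mod_cast this
      have h1 : ((m + k).factorial : ℝ) ≠ 0 := Nat.cast_ne_zero.mpr (Nat.factorial_ne_zero _)
      have h2 : (k.factorial : ℝ) ≠ 0 := Nat.cast_ne_zero.mpr (Nat.factorial_ne_zero _)
      have h3 : (m.factorial : ℝ) ≠ 0 := Nat.cast_ne_zero.mpr (Nat.factorial_ne_zero _)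
      field_simp
      rw [← hf, pow_add]
      ring
    rw [he] at h
    exact h
  have h2 := (hasSum_nat_add_iff
      (f := fun j : ℕ => u ^ j / (j.factorial : ℝ) * (j.choose k : ℝ)) k).mp h1
  have hz : ∑ i ∈ Finset.range k, u ^ i / (i.factorial : ℝ) * (i.choose k : ℝ) = 0 :=
    Finset.sum_eq_zero fun i hi => by
      simp [Nat.choose_eq_zero_of_lt (Finset.mem_range.mp hi)]
  rwa [hz, add_zero] at h2

private lemma charlier_eq (j N : ℕ) (lam : ℝ) :
    charlier j N lam
      = ∑ k ∈ Finset.range (N + 1), (j.choose k : ℝ) * (-1 / lam) ^ k *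
          (N.descFactorial k : ℝ) := by
  have h1 : charlier j N lam = ∑ k ∈ Finset.range (j + N + 2),
      (j.choose k : ℝ) * (-1 / lam) ^ k * (N.descFactorial k : ℝ) := by
    rw [charlier]
    apply Finset.sum_subset
    · exact Finset.range_subset_range.mpr (by omega)
    · intro k hk hk'
      have : j < k := by
        simp only [Finset.mem_range] at hk'
        omega
      simp [Nat.choose_eq_zero_of_lt this]
  rw [h1]
  symm
  apply Finset.sum_subset
  · exact Finset.range_subset_range.mpr (by omega)
  · intro k hk hk'
    have : N < k := by
      simp only [Finset.mem_range] at hk'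
      omega
    simp [Nat.descFactorial_eq_zero_iff_lt.mpr this]

set_option maxHeartbeats 1000000 in
private lemma hasSum_charlier (u lam : ℝ) (N : ℕ) :
    HasSum (fun j : ℕ => u ^ j / (j.factorial : ℝ) * charlier j N lam)
      (Real.exp u * (1 + (-1 / lam) * u) ^ N) := by
  have key : ∀ j : ℕ, u ^ j / (j.factorial : ℝ) * charlier j N lam
      = ∑ k ∈ Finset.range (N + 1),
          ((-1 / lam) ^ k * (N.descFactorial k : ℝ)) *
            (u ^ j / (j.factorial : ℝ) * (j.choose k : ℝ)) := by
    intro j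
    rw [charlier_eq j N lam, Finset.mul_sum]
    exact Finset.sum_congr rfl fun k _ => by ring
  have h : HasSum (fun j : ℕ => ∑ k ∈ Finset.range (N + 1),
        ((-1 / lam) ^ k * (N.descFactorial k : ℝ)) *
          (u ^ j / (j.factorial : ℝ) * (j.choose k : ℝ)))
      (∑ k ∈ Finset.range (N + 1), ((-1 / lam) ^ k * (N.descFactorial k : ℝ)) *
        (u ^ k / (k.factorial : ℝ) * Real.exp u)) :=
    hasSum_sum fun k _ => (hasSum_choose_aux u k).mul_left _
  have htarget : ∑ k ∈ Finset.range (N + 1),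
      ((-1 / lam) ^ k * (N.descFactorial k : ℝ)) * (u ^ k / (k.factorial : ℝ) * Real.exp u)
      = Real.exp u * (1 + (-1 / lam) * u) ^ N := by
    rw [add_comm (1 : ℝ), add_pow, Finset.mul_sum]
    apply Finset.sum_congr rfl
    intro k hk
    rw [Nat.descFactorial_eq_factorial_mul_choose]
    have h2 : (k.factorial : ℝ) ≠ 0 := Nat.cast_ne_zero.mpr (Nat.factorial_ne_zero _)
    push_cast
    rw [mul_pow]
    field_simp [h2]
    ring
  rw [funext key]
  rwa [htarget] at h

private lemma hasSum_ifshift (ρ lam c : ℝ) (s N : ℕ) :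
    HasSum (fun n : ℕ => if s ≤ n then
        ρ ^ n * (lam ^ (n - s) / ((n - s).factorial : ℝ) * charlier (n - s) N lam * c) else 0)
      (ρ ^ s * c * (Real.exp (lam * ρ) * (1 + (-1 / lam) * (lam * ρ)) ^ N)) := by
  have h1 := (hasSum_charlier (lam * ρ) lam N).mul_left (ρ ^ s * c)
  have h2 : (fun j : ℕ => (ρ ^ s * c) *
        ((lam * ρ) ^ j / (j.factorial : ℝ) * charlier j N lam))
      = fun j : ℕ => if s ≤ j + s then
          ρ ^ (j + s) * (lam ^ ((j + s) - s) / (((j + s) - s).factorial : ℝ) *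
            charlier ((j + s) - s) N lam * c) else 0 := by
    funext j
    rw [if_pos (Nat.le_add_left s j), Nat.add_sub_cancel, mul_pow, pow_add]
    ring
  rw [h2] at h1
  have h3 := (hasSum_nat_add_iff (f := fun n : ℕ => if s ≤ n then
      ρ ^ n * (lam ^ (n - s) / ((n - s).factorial : ℝ) * charlier (n - s) N lam * c) else 0)
      s).mp h1
  have hz : ∑ i ∈ Finset.range s, (if s ≤ i then
      ρ ^ i * (lam ^ (i - s) / ((i - s).factorial : ℝ) * charlier (i - s) N lam * c) else 0)
      = 0 :=
    Finset.sum_eq_zero fun i hi => if_neg (by simp only [Finset.mem_range] at hi; omega)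
  rwa [hz, add_zero] at h3

private lemma hasSum_kernel (d : ℕ) (mu : Fin d → ℝ) (hmu : ∀ i, 0 < mu i)
    (x y : Fin d → ℕ) (ρ : ℝ) :
    HasSum (fun n : ℕ => ρ ^ n * kernelQP d n mu x y)
      (Real.exp ((∑ i, mu i) * ρ) *
        ∑ z ∈ Finset.Iic (x ⊓ y),
          ρ ^ (∑ i, z i) * (1 - ρ) ^ ((∑ i, x i) + (∑ i, y i) - 2 * ∑ i, z i) *
          ∏ i, ((x i).descFactorial (z i) : ℝ) * ((y i).descFactorial (z i) : ℝ) /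
            ((mu i) ^ (z i) * ((z i).factorial : ℝ))) := by
  classical
  set S : ℝ := ∑ i, mu i with hSdef
  have hker : ∀ n : ℕ, ρ ^ n * kernelQP d n mu x y
      = ∑ z ∈ Finset.Iic (x ⊓ y), (if (∑ i, z i) ≤ n then
          ρ ^ n * (S ^ (n - ∑ i, z i) / ((n - ∑ i, z i).factorial : ℝ) *
            charlier (n - ∑ i, z i) ((∑ i, x i) + (∑ i, y i) - 2 * ∑ i, z i) S *
            ∏ i, ((x i).descFactorial (z i) : ℝ) * ((y i).descFactorial (z i) : ℝ) /
              ((mu i) ^ (z i) * ((z i).factorial : ℝ))) else 0) := by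
    intro n
    rw [kernelQP, Finset.sum_filter, Finset.mul_sum]
    refine Finset.sum_congr rfl fun z _ => ?_
    rw [mul_ite, mul_zero]
  have hz : ∀ z ∈ Finset.Iic (x ⊓ y), HasSum (fun n : ℕ => if (∑ i, z i) ≤ n then
        ρ ^ n * (S ^ (n - ∑ i, z i) / ((n - ∑ i, z i).factorial : ℝ) *
          charlier (n - ∑ i, z i) ((∑ i, x i) + (∑ i, y i) - 2 * ∑ i, z i) S *
          ∏ i, ((x i).descFactorial (z i) : ℝ) * ((y i).descFactorial (z i) : ℝ) /
            ((mu i) ^ (z i) * ((z i).factorial : ℝ))) else 0)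
      (ρ ^ (∑ i, z i) *
        (∏ i, ((x i).descFactorial (z i) : ℝ) * ((y i).descFactorial (z i) : ℝ) /
          ((mu i) ^ (z i) * ((z i).factorial : ℝ))) *
        (Real.exp (S * ρ) *
          (1 + (-1 / S) * (S * ρ)) ^ ((∑ i, x i) + (∑ i, y i) - 2 * ∑ i, z i))) :=
    fun z _ => hasSum_ifshift ρ S _ (∑ i, z i) _
  have h := hasSum_sum hz
  rw [funext hker]
  convert h using 1
  rw [Finset.mul_sum]
  refine Finset.sum_congr rfl fun z hzm => ?_
  have hpow : (1 + (-1 / S) * (S * ρ)) ^ ((∑ i, x i) + (∑ i, y i) - 2 * ∑ i, z i)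
      = (1 - ρ) ^ ((∑ i, x i) + (∑ i, y i) - 2 * ∑ i, z i) := by
    rcases isEmpty_or_nonempty (Fin d) with hd | hd
    · simp
    · have hS0 : S ≠ 0 := (Finset.sum_pos (fun i _ => hmu i) Finset.univ_nonempty).ne'
      have hh : (-1 / S) * (S * ρ) = -ρ := by
        field_simp
      rw [hh, ← sub_eq_add_neg]
  rw [hpow]
  ring

private lemma kernelQP_zero (d : ℕ) (mu : Fin d → ℝ) (x y : Fin d → ℕ) :
    kernelQP d 0 mu x y = 1 := by
  classical
  have hfilter : (Finset.Iic (x ⊓ y)).filter (fun z => ∑ i, z i ≤ 0) = {0} := by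
    ext z
    simp only [Finset.mem_filter, Finset.mem_Iic, Finset.mem_singleton, Nat.le_zero,
      Finset.sum_eq_zero_iff, Finset.mem_univ, forall_true_left]
    constructor
    · rintro ⟨-, h⟩
      funext i
      exact h i
    · rintro rfl
      refine ⟨fun i => Nat.zero_le _, fun i => rfl⟩
  rw [kernelQP, hfilter, Finset.sum_singleton]
  simp [charlier]

/-- The Poisson kernel identity for the reproducing kernel polynomials on the
product Poisson distribution: the series converges absolutely and sums to the
stated closed form. -/
theorem poisson_kernel_product_poisson (d : ℕ) (mu : Fin d → ℝ) (hmu : ∀ i, 0 < mu i)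
    (x y : Fin d → ℕ) (ρ : ℝ) :
    Summable (fun n : ℕ => |ρ ^ (n + 1) * kernelQP d (n + 1) mu x y|) ∧
    1 + ∑' n : ℕ, ρ ^ (n + 1) * kernelQP d (n + 1) mu x y
      = Real.exp ((∑ i, mu i) * ρ) *
          ∑ z ∈ Finset.Iic (x ⊓ y),
            ρ ^ (∑ i, z i) * (1 - ρ) ^ ((∑ i, x i) + (∑ i, y i) - 2 * ∑ i, z i) *
            ∏ i, ((x i).descFactorial (z i) : ℝ) * ((y i).descFactorial (z i) : ℝ) /
              ((mu i) ^ (z i) * ((z i).factorial : ℝ)) := by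
  have h := hasSum_kernel d mu hmu x y ρ
  have hsum : Summable (fun n : ℕ => ρ ^ n * kernelQP d n mu x y) := h.summable
  refine ⟨summable_abs_iff.mpr ((summable_nat_add_iff
    (f := fun n : ℕ => ρ ^ n * kernelQP d n mu x y) 1).mpr hsum), ?_⟩
  have h0 : ρ ^ 0 * kernelQP d 0 mu x y = 1 := by
    rw [kernelQP_zero, pow_zero, mul_one]
  have ht := hsum.tsum_eq_zero_add
  rw [h0] at ht
  rw [← ht]
  exact h.tsum_eq
end

section
/- Let N be a positive integer and r, s ∈ (0,1). Then Σ_{n=0}^N C(N,n) (s/(1−s))^n Q_n(x;N,s) Q_n(y;N,s) Q_n(z;N,r) ≥ 0 for all x, y, z ∈ {0,1,…,N} if and only if 1−r ≤ min(s, 1−s). -/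
open Finset

/-- Univariate Krawtchouk polynomial `Q_n(x;N,s)`, normalized so `Q_n(0;N,s) = 1`. -/
noncomputable def kraw (N n x : ℕ) (s : ℝ) : ℝ :=
  ∑ ν ∈ Finset.range (n + 1),
    (-(1 - s) / s) ^ ν * (x.choose ν : ℝ) * ((N - x).choose (n - ν) : ℝ) / (N.choose n : ℝ)

section Aux
open Nat
lemma choose_pair_symm (M a b : ℕ) (ha : a ≤ M) (hb : b ≤ M) :
    M.choose a * (M - a).choose b = M.choose b * (M - b).choose a := by
  by_cases h : a + b ≤ M
  · have h1 := Nat.choose_mul (n := M) (k := a + b) (s := a) (Nat.le_add_right _ _)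
    have h2 := Nat.choose_mul (n := M) (k := a + b) (s := b) (Nat.le_add_left _ _)
    rw [Nat.add_sub_cancel_left] at h1
    rw [Nat.add_sub_cancel] at h2
    have hs : (a + b).choose a = (a + b).choose b := by
      rw [← Nat.choose_symm (Nat.le_add_left _ _), Nat.add_sub_cancel]
    rw [← h1, ← h2, hs]
  · push_neg at h
    have hz1 : (M - a).choose b = 0 := Nat.choose_eq_zero_of_lt (by omega)
    have hz2 : (M - b).choose a = 0 := Nat.choose_eq_zero_of_lt (by omega)
    rw [hz1, hz2, Nat.mul_zero, Nat.mul_zero]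

lemma choose_three_symm {N n k ν : ℕ} (hn : n ≤ N) (hk : k ≤ N) (hνn : ν ≤ n) (hνk : ν ≤ k) :
    N.choose k * (k.choose ν * (N - k).choose (n - ν))
      = N.choose n * (n.choose ν * (N - n).choose (k - ν)) := by
  have h1 := Nat.choose_mul (n := N) hνk
  have h2 := Nat.choose_mul (n := N) hνn
  have key := choose_pair_symm (N - ν) (k - ν) (n - ν) (by omega) (by omega)
  have e1 : N - ν - (k - ν) = N - k := by omega
  have e2 : N - ν - (n - ν) = N - n := by omega
  rw [e1, e2] at key
  calc N.choose k * (k.choose ν * (N - k).choose (n - ν))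
      = N.choose k * k.choose ν * (N - k).choose (n - ν) := by ring
    _ = N.choose ν * (N - ν).choose (k - ν) * (N - k).choose (n - ν) := by rw [h1]
    _ = N.choose ν * ((N - ν).choose (k - ν) * (N - k).choose (n - ν)) := by ring
    _ = N.choose ν * ((N - ν).choose (n - ν) * (N - n).choose (k - ν)) := by rw [key]
    _ = N.choose ν * (N - ν).choose (n - ν) * (N - n).choose (k - ν) := by ring
    _ = N.choose n * n.choose ν * (N - n).choose (k - ν) := by rw [h2]
    _ = _ := by ring

lemma card_filter_inter {N : ℕ} (A : Finset (Fin N)) (k ν : ℕ) (hνk : ν ≤ k) :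
    (((univ : Finset (Fin N)).powersetCard k).filter fun ω => (A ∩ ω).card = ν).card
      = A.card.choose ν * (N - A.card).choose (k - ν) := by
  have hcompl : (Aᶜ).card = N - A.card := by
    simp [Finset.card_compl]
  rw [← hcompl, ← Finset.card_powersetCard, ← Finset.card_powersetCard,
    ← Finset.card_product]
  apply Finset.card_bij' (fun ω _ => (A ∩ ω, ω \ A))
    (fun p _ => p.1 ∪ p.2)
  · rintro ω hω
    simp only [Finset.mem_filter, Finset.mem_powersetCard] at hω
    obtain ⟨⟨-, hcard⟩, hν⟩ := hω
    simp only [Finset.mem_product, Finset.mem_powersetCard]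
    refine ⟨⟨Finset.inter_subset_left, hν⟩, ?_, ?_⟩
    · intro i hi
      simp only [Finset.mem_sdiff] at hi
      simp [Finset.mem_compl, hi.2]
    · have := Finset.card_inter_add_card_sdiff ω A
      rw [Finset.inter_comm] at this
      omega
  · rintro ⟨B, C⟩ hp
    simp only [Finset.mem_product, Finset.mem_powersetCard] at hp
    obtain ⟨⟨hBA, hB⟩, hCA, hC⟩ := hp
    have hdisj : Disjoint B C := by
      refine Finset.disjoint_left.mpr fun i hiB hiC => ?_
      exact (Finset.mem_compl.mp (hCA hiC)) (hBA hiB)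
    simp only [Finset.mem_filter, Finset.mem_powersetCard]
    have hAC : A ∩ C = ∅ := by
      refine Finset.eq_empty_of_forall_notMem fun i hi => ?_
      rcases Finset.mem_inter.mp hi with ⟨h1, h2⟩
      exact (Finset.mem_compl.mp (hCA h2)) h1
    have hint : A ∩ (B ∪ C) = B := by
      rw [Finset.inter_union_distrib_left, hAC, Finset.union_empty,
        Finset.inter_eq_right.mpr hBA]
    refine ⟨⟨Finset.subset_univ _, ?_⟩, by rw [hint, hB]⟩
    rw [Finset.card_union_of_disjoint hdisj, hB, hC]
    omega
  · rintro ω hω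
    rw [Finset.inter_comm, Finset.union_comm]
    exact Finset.sdiff_union_inter ω A
  · rintro ⟨B, C⟩ hp
    simp only [Finset.mem_product, Finset.mem_powersetCard] at hp
    obtain ⟨⟨hBA, hB⟩, hCA, hC⟩ := hp
    have hAC : A ∩ C = ∅ := by
      refine Finset.eq_empty_of_forall_notMem fun i hi => ?_
      rcases Finset.mem_inter.mp hi with ⟨h1, h2⟩
      exact (Finset.mem_compl.mp (hCA h2)) h1
    have hint : A ∩ (B ∪ C) = B := by
      rw [Finset.inter_union_distrib_left, hAC, Finset.union_empty,
        Finset.inter_eq_right.mpr hBA]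
    have hsd : (B ∪ C) \ A = C := by
      rw [Finset.union_sdiff_distrib]
      have h1 : B \ A = ∅ := Finset.sdiff_eq_empty_iff_subset.mpr hBA
      have h2 : C \ A = C := by
        refine Finset.sdiff_eq_self_of_disjoint ?_
        refine Finset.disjoint_left.mpr fun i hiC hiA => ?_
        exact (Finset.mem_compl.mp (hCA hiC)) hiA
      rw [h1, h2, Finset.empty_union]
    rw [hint, hsd]

lemma sum_powersetCard_prod_ite {N : ℕ} (A : Finset (Fin N)) (k : ℕ) (t τ : ℝ) :
    ∑ ω ∈ (univ : Finset (Fin N)).powersetCard k, ∏ i ∈ A, (if i ∈ ω then t else τ)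
      = ∑ ν ∈ range (A.card + 1),
          ((((univ : Finset (Fin N)).powersetCard k).filter
              fun ω => (A ∩ ω).card = ν).card : ℝ) * (t ^ ν * τ ^ (A.card - ν)) := by
  have hmaps : ∀ ω ∈ (univ : Finset (Fin N)).powersetCard k,
      (A ∩ ω).card ∈ range (A.card + 1) := by
    intro ω _
    simp only [Finset.mem_range]
    exact Nat.lt_succ_of_le (Finset.card_le_card Finset.inter_subset_left)
  rw [← Finset.sum_fiberwise_of_maps_to hmaps]
  refine Finset.sum_congr rfl fun ν _ => ?_
  rw [Finset.sum_congr rfl (fun ω hω => ?_), Finset.sum_const, nsmul_eq_mul]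
  simp only [Finset.mem_filter] at hω
  have hprod : ∏ i ∈ A, (if i ∈ ω then t else τ)
      = t ^ (A ∩ ω).card * τ ^ (A \ ω).card := by
    rw [Finset.prod_ite, Finset.prod_const, Finset.prod_const]
    have h1 : A.filter (fun i => i ∈ ω) = A ∩ ω := Finset.filter_mem_eq_inter
    have h2 : A.filter (fun i => i ∉ ω) = A \ ω := by
      ext i; simp [Finset.mem_sdiff]
    rw [h1, h2]
  rw [hprod, hω.2]
  congr 2
  have := Finset.card_inter_add_card_sdiff A ω
  omega








lemma bracket_eq {N k : ℕ} (hk : k ≤ N) (A : Finset (Fin N)) (t τ : ℝ) :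
    (N.choose A.card : ℝ) *
        ∑ ω ∈ (univ : Finset (Fin N)).powersetCard k, ∏ i ∈ A, (if i ∈ ω then t else τ)
      = (N.choose k : ℝ) * ∑ ν ∈ range (A.card + 1),
          (k.choose ν : ℝ) * ((N - k).choose (A.card - ν) : ℝ) * (t ^ ν * τ ^ (A.card - ν)) := by
  rw [sum_powersetCard_prod_ite, Finset.mul_sum, Finset.mul_sum]
  refine Finset.sum_congr rfl fun ν hν => ?_
  have hn : A.card ≤ N := by
    simpa using Finset.card_le_card (Finset.subset_univ A)
  have hνn : ν ≤ A.card := Nat.lt_succ_iff.mp (Finset.mem_range.mp hν)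
  by_cases hνk : ν ≤ k
  · have hcount := card_filter_inter A k ν hνk
    have hnat := choose_three_symm hn hk hνn hνk
    rw [hcount]
    have hc : ((N.choose A.card : ℝ)) * ((A.card.choose ν : ℝ) * ((N - A.card).choose (k - ν) : ℝ))
        = (N.choose k : ℝ) * ((k.choose ν : ℝ) * ((N - k).choose (A.card - ν) : ℝ)) := by
      exact_mod_cast congrArg (Nat.cast (R := ℝ)) hnat.symm
    push_cast
    push_cast at hc
    linear_combination (t ^ ν * τ ^ (A.card - ν)) * hc
  · have hempty : (((univ : Finset (Fin N)).powersetCard k).filter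
        fun ω => (A ∩ ω).card = ν) = ∅ := by
      refine Finset.filter_false_of_mem fun ω hω => ?_
      have hcard : ω.card = k := (Finset.mem_powersetCard.mp hω).2
      have : (A ∩ ω).card ≤ k := hcard ▸ Finset.card_le_card Finset.inter_subset_right
      omega
    have hzero : k.choose ν = 0 := Nat.choose_eq_zero_of_lt (by omega)
    rw [hempty, hzero]
    simp

lemma sum_eq_kraw {N n k : ℕ} (hn : n ≤ N) (s' τ : ℝ) :
    ∑ ν ∈ range (n + 1),
        (k.choose ν : ℝ) * ((N - k).choose (n - ν) : ℝ) *
          ((-(1 - s') / s' * τ) ^ ν * τ ^ (n - ν))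
      = τ ^ n * ((N.choose n : ℝ) * kraw N n k s') := by
  rw [kraw, Finset.mul_sum, Finset.mul_sum]
  refine Finset.sum_congr rfl fun ν hν => ?_
  have hνn : ν ≤ n := Nat.lt_succ_iff.mp (Finset.mem_range.mp hν)
  have hτ : τ ^ ν * τ ^ (n - ν) = τ ^ n := by
    rw [← pow_add]
    congr 1
    omega
  have hC : (N.choose n : ℝ) ≠ 0 := Nat.cast_ne_zero.mpr (Nat.choose_pos hn).ne'
  have h2 : ∀ X : ℝ, (N.choose n : ℝ) * (X / (N.choose n : ℝ)) = X := fun X => by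
    field_simp
  rw [h2, mul_pow]
  linear_combination ((k.choose ν : ℝ) * ((N - k).choose (n - ν) : ℝ) *
    (-(1 - s') / s') ^ ν) * hτ

theorem Bsum {N k : ℕ} (hk : k ≤ N) (A : Finset (Fin N)) (s' τ : ℝ) :
    ∑ ω ∈ (univ : Finset (Fin N)).powersetCard k,
        ∏ i ∈ A, (if i ∈ ω then -(1 - s') / s' * τ else τ)
      = (N.choose k : ℝ) * (τ ^ A.card * kraw N A.card k s') := by
  have hn : A.card ≤ N := by
    simpa using Finset.card_le_card (Finset.subset_univ A)
  have hC : (N.choose A.card : ℝ) ≠ 0 := by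
    exact Nat.cast_ne_zero.mpr (Nat.choose_pos hn).ne'
  apply mul_left_cancel₀ hC
  rw [bracket_eq hk A, sum_eq_kraw hn]
  ring




lemma prod_three_sums {α β γ : Type*} (sa : Finset α) (sb : Finset β) (sc : Finset γ)
    (f : α → ℝ) (g : β → ℝ) (h : γ → ℝ) :
    (∑ a ∈ sa, f a) * (∑ b ∈ sb, g b) * (∑ c ∈ sc, h c)
      = ∑ a ∈ sa, ∑ b ∈ sb, ∑ c ∈ sc, f a * g b * h c := by
  rw [Finset.sum_mul_sum, Finset.sum_mul]
  refine Finset.sum_congr rfl fun a _ => ?_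
  rw [Finset.sum_mul]
  refine Finset.sum_congr rfl fun b _ => ?_
  rw [Finset.mul_sum]

lemma sum_comm4 {α β γ δ M : Type*} [AddCommMonoid M] (s1 : Finset α) (s2 : Finset β)
    (s3 : Finset γ) (s4 : Finset δ) (F : α → β → γ → δ → M) :
    ∑ a ∈ s1, ∑ b ∈ s2, ∑ c ∈ s3, ∑ d ∈ s4, F a b c d
      = ∑ d ∈ s4, ∑ a ∈ s1, ∑ b ∈ s2, ∑ c ∈ s3, F a b c d := by
  calc ∑ a ∈ s1, ∑ b ∈ s2, ∑ c ∈ s3, ∑ d ∈ s4, F a b c d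
      = ∑ a ∈ s1, ∑ b ∈ s2, ∑ d ∈ s4, ∑ c ∈ s3, F a b c d :=
        Finset.sum_congr rfl fun a _ => Finset.sum_congr rfl fun b _ => Finset.sum_comm
    _ = ∑ a ∈ s1, ∑ d ∈ s4, ∑ b ∈ s2, ∑ c ∈ s3, F a b c d :=
        Finset.sum_congr rfl fun a _ => Finset.sum_comm
    _ = ∑ d ∈ s4, ∑ a ∈ s1, ∑ b ∈ s2, ∑ c ∈ s3, F a b c d := Finset.sum_comm

lemma key_identity (N x y z : ℕ) (hx : x ≤ N) (hy : y ≤ N) (hz : z ≤ N)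
    (r s : ℝ) (hs0 : s ≠ 0) (hq0 : (1 : ℝ) - s ≠ 0) :
    ∑ ω ∈ (univ : Finset (Fin N)).powersetCard x,
      ∑ ω' ∈ (univ : Finset (Fin N)).powersetCard y,
        ∑ Z ∈ (univ : Finset (Fin N)).powersetCard z,
          ∏ i ∈ (univ : Finset (Fin N)),
            (1 + (if i ∈ ω then (-1 : ℝ) else s / (1 - s)) *
                 (if i ∈ ω' then -(1 - s) / s else 1) *
                 (if i ∈ Z then -(1 - r) / r else 1))
      = (N.choose x : ℝ) * (N.choose y : ℝ) * (N.choose z : ℝ) *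
          ∑ n ∈ range (N + 1), (N.choose n : ℝ) * (s / (1 - s)) ^ n *
            kraw N n x s * kraw N n y s * kraw N n z r := by
  -- abbreviations
  set U : Finset (Fin N) → Fin N → ℝ := fun ω i => if i ∈ ω then (-1 : ℝ) else s / (1 - s) with hU
  set V : Finset (Fin N) → Fin N → ℝ := fun ω' i => if i ∈ ω' then -(1 - s) / s else 1 with hV
  set W : Finset (Fin N) → Fin N → ℝ := fun Z i => if i ∈ Z then -(1 - r) / r else 1 with hW
  have expand : ∀ ω ω' Z : Finset (Fin N),
      ∏ i ∈ (univ : Finset (Fin N)), (1 + U ω i * V ω' i * W Z i)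
        = ∑ A ∈ (univ : Finset (Fin N)).powerset,
            (∏ i ∈ A, U ω i) * (∏ i ∈ A, V ω' i) * (∏ i ∈ A, W Z i) := by
    intro ω ω' Z
    have h1 : ∏ i ∈ (univ : Finset (Fin N)), (1 + U ω i * V ω' i * W Z i)
        = ∏ i ∈ (univ : Finset (Fin N)), (U ω i * V ω' i * W Z i + 1) := by
      refine Finset.prod_congr rfl fun i _ => by ring
    rw [h1, Finset.prod_add]
    refine Finset.sum_congr rfl fun A _ => ?_
    rw [Finset.prod_const_one, mul_one, Finset.prod_mul_distrib, Finset.prod_mul_distrib]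
  calc
    ∑ ω ∈ (univ : Finset (Fin N)).powersetCard x,
      ∑ ω' ∈ (univ : Finset (Fin N)).powersetCard y,
        ∑ Z ∈ (univ : Finset (Fin N)).powersetCard z,
          ∏ i ∈ (univ : Finset (Fin N)), (1 + U ω i * V ω' i * W Z i)
        = ∑ A ∈ (univ : Finset (Fin N)).powerset,
            (∑ ω ∈ (univ : Finset (Fin N)).powersetCard x, ∏ i ∈ A, U ω i) *
            (∑ ω' ∈ (univ : Finset (Fin N)).powersetCard y, ∏ i ∈ A, V ω' i) *
            (∑ Z ∈ (univ : Finset (Fin N)).powersetCard z, ∏ i ∈ A, W Z i) := by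
        simp_rw [expand, prod_three_sums]
        exact sum_comm4 _ _ _ _ _
    _ = ∑ A ∈ (univ : Finset (Fin N)).powerset,
          (N.choose x : ℝ) * (N.choose y : ℝ) * (N.choose z : ℝ) *
            ((s / (1 - s)) ^ A.card *
              kraw N A.card x s * kraw N A.card y s * kraw N A.card z r) := by
        refine Finset.sum_congr rfl fun A _ => ?_
        have hUeq : (∑ ω ∈ (univ : Finset (Fin N)).powersetCard x, ∏ i ∈ A, U ω i)
            = (N.choose x : ℝ) * ((s / (1 - s)) ^ A.card * kraw N A.card x s) := by
          have hb := Bsum (N := N) hx A s (s / (1 - s))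
          have hval : -(1 - s) / s * (s / (1 - s)) = (-1 : ℝ) := by field_simp
          rw [hval] at hb
          exact hb
        have hVeq : (∑ ω' ∈ (univ : Finset (Fin N)).powersetCard y, ∏ i ∈ A, V ω' i)
            = (N.choose y : ℝ) * kraw N A.card y s := by
          have hb := Bsum (N := N) hy A s 1
          simp only [mul_one, one_pow, one_mul] at hb
          exact hb
        have hWeq : (∑ Z ∈ (univ : Finset (Fin N)).powersetCard z, ∏ i ∈ A, W Z i)
            = (N.choose z : ℝ) * kraw N A.card z r := by
          have hb := Bsum (N := N) hz A r 1
          simp only [mul_one, one_pow, one_mul] at hb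
          exact hb
        rw [hUeq, hVeq, hWeq]
        ring
    _ = (N.choose x : ℝ) * (N.choose y : ℝ) * (N.choose z : ℝ) *
          ∑ n ∈ range (N + 1), (N.choose n : ℝ) * (s / (1 - s)) ^ n *
            kraw N n x s * kraw N n y s * kraw N n z r := by
        rw [← Finset.sum_fiberwise_of_maps_to (g := Finset.card)
          (t := range ((univ : Finset (Fin N)).card + 1)) (fun A hA => Finset.mem_range.mpr
            (Nat.lt_succ_of_le (Finset.card_le_card (Finset.mem_powerset.mp hA)))), Finset.mul_sum]
        simp_rw [← Finset.powersetCard_eq_filter]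
        have hNc : (univ : Finset (Fin N)).card = N := by simp
        rw [hNc]
        refine Finset.sum_congr rfl fun n hn => ?_
        have hconst : ∀ A ∈ (univ : Finset (Fin N)).powersetCard n,
            (N.choose x : ℝ) * (N.choose y : ℝ) * (N.choose z : ℝ) *
              ((s / (1 - s)) ^ A.card *
                kraw N A.card x s * kraw N A.card y s * kraw N A.card z r)
            = (N.choose x : ℝ) * (N.choose y : ℝ) * (N.choose z : ℝ) *
              ((s / (1 - s)) ^ n *
                kraw N n x s * kraw N n y s * kraw N n z r) := by
          intro A hA
          rw [(Finset.mem_powersetCard.mp hA).2]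
        rw [Finset.sum_congr rfl hconst, Finset.sum_const, Finset.card_powersetCard, hNc,
          nsmul_eq_mul]
        ring

lemma factor_nonneg {r s : ℝ} (hr : r ∈ Set.Ioo (0 : ℝ) 1) (hs : s ∈ Set.Ioo (0 : ℝ) 1)
    (h1 : 1 - r ≤ s) (h2 : s ≤ r) (P1 P2 P3 : Prop) [Decidable P1] [Decidable P2] [Decidable P3] :
    0 ≤ 1 + (if P1 then (-1 : ℝ) else s / (1 - s)) *
          (if P2 then -(1 - s) / s else 1) *
          (if P3 then -(1 - r) / r else 1) := by
  obtain ⟨hr0, hr1⟩ := hr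
  obtain ⟨hs0, hs1⟩ := hs
  have hq0 : (0 : ℝ) < 1 - s := by linarith
  have hq1 : (0 : ℝ) < 1 - r := by linarith
  by_cases p1 : P1 <;> by_cases p2 : P2 <;> by_cases p3 : P3 <;>
    simp only [p1, p2, p3, if_true, if_false, if_pos, if_neg, not_false_iff]
  · -- all three
    have hkey : (1 - s) * (1 - r) ≤ r * s := by nlinarith
    have hrs : (0 : ℝ) < s * r := by positivity
    have : (-1 : ℝ) * (-(1 - s) / s) * (-(1 - r) / r) = -(((1 - s) * (1 - r)) / (s * r)) := by
      field_simp
    rw [this]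
    rw [← sub_nonneg] at *
    have hd : ((1 - s) * (1 - r)) / (s * r) ≤ 1 := by
      rw [div_le_one hrs]; linarith [hkey]
    linarith
  · have : (-1 : ℝ) * (-(1 - s) / s) * 1 = (1 - s) / s := by ring
    rw [this]; positivity
  · have : (-1 : ℝ) * 1 * (-(1 - r) / r) = (1 - r) / r := by ring
    rw [this]; positivity
  · norm_num
  · have : s / (1 - s) * (-(1 - s) / s) * (-(1 - r) / r) = (1 - r) / r := by
      field_simp
    rw [this]; positivity
  · have : s / (1 - s) * (-(1 - s) / s) * 1 = -1 := by field_simp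
    rw [this]; norm_num
  · have hkey : s * (1 - r) ≤ (1 - s) * r := by nlinarith
    have hqr : (0 : ℝ) < (1 - s) * r := by positivity
    have : s / (1 - s) * 1 * (-(1 - r) / r) = -((s * (1 - r)) / ((1 - s) * r)) := by
      field_simp
    rw [this]
    have hd : (s * (1 - r)) / ((1 - s) * r) ≤ 1 := by
      rw [div_le_one hqr]; linarith [hkey]
    linarith
  · have : s / (1 - s) * 1 * 1 = s / (1 - s) := by ring
    rw [this]; positivity


lemma kraw_zero {N n : ℕ} (hn : n ≤ N) (s : ℝ) : kraw N n 0 s = 1 := by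
  have hC : (N.choose n : ℝ) ≠ 0 := Nat.cast_ne_zero.mpr (Nat.choose_pos hn).ne'
  rw [kraw, Finset.sum_eq_single 0]
  · simp [hC]
  · intro ν _ hν
    have : Nat.choose 0 ν = 0 := Nat.choose_eq_zero_of_lt (Nat.pos_of_ne_zero hν)
    simp [this]
  · simp

lemma kraw_top {N n : ℕ} (hn : n ≤ N) (s : ℝ) : kraw N n N s = (-(1 - s) / s) ^ n := by
  have hC : (N.choose n : ℝ) ≠ 0 := Nat.cast_ne_zero.mpr (Nat.choose_pos hn).ne'
  rw [kraw, Finset.sum_eq_single n]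
  · simp [hC]
  · intro ν hν hνn
    have hlt : ν < n := lt_of_le_of_ne (Nat.lt_succ_iff.mp (Finset.mem_range.mp hν)) hνn
    have h0 : Nat.choose 0 (n - ν) = 0 := Nat.choose_eq_zero_of_lt (by omega)
    simp [Nat.sub_self, h0]
  · simp

lemma kraw_one {N n : ℕ} (hN : 0 < N) (hn : n ≤ N) (r : ℝ) (hr : r ≠ 0) :
    kraw N n 1 r = 1 - (n : ℝ) / (r * N) := by
  have hC : (N.choose n : ℝ) ≠ 0 := Nat.cast_ne_zero.mpr (Nat.choose_pos hn).ne'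
  have hNr : (N : ℝ) ≠ 0 := Nat.cast_ne_zero.mpr hN.ne'
  rcases Nat.eq_zero_or_pos n with hn0 | hnpos
  · subst hn0
    simp [kraw, hC]
  · have hA : (N : ℝ) * ((N - 1).choose (n - 1) : ℝ) = (N.choose n : ℝ) * n := by
      have h := Nat.add_one_mul_choose_eq (N - 1) (n - 1)
      have e1 : N - 1 + 1 = N := by omega
      have e2 : n - 1 + 1 = n := by omega
      rw [e1, e2] at h
      exact_mod_cast congrArg (Nat.cast (R := ℝ)) h
    have hpas : (N.choose n : ℝ) = ((N - 1).choose (n - 1) : ℝ) + ((N - 1).choose n : ℝ) := by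
      have h := Nat.choose_succ_succ (N - 1) (n - 1)
      simp only [Nat.succ_eq_add_one] at h
      have e1 : N - 1 + 1 = N := by omega
      have e2 : n - 1 + 1 = n := by omega
      rw [e1, e2] at h
      exact_mod_cast congrArg (Nat.cast (R := ℝ)) h
    have hB : (N : ℝ) * ((N - 1).choose n : ℝ) = (N.choose n : ℝ) * ((N : ℝ) - n) := by
      linear_combination (-(N : ℝ)) * hpas - hA
    rw [kraw, Finset.sum_range_succ']
    rw [Finset.sum_eq_single_of_mem 0 (by simp [hnpos])]
    · have hc11 : Nat.choose 1 1 = 1 := rfl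
      have hc10 : Nat.choose 1 0 = 1 := rfl
      simp only [pow_one, pow_zero, hc11, hc10, Nat.cast_one, one_mul, mul_one,
        Nat.sub_zero]
      field_simp
      rw [zero_add]
      have hr' : r * (-((1 - r) / r)) = -(1 - r) := by field_simp
      linear_combination (-(1 - r)) * hA + r * hB
        + (((N - 1).choose (n - 1) : ℝ) * N) * hr'
    · intro m hm hm0
      have : Nat.choose 1 (m + 1) = 0 := Nat.choose_eq_zero_of_lt (by omega)
      simp [this]

lemma sum_binom_weighted (N : ℕ) (hN : 0 < N) (t c : ℝ) :
    ∑ n ∈ range (N + 1), (N.choose n : ℝ) * t ^ n * (1 - c * n)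
      = (1 + t) ^ (N - 1) * (1 + t - c * N * t) := by
  have h1 : ∑ n ∈ range (N + 1), (N.choose n : ℝ) * t ^ n = (1 + t) ^ N := by
    rw [add_comm (1 : ℝ) t, add_pow]
    refine Finset.sum_congr rfl fun n _ => by ring
  have h2 : ∑ n ∈ range (N + 1), (N.choose n : ℝ) * t ^ n * n
      = N * t * (1 + t) ^ (N - 1) := by
    rw [Finset.sum_range_succ']
    have hz : (N.choose 0 : ℝ) * t ^ 0 * (0 : ℕ) = 0 := by simp
    rw [hz, add_zero]
    have hterm : ∀ m, (N.choose (m + 1) : ℝ) * t ^ (m + 1) * ((m + 1 : ℕ) : ℝ)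
        = (N : ℝ) * ((N - 1).choose m : ℝ) * t * t ^ m := by
      intro m
      have h := Nat.add_one_mul_choose_eq (N - 1) m
      have e1 : N - 1 + 1 = N := by omega
      rw [e1] at h
      have hc : ((N : ℕ) : ℝ) * ((N - 1).choose m : ℝ)
          = (N.choose (m + 1) : ℝ) * ((m + 1 : ℕ) : ℝ) := by
        exact_mod_cast congrArg (Nat.cast (R := ℝ)) h
      push_cast at hc ⊢
      linear_combination (t * t ^ m) * hc.symm
    rw [Finset.sum_congr rfl fun m _ => hterm m]
    have : ∑ m ∈ range N, (N : ℝ) * ((N - 1).choose m : ℝ) * t * t ^ m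
        = (N : ℝ) * t * ∑ m ∈ range N, ((N - 1).choose m : ℝ) * t ^ m := by
      rw [Finset.mul_sum]
      exact Finset.sum_congr rfl fun m _ => by ring
    rw [this]
    have hrange : range N = range ((N - 1) + 1) := by congr 1; omega
    rw [hrange]
    have h3 : ∑ m ∈ range ((N - 1) + 1), ((N - 1).choose m : ℝ) * t ^ m
        = (1 + t) ^ (N - 1) := by
      rw [add_comm (1 : ℝ) t, add_pow]
      refine Finset.sum_congr rfl fun m _ => by ring
    rw [h3]
  have hsplit : ∑ n ∈ range (N + 1), (N.choose n : ℝ) * t ^ n * (1 - c * n)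
      = (∑ n ∈ range (N + 1), (N.choose n : ℝ) * t ^ n)
        - c * ∑ n ∈ range (N + 1), (N.choose n : ℝ) * t ^ n * n := by
    rw [Finset.mul_sum, ← Finset.sum_sub_distrib]
    exact Finset.sum_congr rfl fun n _ => by ring
  rw [hsplit, h1, h2]
  have hpow : (1 + t) ^ N = (1 + t) ^ (N - 1) * (1 + t) := by
    rw [← pow_succ]
    congr 1
    omega
  rw [hpow]
  ring


end Aux

/-- The triple product sum of univariate Krawtchouk polynomials
`Σ_{n=0}^N C(N,n)(s/(1−s))^n Q_n(x;N,s) Q_n(y;N,s) Q_n(z;N,r)` is nonnegative for all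
`x, y, z ∈ {0,…,N}` if and only if `1−r ≤ min(s, 1−s)`. -/
theorem krawtchouk_triple_product_nonneg_iff (N : ℕ) (hN : 0 < N)
    (r s : ℝ) (hr : r ∈ Set.Ioo (0 : ℝ) 1) (hs : s ∈ Set.Ioo (0 : ℝ) 1) :
    (∀ x ≤ N, ∀ y ≤ N, ∀ z ≤ N,
        0 ≤ ∑ n ∈ Finset.range (N + 1),
              (N.choose n : ℝ) * (s / (1 - s)) ^ n *
                kraw N n x s * kraw N n y s * kraw N n z r)
      ↔ 1 - r ≤ min s (1 - s) := by
  obtain ⟨hr0, hr1⟩ := hr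
  obtain ⟨hs0, hs1⟩ := hs
  have hq0 : (0 : ℝ) < 1 - s := by linarith
  have hN0 : (0 : ℝ) < (N : ℝ) := by exact_mod_cast hN
  constructor
  · intro H
    refine le_min ?_ ?_
    · -- evaluate at (N, N, 1), get 1 - r ≤ s
      have h := H N le_rfl N le_rfl 1 hN
      have heq : ∑ n ∈ Finset.range (N + 1),
            (N.choose n : ℝ) * (s / (1 - s)) ^ n *
              kraw N n N s * kraw N n N s * kraw N n 1 r
          = (1 + (1 - s) / s) ^ (N - 1) *
              (1 + (1 - s) / s - 1 / (r * N) * N * ((1 - s) / s)) := by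
        rw [← sum_binom_weighted N hN ((1 - s) / s) (1 / (r * N))]
        refine Finset.sum_congr rfl fun n hn => ?_
        have hnN : n ≤ N := Nat.lt_succ_iff.mp (Finset.mem_range.mp hn)
        rw [kraw_top hnN, kraw_one hN hnN r hr0.ne']
        have hcomb : (s / (1 - s)) ^ n * (-(1 - s) / s) ^ n * (-(1 - s) / s) ^ n
            = ((1 - s) / s) ^ n := by
          rw [← mul_pow, ← mul_pow]
          congr 1
          field_simp
        calc (N.choose n : ℝ) * (s / (1 - s)) ^ n * (-(1 - s) / s) ^ n * (-(1 - s) / s) ^ n *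
              (1 - (n : ℝ) / (r * N))
            = (N.choose n : ℝ) *
                ((s / (1 - s)) ^ n * (-(1 - s) / s) ^ n * (-(1 - s) / s) ^ n) *
                (1 - (n : ℝ) / (r * N)) := by ring
          _ = (N.choose n : ℝ) * ((1 - s) / s) ^ n * (1 - 1 / (r * N) * (n : ℝ)) := by
              rw [hcomb]; ring
      rw [heq] at h
      have hpow : (0 : ℝ) < (1 + (1 - s) / s) ^ (N - 1) := by positivity
      have h2 : 0 ≤ 1 + (1 - s) / s - 1 / (r * N) * N * ((1 - s) / s) := by
        by_contra hc
        push_neg at hc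
        nlinarith [mul_pos hpow (neg_pos.mpr hc)]
      have hred : 1 / (r * N) * (N : ℝ) * ((1 - s) / s) = (1 - s) / (r * s) := by
        field_simp
      rw [hred] at h2
      have hrs : (0 : ℝ) < r * s := by positivity
      have key : 0 ≤ (1 + (1 - s) / s - (1 - s) / (r * s)) * (r * s) :=
        mul_nonneg h2 hrs.le
      have hexp : (1 + (1 - s) / s - (1 - s) / (r * s)) * (r * s) = r + s - 1 := by
        field_simp
        ring
      rw [hexp] at key
      linarith
    · -- evaluate at (0, 0, 1), get 1 - r ≤ 1 - s
      have h := H 0 (Nat.zero_le _) 0 (Nat.zero_le _) 1 hN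
      have heq : ∑ n ∈ Finset.range (N + 1),
            (N.choose n : ℝ) * (s / (1 - s)) ^ n *
              kraw N n 0 s * kraw N n 0 s * kraw N n 1 r
          = (1 + s / (1 - s)) ^ (N - 1) *
              (1 + s / (1 - s) - 1 / (r * N) * N * (s / (1 - s))) := by
        rw [← sum_binom_weighted N hN (s / (1 - s)) (1 / (r * N))]
        refine Finset.sum_congr rfl fun n hn => ?_
        have hnN : n ≤ N := Nat.lt_succ_iff.mp (Finset.mem_range.mp hn)
        rw [kraw_zero hnN, kraw_one hN hnN r hr0.ne']
        ring
      rw [heq] at h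
      have hpow : (0 : ℝ) < (1 + s / (1 - s)) ^ (N - 1) := by positivity
      have h2 : 0 ≤ 1 + s / (1 - s) - 1 / (r * N) * N * (s / (1 - s)) := by
        by_contra hc
        push_neg at hc
        nlinarith [mul_pos hpow (neg_pos.mpr hc)]
      have hred : 1 / (r * N) * (N : ℝ) * (s / (1 - s)) = s / (r * (1 - s)) := by
        field_simp
      rw [hred] at h2
      have hrq : (0 : ℝ) < r * (1 - s) := by positivity
      have key : 0 ≤ (1 + s / (1 - s) - s / (r * (1 - s))) * (r * (1 - s)) :=
        mul_nonneg h2 hrq.le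
      have hexp : (1 + s / (1 - s) - s / (r * (1 - s))) * (r * (1 - s)) = r - s := by
        field_simp
        ring
      rw [hexp] at key
      linarith
  · intro hmin x hx y hy z hz
    have h1 : 1 - r ≤ s := le_trans hmin (min_le_left _ _)
    have h2 : s ≤ r := by
      have := le_trans hmin (min_le_right _ _)
      linarith
    have key := key_identity N x y z hx hy hz r s hs0.ne' hq0.ne'
    have hLHS : 0 ≤ ∑ ω ∈ (univ : Finset (Fin N)).powersetCard x,
        ∑ ω' ∈ (univ : Finset (Fin N)).powersetCard y,
          ∑ Z ∈ (univ : Finset (Fin N)).powersetCard z,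
            ∏ i ∈ (univ : Finset (Fin N)),
              (1 + (if i ∈ ω then (-1 : ℝ) else s / (1 - s)) *
                   (if i ∈ ω' then -(1 - s) / s else 1) *
                   (if i ∈ Z then -(1 - r) / r else 1)) := by
      refine Finset.sum_nonneg fun ω _ => Finset.sum_nonneg fun ω' _ =>
        Finset.sum_nonneg fun Z _ => Finset.prod_nonneg fun i _ => ?_
      exact factor_nonneg ⟨hr0, hr1⟩ ⟨hs0, hs1⟩ h1 h2 _ _ _
    rw [key] at hLHS
    have hc : (0 : ℝ) < (N.choose x : ℝ) * (N.choose y : ℝ) * (N.choose z : ℝ) := by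
      have cx := Nat.choose_pos hx
      have cy := Nat.choose_pos hy
      have cz := Nat.choose_pos hz
      positivity
    by_contra hT
    push_neg at hT
    nlinarith [mul_pos hc (neg_pos.mpr hT)]
end

section
/- Let p̂ ∈ (0,1), q̂ = 1−p̂, with q̂ ≤ min_{1≤j≤d} p_j, and let φ_{x,y}(z) = C(N,z) p̂^z q̂^{N−z} Σ_{n=0}^N Q_n(z;N,p̂) Q_n(x,y;N,p). Then for all x,y ∈ ℕ^d with |x| = |y| = N and every real ψ, the probability generating function identity Σ_{z=0}^N φ_{x,y}(z) ψ^{N−z} = (m(x;N,p) m(y;N,p))^{−1} Σ_{r=0}^N C(N,r) (−1)^r (1−ψ)^r q̂^r Σ_{z∈ℕ^d: z ≤ x, z ≤ y, |z| = r} (r!/(z_1!⋯z_d!)) ∏_{i=1}^d p_i^{z_i} · ((N−r)!/∏_{i=1}^d (x_i−z_i)!) ∏_{i=1}^d p_i^{x_i−z_i} · ((N−r)!/∏_{i=1}^d (y_i−z_i)!) ∏_{i=1}^d p_i^{y_i−z_i} holds; this identifies N−Z under φ_{x,y} with the number of thinned matches in two multinomial sequences of trials. -/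
open Finset

/-- The mixing measure `φ_{x,y}(z) = C(N,z) p̂^z q̂^{N−z} Σ_{n=0}^N Q_n(z;N,p̂) Q_n(x,y;N,p)`. -/
noncomputable def phiXY (d N : ℕ) (p : Fin d → ℝ) (phat qhat : ℝ)
    (x y : Fin d → ℕ) (z : ℕ) : ℝ :=
  (N.choose z : ℝ) * phat ^ z * qhat ^ (N - z) *
    ∑ n ∈ Finset.range (N + 1), kraw N n z phat * kernelQ d N p n x y

/- ### Auxiliary lemmas -/

lemma aux_alt_sum_choose (R : ℕ) :
    ∑ j ∈ Finset.range (R+1), (-1:ℝ)^j * (R.choose j : ℝ) = if R = 0 then 1 else 0 := by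
  have h := Int.alternating_sum_range_choose (n := R)
  have := congrArg (fun t : ℤ => (t : ℝ)) h
  push_cast at this
  simpa using this

lemma aux_choose_swap {M a b : ℕ} (h : a + b ≤ M) :
    M.choose a * (M-a).choose b = M.choose b * (M-b).choose a := by
  have h1 := Nat.choose_mul (n := M) (Nat.le_add_right a b)
  have h2 := Nat.choose_mul (n := M) (Nat.le_add_left b a)
  rw [Nat.add_sub_cancel_left] at h1
  rw [Nat.add_sub_cancel] at h2
  have h3 : (a+b).choose a = (a+b).choose b := by
    rw [← Nat.choose_symm (Nat.le_add_left b a)]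
    congr 1
    omega
  rw [h3, h2] at h1
  exact h1.symm

lemma aux_key1 {N n ν k : ℕ} (hν : ν ≤ n) (hn : n ≤ N) (hk : k ≤ N - n) :
    N.choose (ν+k) * ((ν+k).choose ν * (N-(ν+k)).choose (n-ν))
      = N.choose n * (n.choose ν * (N-n).choose k) := by
  have hνk : ν + k ≤ N := by omega
  have h1 := Nat.choose_mul (n := N) (Nat.le_add_right ν k)
  rw [Nat.add_sub_cancel_left] at h1
  have h2 := Nat.choose_mul (n := N) hν
  have h3 : (N-ν).choose k * ((N-ν)-k).choose (n-ν)
      = (N-ν).choose (n-ν) * ((N-ν)-(n-ν)).choose k := aux_choose_swap (by omega)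
  have e1 : N - (ν+k) = (N-ν) - k := by omega
  have e2 : (N-ν) - (n-ν) = N - n := by omega
  rw [e1, ← mul_assoc, h1, mul_assoc, h3, e2, ← mul_assoc, ← h2, mul_assoc]

lemma aux_key1' {N n ν k : ℕ} (hν : ν ≤ n) (hn : n ≤ N) (hk : k ≤ N - n) :
    (N.choose (ν+k) : ℝ) * (((ν+k).choose ν : ℝ) * ((N-(ν+k)).choose (n-ν) : ℝ))
      = (N.choose n : ℝ) * ((n.choose ν : ℝ) * ((N-n).choose k : ℝ)) := by
  exact_mod_cast congrArg (Nat.cast : ℕ → ℝ) (aux_key1 hν hn hk)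

lemma aux_altD {M R : ℕ} (hR : R ≤ M) :
    ∑ j ∈ Finset.range (R+1), (-1:ℝ)^j * ((M.choose j : ℝ) * (((M-j).choose (R-j) : ℝ)))
      = if R = 0 then 1 else 0 := by
  have : ∀ j ∈ Finset.range (R+1),
      (-1:ℝ)^j * ((M.choose j : ℝ) * (((M-j).choose (R-j) : ℝ)))
        = (M.choose R : ℝ) * ((-1:ℝ)^j * (R.choose j : ℝ)) := by
    intro j hj
    rw [Finset.mem_range] at hj
    have := Nat.choose_mul (n := M) (by omega : j ≤ R)
    have hc : (M.choose R : ℝ) * (R.choose j : ℝ) = (M.choose j : ℝ) * ((M-j).choose (R-j) : ℝ) := by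
      exact_mod_cast congrArg (Nat.cast : ℕ → ℝ) this
    rw [← hc]; ring
  rw [Finset.sum_congr rfl this, ← Finset.mul_sum, aux_alt_sum_choose]
  by_cases h : R = 0 <;> simp [h]

lemma aux_krawGF (N n : ℕ) (hn : n ≤ N) (s w : ℝ) (hs : s ≠ 0) :
    ∑ z ∈ Finset.range (N+1), (N.choose z : ℝ) * s^z * w^(N-z) * kraw N n z s
      = (s+w)^(N-n) * (w-(1-s))^n := by
  have hC : (N.choose n : ℝ) ≠ 0 := by
    exact_mod_cast (Nat.choose_pos hn).ne'
  simp only [kraw, Finset.mul_sum]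
  rw [Finset.sum_comm]
  have inner : ∀ ν ∈ Finset.range (n+1),
      (∑ z ∈ Finset.range (N+1), (N.choose z : ℝ) * s^z * w^(N-z) *
        ((-(1 - s) / s) ^ ν * (z.choose ν : ℝ) * ((N - z).choose (n - ν) : ℝ) / (N.choose n : ℝ)))
      = (-(1-s))^ν * w^(n-ν) * (n.choose ν : ℝ) * (s+w)^(N-n) := by
    intro ν hν
    rw [Finset.mem_range] at hν
    have hν' : ν ≤ n := by omega
    have hsub : Finset.Ico ν (ν + (N-n+1)) ⊆ Finset.range (N+1) := by
      intro z hz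
      rw [Finset.mem_Ico] at hz
      rw [Finset.mem_range]
      omega
    rw [← Finset.sum_subset hsub ?van]
    case van =>
      intro z hz hz'
      rw [Finset.mem_range] at hz
      rw [Finset.mem_Ico] at hz'
      rcases lt_or_ge z ν with h | h
      · rw [Nat.choose_eq_zero_of_lt h]
        push_cast
        ring
      · have : N - z < n - ν := by omega
        rw [Nat.choose_eq_zero_of_lt this]
        push_cast
        ring
    rw [Finset.sum_Ico_eq_sum_range, show ν + (N-n+1) - ν = N-n+1 by omega]
    have step : ∀ k ∈ Finset.range (N-n+1),
        (N.choose (ν+k) : ℝ) * s^(ν+k) * w^(N-(ν+k)) *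
          ((-(1 - s) / s) ^ ν * ((ν+k).choose ν : ℝ) * ((N - (ν+k)).choose (n - ν) : ℝ) / (N.choose n : ℝ))
        = ((-(1-s))^ν * w^(n-ν) * (n.choose ν : ℝ)) * (((N-n).choose k : ℝ) * s^k * w^(N-n-k)) := by
      intro k hk
      rw [Finset.mem_range] at hk
      have hkey := aux_key1' hν' hn (by omega : k ≤ N - n)
      have hw : w^(N-(ν+k)) = w^(n-ν) * w^(N-n-k) := by
        rw [← pow_add]
        congr 1
        omega
      have hsv : s^(ν+k) = s^ν * s^k := pow_add s ν k
      have hds : (-(1 - s) / s) ^ ν = (-(1-s))^ν / s^ν := div_pow _ _ _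
      rw [hw, hsv, hds]
      have hsν : (s:ℝ)^ν ≠ 0 := pow_ne_zero _ hs
      field_simp
      linear_combination ((w^(n-ν) * w^(N-n-k)) * (-(1-s))^ν) * hkey
    have gf : ∑ k ∈ Finset.range (N-n+1), (((N-n).choose k : ℝ) * s^k * w^(N-n-k))
        = (s+w)^(N-n) := by
      rw [add_pow]
      exact Finset.sum_congr rfl fun k _ => by ring
    rw [Finset.sum_congr rfl step, ← Finset.mul_sum, gf]
  rw [Finset.sum_congr rfl inner]
  have := add_pow (-(1-s)) w n
  calc ∑ ν ∈ Finset.range (n+1), (-(1-s))^ν * w^(n-ν) * (n.choose ν : ℝ) * (s+w)^(N-n)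
      = (∑ ν ∈ Finset.range (n+1), (-(1-s))^ν * w^(n-ν) * (n.choose ν : ℝ)) * (s+w)^(N-n) := by
        rw [Finset.sum_mul]
    _ = (s+w)^(N-n) * (w-(1-s))^n := by
        rw [← this]; ring_nf

lemma aux_kernel_collapse (d N : ℕ) (p : Fin d → ℝ) (x y : Fin d → ℕ) (r : ℕ) (hr : r ≤ N) :
    ∑ n ∈ Finset.range (r+1), ((N-n).choose (r-n) : ℝ) * kernelQ d N p n x y
      = ∑ z ∈ (Finset.Iic (x ⊓ y)).filter (fun z => ∑ i, z i = r),
          (N.choose r : ℝ) *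
          ((((r).factorial : ℝ) / ∏ i, ((z i).factorial : ℝ)) *
           (∏ i, ((x i).descFactorial (z i) : ℝ) * ((y i).descFactorial (z i) : ℝ) / (p i) ^ (z i)) /
           ((N.descFactorial r : ℝ)) ^ 2) := by
  simp only [kernelQ, Finset.sum_filter, Finset.mul_sum]
  rw [Finset.sum_comm]
  simp only [mul_ite, mul_zero]
  apply Finset.sum_congr rfl
  intro z hz
  set m := ∑ i, z i with hm
  set F : ℝ := (((m).factorial : ℝ) / ∏ i, ((z i).factorial : ℝ)) *
      (∏ i, ((x i).descFactorial (z i) : ℝ) * ((y i).descFactorial (z i) : ℝ) / (p i) ^ (z i)) /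
      ((N.descFactorial m : ℝ)) ^ 2 with hF
  have hterm : ∀ n, (N.choose m : ℝ) * ((N - m).choose (n - m) : ℝ) * (-1 : ℝ) ^ (n - m) *
      ((m.factorial : ℝ) / ∏ i, ((z i).factorial : ℝ)) *
      (∏ i, ((x i).descFactorial (z i) : ℝ) * ((y i).descFactorial (z i) : ℝ) / (p i) ^ (z i)) /
      ((N.descFactorial m : ℝ)) ^ 2
      = (N.choose m : ℝ) * ((N - m).choose (n - m) : ℝ) * (-1 : ℝ) ^ (n - m) * F := by
    intro n; rw [hF]; ring
  by_cases hmr : m ≤ r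
  · have hIco : (Finset.range (r+1)).filter (fun n => m ≤ n) = Finset.Ico m (r+1) := by
      ext n
      simp only [Finset.mem_filter, Finset.mem_range, Finset.mem_Ico]
      omega
    rw [← Finset.sum_filter, hIco, Finset.sum_Ico_eq_sum_range,
        show r + 1 - m = (r - m) + 1 by omega]
    have step : ∀ j ∈ Finset.range ((r-m)+1),
        ((N-(m+j)).choose (r-(m+j)) : ℝ) *
          ((N.choose m : ℝ) * ((N - m).choose ((m+j) - m) : ℝ) * (-1 : ℝ) ^ ((m+j) - m) *
          ((m.factorial : ℝ) / ∏ i, ((z i).factorial : ℝ)) *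
          (∏ i, ((x i).descFactorial (z i) : ℝ) * ((y i).descFactorial (z i) : ℝ) / (p i) ^ (z i)) /
          ((N.descFactorial m : ℝ)) ^ 2)
        = ((N.choose m : ℝ) * F) *
            ((-1:ℝ)^j * (((N-m).choose j : ℝ) * (((N-m-j).choose ((r-m)-j)) : ℝ))) := by
      intro j hj
      rw [hterm, show (m+j) - m = j by omega, show N - (m+j) = N - m - j by omega,
          show r - (m+j) = (r-m) - j by omega]
      ring
    rw [Finset.sum_congr rfl step, ← Finset.mul_sum, aux_altD (by omega : r - m ≤ N - m)]
    by_cases hmr2 : m = r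
    · rw [if_pos (by omega : r - m = 0), if_pos hmr2, hF, hmr2, mul_one]
    · rw [if_neg (by omega : ¬ r - m = 0), if_neg hmr2, mul_zero]
  · rw [if_neg (by omega : ¬ m = r)]
    apply Finset.sum_eq_zero
    intro n hn
    rw [Finset.mem_range] at hn
    rw [if_neg (by omega : ¬ m ≤ n)]

set_option maxHeartbeats 1000000 in
lemma aux_termE (d N r : ℕ) (p : Fin d → ℝ) (hp : ∀ j, 0 < p j)
    (x y z : Fin d → ℕ) (hzx : z ≤ x) (hzy : z ≤ y)
    (hx : ∑ i, x i = N) (hy : ∑ i, y i = N) (hzr : ∑ i, z i = r) :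
    (N.choose r : ℝ) *
      (((r.factorial : ℝ) / ∏ i, ((z i).factorial : ℝ)) *
       (∏ i, ((x i).descFactorial (z i) : ℝ) * ((y i).descFactorial (z i) : ℝ) / (p i) ^ (z i)) /
       ((N.descFactorial r : ℝ)) ^ 2)
    = (mProb d N p x * mProb d N p y)⁻¹ *
        ((N.choose r : ℝ) *
          (((r.factorial : ℝ) / ∏ i, ((z i).factorial : ℝ)) * (∏ i, (p i) ^ (z i)) *
          (((N - r).factorial : ℝ) / ∏ i, ((x i - z i).factorial : ℝ)) *
          (∏ i, (p i) ^ (x i - z i)) *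
          (((N - r).factorial : ℝ) / ∏ i, ((y i - z i).factorial : ℝ)) *
          (∏ i, (p i) ^ (y i - z i)))) := by
  have hrN : r ≤ N := by
    rw [← hzr, ← hx]
    exact Finset.sum_le_sum (fun i _ => hzx i)
  have hfx : ∀ i, ((x i).factorial : ℝ) = ((x i - z i).factorial : ℝ) * ((x i).descFactorial (z i) : ℝ) := by
    intro i
    exact_mod_cast (congrArg (Nat.cast : ℕ → ℝ) (Nat.factorial_mul_descFactorial (hzx i))).symm
  have hfy : ∀ i, ((y i).factorial : ℝ) = ((y i - z i).factorial : ℝ) * ((y i).descFactorial (z i) : ℝ) := by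
    intro i
    exact_mod_cast (congrArg (Nat.cast : ℕ → ℝ) (Nat.factorial_mul_descFactorial (hzy i))).symm
  have hpx : ∀ i, (p i) ^ (x i) = (p i) ^ (z i) * (p i) ^ (x i - z i) := by
    intro i; rw [← pow_add]; congr 1; have h1 : z i ≤ x i := hzx i; omega
  have hpy : ∀ i, (p i) ^ (y i) = (p i) ^ (z i) * (p i) ^ (y i - z i) := by
    intro i; rw [← pow_add]; congr 1; have h2 : z i ≤ y i := hzy i; omega
  have hNf : ((N.factorial : ℝ)) = ((N - r).factorial : ℝ) * (N.descFactorial r : ℝ) := by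
    exact_mod_cast (congrArg (Nat.cast : ℕ → ℝ) (Nat.factorial_mul_descFactorial hrN)).symm
  have hprod : (∏ i, ((x i).descFactorial (z i) : ℝ) * ((y i).descFactorial (z i) : ℝ) / (p i) ^ (z i))
      = (∏ i, ((x i).descFactorial (z i) : ℝ)) * (∏ i, ((y i).descFactorial (z i) : ℝ)) /
        (∏ i, (p i) ^ (z i)) := by
    rw [Finset.prod_div_distrib, Finset.prod_mul_distrib]
  simp only [mProb, hprod]
  rw [Finset.prod_congr rfl (fun i _ => hfx i), Finset.prod_congr rfl (fun i _ => hfy i),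
      Finset.prod_congr rfl (fun i _ => hpx i), Finset.prod_congr rfl (fun i _ => hpy i)]
  simp only [Finset.prod_mul_distrib]
  rw [hNf]
  have hAz : (∏ i, ((z i).factorial : ℝ)) ≠ 0 :=
    Finset.prod_ne_zero_iff.2 fun i _ => Nat.cast_ne_zero.2 (Nat.factorial_ne_zero _)
  have hBx : (∏ i, ((x i - z i).factorial : ℝ)) ≠ 0 :=
    Finset.prod_ne_zero_iff.2 fun i _ => Nat.cast_ne_zero.2 (Nat.factorial_ne_zero _)
  have hBy : (∏ i, ((y i - z i).factorial : ℝ)) ≠ 0 :=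
    Finset.prod_ne_zero_iff.2 fun i _ => Nat.cast_ne_zero.2 (Nat.factorial_ne_zero _)
  have hDx : (∏ i, (((x i).descFactorial (z i)) : ℝ)) ≠ 0 :=
    Finset.prod_ne_zero_iff.2 fun i _ => Nat.cast_ne_zero.2
      (by rw [Ne, Nat.descFactorial_eq_zero_iff_lt]; exact not_lt.2 (hzx i))
  have hDy : (∏ i, (((y i).descFactorial (z i)) : ℝ)) ≠ 0 :=
    Finset.prod_ne_zero_iff.2 fun i _ => Nat.cast_ne_zero.2
      (by rw [Ne, Nat.descFactorial_eq_zero_iff_lt]; exact not_lt.2 (hzy i))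
  have hPz : (∏ i, (p i) ^ (z i)) ≠ 0 :=
    Finset.prod_ne_zero_iff.2 fun i _ => pow_ne_zero _ (hp i).ne'
  have hPxz : (∏ i, (p i) ^ (x i - z i)) ≠ 0 :=
    Finset.prod_ne_zero_iff.2 fun i _ => pow_ne_zero _ (hp i).ne'
  have hPyz : (∏ i, (p i) ^ (y i - z i)) ≠ 0 :=
    Finset.prod_ne_zero_iff.2 fun i _ => pow_ne_zero _ (hp i).ne'
  have hDr : (N.descFactorial r : ℝ) ≠ 0 := Nat.cast_ne_zero.2
      (by rw [Ne, Nat.descFactorial_eq_zero_iff_lt]; exact not_lt.2 hrN)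
  have hb : ((N - r).factorial : ℝ) ≠ 0 := Nat.cast_ne_zero.2 (Nat.factorial_ne_zero _)
  field_simp

/-- The probability generating function identity for `N − Z` under `φ_{x,y}`, identifying
`N − Z` with the number of thinned matches in two multinomial sequences of trials. -/
theorem phiXY_pgf (d : ℕ) (hd : 2 ≤ d) (p : Fin d → ℝ)
    (hp : ∀ j, 0 < p j) (hsum : ∑ j, p j = 1) (N : ℕ) (hN : 0 < N)
    (phat qhat : ℝ) (hphat : phat ∈ Set.Ioo (0 : ℝ) 1) (hqhat : qhat = 1 - phat)
    (hmin : ∀ j, qhat ≤ p j)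
    (x y : Fin d → ℕ) (hx : ∑ i, x i = N) (hy : ∑ i, y i = N) (ψ : ℝ) :
    ∑ z ∈ Finset.range (N + 1), phiXY d N p phat qhat x y z * ψ ^ (N - z)
      = (mProb d N p x * mProb d N p y)⁻¹ *
          ∑ r ∈ Finset.range (N + 1),
            (N.choose r : ℝ) * (-1 : ℝ) ^ r * (1 - ψ) ^ r * qhat ^ r *
              ∑ z ∈ (Finset.Iic (x ⊓ y)).filter (fun z => ∑ i, z i = r),
                ((r.factorial : ℝ) / ∏ i, ((z i).factorial : ℝ)) * (∏ i, (p i) ^ (z i)) *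
                (((N - r).factorial : ℝ) / ∏ i, ((x i - z i).factorial : ℝ)) *
                (∏ i, (p i) ^ (x i - z i)) *
                (((N - r).factorial : ℝ) / ∏ i, ((y i - z i).factorial : ℝ)) *
                (∏ i, (p i) ^ (y i - z i)) := by
  obtain ⟨hp0, hp1⟩ := hphat
  set u : ℝ := qhat * (ψ - 1) with hu
  -- Step 1
  have step1 : ∑ z ∈ Finset.range (N+1), phiXY d N p phat qhat x y z * ψ ^ (N - z)
      = ∑ n ∈ Finset.range (N+1), kernelQ d N p n x y * ((1+u)^(N-n) * u^n) := by
    simp only [phiXY]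
    have e1 : ∀ z ∈ Finset.range (N+1),
        ((N.choose z : ℝ) * phat ^ z * qhat ^ (N - z) *
          ∑ n ∈ Finset.range (N+1), kraw N n z phat * kernelQ d N p n x y) * ψ ^ (N - z)
        = ∑ n ∈ Finset.range (N+1),
            ((N.choose z : ℝ) * phat ^ z * (qhat*ψ) ^ (N - z) * kraw N n z phat) * kernelQ d N p n x y := by
      intro z _
      rw [Finset.mul_sum, Finset.sum_mul]
      apply Finset.sum_congr rfl
      intro n _
      rw [mul_pow]
      ring
    rw [Finset.sum_congr rfl e1, Finset.sum_comm]
    apply Finset.sum_congr rfl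
    intro n hn
    rw [Finset.mem_range] at hn
    rw [← Finset.sum_mul, aux_krawGF N n (by omega) phat (qhat*ψ) hp0.ne']
    have h1 : phat + qhat*ψ = 1 + u := by rw [hu, hqhat]; ring
    have h2 : qhat*ψ - (1 - phat) = u := by rw [hu, hqhat]; ring
    rw [h1, h2]
    ring
  -- Step 2
  have step2 : ∑ n ∈ Finset.range (N+1), kernelQ d N p n x y * ((1+u)^(N-n) * u^n)
      = ∑ r ∈ Finset.range (N+1),
          u^r * ∑ n ∈ Finset.range (r+1), ((N-n).choose (r-n) : ℝ) * kernelQ d N p n x y := by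
    have e1 : ∀ n ∈ Finset.range (N+1),
        kernelQ d N p n x y * ((1+u)^(N-n) * u^n)
        = ∑ rr ∈ Finset.Ico n (N+1),
            u^rr * (((N-n).choose (rr-n) : ℝ) * kernelQ d N p n x y) := by
      intro n hn
      rw [Finset.mem_range] at hn
      rw [Finset.sum_Ico_eq_sum_range, show N + 1 - n = (N-n)+1 by omega,
          show (1+u) = (u+1) by ring, add_pow]
      rw [Finset.sum_mul, Finset.mul_sum]
      apply Finset.sum_congr rfl
      intro k hk
      rw [show n + k - n = k by omega]
      rw [pow_add u n k]
      ring
    rw [Finset.sum_congr rfl e1]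
    have hcomm := Finset.sum_Ico_Ico_comm 0 (N+1)
      (fun n rr => u^rr * (((N-n).choose (rr-n) : ℝ) * kernelQ d N p n x y))
    simp only [← Finset.range_eq_Ico] at hcomm
    rw [hcomm]
    apply Finset.sum_congr rfl
    intro r hr
    rw [Finset.mul_sum]
  rw [step1, step2, Finset.mul_sum]
  apply Finset.sum_congr rfl
  intro r hr
  rw [Finset.mem_range] at hr
  rw [aux_kernel_collapse d N p x y r (by omega)]
  rw [Finset.mul_sum]
  have hur : u^r = (-1:ℝ)^r * (1-ψ)^r * qhat^r := by
    rw [hu, show qhat * (ψ - 1) = (-1) * (1-ψ) * qhat by ring, mul_pow, mul_pow]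
  have e2 : ∀ z ∈ (Finset.Iic (x ⊓ y)).filter (fun z => ∑ i, z i = r),
      u^r * ((N.choose r : ℝ) *
        (((r.factorial : ℝ) / ∏ i, ((z i).factorial : ℝ)) *
         (∏ i, ((x i).descFactorial (z i) : ℝ) * ((y i).descFactorial (z i) : ℝ) / (p i) ^ (z i)) /
         ((N.descFactorial r : ℝ)) ^ 2))
      = (mProb d N p x * mProb d N p y)⁻¹ *
          ((N.choose r : ℝ) * (-1 : ℝ) ^ r * (1 - ψ) ^ r * qhat ^ r *
            (((r.factorial : ℝ) / ∏ i, ((z i).factorial : ℝ)) * (∏ i, (p i) ^ (z i)) *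
            (((N - r).factorial : ℝ) / ∏ i, ((x i - z i).factorial : ℝ)) *
            (∏ i, (p i) ^ (x i - z i)) *
            (((N - r).factorial : ℝ) / ∏ i, ((y i - z i).factorial : ℝ)) *
            (∏ i, (p i) ^ (y i - z i)))) := by
    intro z hz
    rw [Finset.mem_filter, Finset.mem_Iic] at hz
    obtain ⟨hzle, hzr⟩ := hz
    have hzx : z ≤ x := le_trans hzle inf_le_left
    have hzy : z ≤ y := le_trans hzle inf_le_right
    rw [aux_termE d N r p hp x y z hzx hzy hx hy hzr, hur]
    ring
  rw [Finset.sum_congr rfl e2, ← Finset.mul_sum, ← Finset.mul_sum]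
end
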